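/- arXiv:2202.07149 — 8 statements merged into one kernel-verified Lean document; each statement's English description precedes it below -/
import Mathlib

section
/- Let (ℓ_n) be a sequence of positive integers with ℓ_n → ∞ and ℓ_n^3/n → 0. Then there exists n_0 such that for every n ≥ n_0 the following holds: if G is a C_3^{(3)}-saturated 3-uniform hypergraph on n vertices with |E(G)| ≤ 2n, H = {v ∈ V(G) : d(v) ≥ n/ℓ_n^2}, Q is the set of vertices having at least two neighbors in H, and S = V(G) \ (Q ∪ H), then there are no partitions S = S_1 ∪ S_2 ∪ S_3 and H = H_1 ∪ H_2 ∪ H_3 into pairwise disjoint parts such that |S_i| ≥ 4n/ℓ_n for each i ∈ {1,2,3} and S_i ∩ N(H \ H_i) = ∅ for each i ∈ {1,2,3} (i.e., no vertex of S_i shares an edge with a vertex of H \ H_i). -/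
open Finset

variable {V : Type*}

/-- `E` is the edge set of a 3-uniform hypergraph: every edge has 3 vertices. -/
def IsUniform3 [DecidableEq V] (E : Finset (Finset V)) : Prop :=
  ∀ e ∈ E, e.card = 3

/-- `E` contains a copy of the loose cycle `C₃⁽³⁾`: three edges whose pairwise
intersections are three distinct single vertices, with empty triple intersection. -/
def HasC3 [DecidableEq V] (E : Finset (Finset V)) : Prop :=
  ∃ e₁ ∈ E, ∃ e₂ ∈ E, ∃ e₃ ∈ E, ∃ a b c : V,
    e₁ ∩ e₂ = {a} ∧ e₂ ∩ e₃ = {b} ∧ e₁ ∩ e₃ = {c} ∧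
    a ≠ b ∧ b ≠ c ∧ a ≠ c ∧ e₁ ∩ e₂ ∩ e₃ = ∅

/-- `E` is a `C₃⁽³⁾`-saturated 3-uniform hypergraph: it is 3-uniform, `C₃⁽³⁾`-free,
and adding any non-edge triple creates a copy of `C₃⁽³⁾`. -/
def IsSat3 [DecidableEq V] (E : Finset (Finset V)) : Prop :=
  IsUniform3 E ∧ ¬ HasC3 E ∧
    ∀ e : Finset V, e.card = 3 → e ∉ E → HasC3 (insert e E)

/-- The degree of a vertex: the number of edges containing it. -/
def deg [DecidableEq V] (E : Finset (Finset V)) (v : V) : ℕ :=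
  (E.filter fun e => v ∈ e).card

/-- The codegree of a pair of vertices: number of edges containing both. -/
def codeg [DecidableEq V] (E : Finset (Finset V)) (u v : V) : ℕ :=
  (E.filter fun e => u ∈ e ∧ v ∈ e).card

/-- `u` and `v` are distinct and share an edge (`v ∈ N(u)`). -/
def Adj [DecidableEq V] (E : Finset (Finset V)) (u v : V) : Prop :=
  u ≠ v ∧ ∃ e ∈ E, u ∈ e ∧ v ∈ e

/-- `e₁, e₂` form a `u,v`-link: a loose path of two edges from `u` to `v`. -/
def IsLink [DecidableEq V] (E : Finset (Finset V)) (u v : V) (e₁ e₂ : Finset V) : Prop :=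
  e₁ ∈ E ∧ e₂ ∈ E ∧ u ∈ e₁ ∧ v ∈ e₂ ∧ u ∉ e₂ ∧ v ∉ e₁ ∧
    ∃ w, w ∉ ({u, v} : Finset V) ∧ e₁ ∩ e₂ = {w}

/-- `uv` is a good pair: there exists a `u,v`-link. -/
def GoodPair [DecidableEq V] (E : Finset (Finset V)) (u v : V) : Prop :=
  ∃ e₁ e₂, IsLink E u v e₁ e₂

lemma goodPair_symm [DecidableEq V] {E : Finset (Finset V)} {u v : V}
    (h : GoodPair E u v) : GoodPair E v u := by
  obtain ⟨e₁, e₂, h₁, h₂, hu, hv, hu2, hv1, w, hw, hweq⟩ := h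
  refine ⟨e₂, e₁, h₂, h₁, hv, hu, hv1, hu2, w, ?_, by rwa [Finset.inter_comm]⟩
  simpa [Finset.pair_comm v u] using hw

lemma sat_good [DecidableEq V] {E : Finset (Finset V)} (hsat : IsSat3 E)
    {x y z : V} (hxy : x ≠ y) (hxz : x ≠ z) (hyz : y ≠ z)
    (hE : ({x, y, z} : Finset V) ∉ E) :
    GoodPair E x y ∨ GoodPair E x z ∨ GoodPair E y z := by
  have htc : ({x, y, z} : Finset V).card = 3 := by
    rw [Finset.card_insert_of_notMem (by simp [hxy, hxz]),
        Finset.card_insert_of_notMem (by simp [hyz]), Finset.card_singleton]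
  obtain ⟨e₁, h₁, e₂, h₂, e₃, h₃, a, b, c, h12, h23, h13, hab, hbc, hac, htri⟩ :=
    hsat.2.2 _ htc hE
  set t : Finset V := {x, y, z} with ht
  have key : ∃ u v, u ∈ t ∧ v ∈ t ∧ u ≠ v ∧ GoodPair E u v := by
    have ha12 : a ∈ e₁ ∩ e₂ := by rw [h12]; exact Finset.mem_singleton_self a
    have hb23 : b ∈ e₂ ∩ e₃ := by rw [h23]; exact Finset.mem_singleton_self b
    have hc13 : c ∈ e₁ ∩ e₃ := by rw [h13]; exact Finset.mem_singleton_self c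
    have ha1 : a ∈ e₁ := (Finset.mem_inter.mp ha12).1
    have ha2 : a ∈ e₂ := (Finset.mem_inter.mp ha12).2
    have hb2 : b ∈ e₂ := (Finset.mem_inter.mp hb23).1
    have hb3 : b ∈ e₃ := (Finset.mem_inter.mp hb23).2
    have hc1 : c ∈ e₁ := (Finset.mem_inter.mp hc13).1
    have hc3 : c ∈ e₃ := (Finset.mem_inter.mp hc13).2
    have ha3 : a ∉ e₃ := by
      intro h
      have : a ∈ e₁ ∩ e₃ := Finset.mem_inter.mpr ⟨ha1, h⟩
      rw [h13] at this
      exact hac (Finset.mem_singleton.mp this)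
    have hcne2 : c ∉ e₂ := by
      intro h
      have : c ∈ e₁ ∩ e₂ := Finset.mem_inter.mpr ⟨hc1, h⟩
      rw [h12] at this
      exact hac (Finset.mem_singleton.mp this).symm
    have hbne1 : b ∉ e₁ := by
      intro h
      have : b ∈ e₁ ∩ e₃ := Finset.mem_inter.mpr ⟨h, hb3⟩
      rw [h13] at this
      exact hbc (Finset.mem_singleton.mp this)
    rcases Finset.mem_insert.mp h₁ with he₁ | h₁E
    · rcases Finset.mem_insert.mp h₂ with he₂ | h₂E
      · exfalso
        rw [he₁, he₂, Finset.inter_self] at h12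
        rw [h12] at htc
        simp at htc
      · rcases Finset.mem_insert.mp h₃ with he₃ | h₃E
        · exfalso
          rw [he₁, he₃] at h13
          rw [Finset.inter_self] at h13
          rw [h13] at htc
          simp at htc
        · -- e₁ = t, link (e₂, e₃) between a and c
          refine ⟨a, c, he₁ ▸ ha1, he₁ ▸ hc1, hac, e₂, e₃, h₂E, h₃E, ha2, hc3, ha3, hcne2,
            b, ?_, h23⟩
          simp only [Finset.mem_insert, Finset.mem_singleton]
          push_neg
          exact ⟨fun h => hab h.symm, hbc⟩
    · rcases Finset.mem_insert.mp h₂ with he₂ | h₂E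
      · rcases Finset.mem_insert.mp h₃ with he₃ | h₃E
        · exfalso
          rw [he₂, he₃, Finset.inter_self] at h23
          rw [h23] at htc
          simp at htc
        · -- e₂ = t, link (e₁, e₃) between a and b
          refine ⟨a, b, he₂ ▸ ha2, he₂ ▸ hb2, hab, e₁, e₃, h₁E, h₃E, ha1, hb3, ha3, hbne1,
            c, ?_, h13⟩
          simp only [Finset.mem_insert, Finset.mem_singleton]
          push_neg
          exact ⟨fun h => hac h.symm, fun h => hbc h.symm⟩
      · rcases Finset.mem_insert.mp h₃ with he₃ | h₃E
        · -- e₃ = t, link (e₂, e₁) between b and c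
          refine ⟨b, c, he₃ ▸ hb3, he₃ ▸ hc3, hbc, e₂, e₁, h₂E, h₁E, hb2, hc1, hbne1, hcne2,
            a, ?_, by rwa [Finset.inter_comm]⟩
          simp only [Finset.mem_insert, Finset.mem_singleton]
          push_neg
          exact ⟨hab, hac⟩
        · exact absurd ⟨e₁, h₁E, e₂, h₂E, e₃, h₃E, a, b, c, h12, h23, h13, hab, hbc, hac, htri⟩
            hsat.2.1
  obtain ⟨u, v, hu, hv, huv, hg⟩ := key
  rw [ht] at hu hv
  simp only [Finset.mem_insert, Finset.mem_singleton] at hu hv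
  rcases hu with rfl | rfl | rfl <;> rcases hv with rfl | rfl | rfl
  · exact absurd rfl huv
  · exact Or.inl hg
  · exact Or.inr (Or.inl hg)
  · exact Or.inl (goodPair_symm hg)
  · exact absurd rfl huv
  · exact Or.inr (Or.inr hg)
  · exact Or.inr (Or.inl (goodPair_symm hg))
  · exact Or.inr (Or.inr (goodPair_symm hg))
  · exact absurd rfl huv


private lemma arith_perw (x1 x2 x3 dd a b c M : ℝ) (hx1 : 0 ≤ x1) (hx2 : 0 ≤ x2)
    (hx3 : 0 ≤ x3) (hMa : a ≤ M) (hMb : b ≤ M) (hMc : c ≤ M) (hM0 : 0 ≤ M)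
    (h3 : x1 + x2 + x3 ≤ 2 * dd) :
    x1 * x2 * c + x1 * x3 * b + x2 * x3 * a ≤ 4/3 * M * dd ^ 2 := by
  have hA : x1 * x2 * c + x1 * x3 * b + x2 * x3 * a
      ≤ (x1 * x2 + x1 * x3 + x2 * x3) * M := by
    have t1 : x1 * x2 * c ≤ x1 * x2 * M :=
      mul_le_mul_of_nonneg_left hMc (mul_nonneg hx1 hx2)
    have t2 : x1 * x3 * b ≤ x1 * x3 * M :=
      mul_le_mul_of_nonneg_left hMb (mul_nonneg hx1 hx3)
    have t3 : x2 * x3 * a ≤ x2 * x3 * M :=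
      mul_le_mul_of_nonneg_left hMa (mul_nonneg hx2 hx3)
    linarith
  have hB : 3 * (x1 * x2 + x1 * x3 + x2 * x3) ≤ (x1 + x2 + x3) ^ 2 := by
    nlinarith [sq_nonneg (x1 - x2), sq_nonneg (x1 - x3), sq_nonneg (x2 - x3)]
  have hC : (x1 + x2 + x3) ^ 2 ≤ (2 * dd) ^ 2 :=
    pow_le_pow_left₀ (by positivity) h3 2
  have hD : (x1 * x2 + x1 * x3 + x2 * x3) * M ≤ (4/3 * dd ^ 2) * M := by
    refine mul_le_mul_of_nonneg_right ?_ hM0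
    nlinarith [hB, hC]
  linarith [hA, hD]

private lemma arith_sq (d L N : ℝ) (h1 : d * L ^ 2 < N) (h2 : 0 ≤ d) :
    L ^ 2 * d ^ 2 ≤ N * d := by
  have := mul_le_mul_of_nonneg_right (le_of_lt h1) h2
  nlinarith [this]

private lemma arith_lb (a b c m : ℝ) (hm0 : 0 < m) (hma : m ≤ a) (hmb : m ≤ b)
    (hmc : m ≤ c) : m * m * (max a (max b c)) ≤ a * (b * c) := by
  have ha0 : (0:ℝ) ≤ a := le_trans hm0.le hma
  have hb0 : (0:ℝ) ≤ b := le_trans hm0.le hmb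
  rcases max_choice a (max b c) with h | h
  · rw [h]
    nlinarith [mul_le_mul hmb hmc hm0.le hb0]
  · rw [h]
    rcases max_choice b c with h' | h'
    · rw [h']
      nlinarith [mul_le_mul hma hmc hm0.le ha0]
    · rw [h']
      nlinarith [mul_le_mul hma hmb hm0.le ha0]

private lemma arith_final (m M N L P : ℝ) (hm0 : 0 < m) (hL1 : 1 ≤ L) (hN1 : 1 ≤ N)
    (h32N : 32 * L ^ 3 < N) (hmL : m * L = 4 * N) (hmM : m ≤ M) (hM0 : 0 ≤ M)
    (hP0 : 0 ≤ P) (hP : L ^ 2 * P ≤ 6 * N * N)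
    (hmain : m * m * M ≤ 2 * N + 4/3 * M * P) : False := by
  have hL0 : (0:ℝ) < L := lt_of_lt_of_le one_pos hL1
  have hN0 : (0:ℝ) < N := lt_of_lt_of_le one_pos hN1
  have hL2 : (0:ℝ) < L ^ 2 := by positivity
  have step1 : m * m * M * L ^ 2 ≤ (2 * N + 4/3 * M * P) * L ^ 2 :=
    mul_le_mul_of_nonneg_right hmain hL2.le
  have hms2 : m * m * M * L ^ 2 = 16 * N ^ 2 * M := by
    have h : m * m * M * L ^ 2 = (m * L) * (m * L) * M := by ring
    rw [h, hmL]; ring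
  have step2 : 4/3 * M * P * L ^ 2 ≤ 8 * N ^ 2 * M := by
    have h := mul_le_mul_of_nonneg_left hP (show (0:ℝ) ≤ 4/3 * M by positivity)
    nlinarith [h]
  have step3 : 16 * N ^ 2 * M ≤ 2 * N * L ^ 2 + 8 * N ^ 2 * M := by
    rw [← hms2]
    nlinarith [step1, step2]
  have step4 : 8 * N ^ 2 * m ≤ 2 * N * L ^ 2 := by
    have h1 : 8 * N ^ 2 * m ≤ 8 * N ^ 2 * M := mul_le_mul_of_nonneg_left hmM (by positivity)
    linarith
  have step5 : 32 * N ^ 3 ≤ 2 * N * L ^ 3 := by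
    have h := mul_le_mul_of_nonneg_right step4 hL0.le
    calc 32 * N ^ 3 = 8 * N ^ 2 * (m * L) := by rw [hmL]; ring
      _ = 8 * N ^ 2 * m * L := by ring
      _ ≤ 2 * N * L ^ 2 * L := h
      _ = 2 * N * L ^ 3 := by ring
  have e1 : 2 * N * (32 * L ^ 3) < 2 * N * N := mul_lt_mul_of_pos_left h32N (by positivity)
  have e2 : N ^ 2 * 1 ≤ N ^ 2 * N := mul_le_mul_of_nonneg_left hN1 (sq_nonneg N)
  nlinarith [e1, e2, step5]

set_option maxHeartbeats 2000000 in
theorem no_triple_partition (ℓ : ℕ → ℕ) (hpos : ∀ n, 0 < ℓ n)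
    (htop : Filter.Tendsto ℓ Filter.atTop Filter.atTop)
    (hsmall : Filter.Tendsto (fun n => ((ℓ n : ℝ)) ^ 3 / n) Filter.atTop (nhds 0)) :
    ∃ n₀ : ℕ, ∀ n : ℕ, n₀ ≤ n → ∀ E : Finset (Finset (Fin n)),
      IsSat3 E → E.card ≤ 2 * n →
      ∀ H Q S : Set (Fin n),
        H = {v : Fin n | (n : ℝ) / (ℓ n : ℝ) ^ 2 ≤ (deg E v : ℝ)} →
        Q = {v : Fin n | ∃ u₁ ∈ H, ∃ u₂ ∈ H, u₁ ≠ u₂ ∧ Adj E v u₁ ∧ Adj E v u₂} →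
        S = Set.univ \ (Q ∪ H) →
        ¬ ∃ S₁ S₂ S₃ H₁ H₂ H₃ : Set (Fin n),
            S₁ ∪ S₂ ∪ S₃ = S ∧ H₁ ∪ H₂ ∪ H₃ = H ∧
            Disjoint S₁ S₂ ∧ Disjoint S₁ S₃ ∧ Disjoint S₂ S₃ ∧
            Disjoint H₁ H₂ ∧ Disjoint H₁ H₃ ∧ Disjoint H₂ H₃ ∧
            (4 * (n : ℝ) / (ℓ n : ℝ) ≤ S₁.ncard) ∧
            (4 * (n : ℝ) / (ℓ n : ℝ) ≤ S₂.ncard) ∧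
            (4 * (n : ℝ) / (ℓ n : ℝ) ≤ S₃.ncard) ∧
            (∀ v ∈ S₁, ∀ h ∈ H \ H₁, ¬ ∃ e ∈ E, v ∈ e ∧ h ∈ e) ∧
            (∀ v ∈ S₂, ∀ h ∈ H \ H₂, ¬ ∃ e ∈ E, v ∈ e ∧ h ∈ e) ∧
            (∀ v ∈ S₃, ∀ h ∈ H \ H₃, ¬ ∃ e ∈ E, v ∈ e ∧ h ∈ e) := by
  classical
  have h32 : ∀ᶠ n in Filter.atTop, ((ℓ n : ℝ)) ^ 3 / n < 1/32 :=
    hsmall.eventually (eventually_lt_nhds (by norm_num))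
  obtain ⟨n₁, hn₁⟩ := Filter.eventually_atTop.mp h32
  refine ⟨max n₁ 1, fun n hn E hsat hE2 H Q S hH hQ hS => ?_⟩
  rintro ⟨S₁, S₂, S₃, H₁, H₂, H₃, hSu, hHu, d12, d13, d23, dH12, dH13, dH23,
    c1, c2, c3, f1, f2, f3⟩
  have hn1 : 1 ≤ n := le_trans (le_max_right _ _) hn
  have hsm : ((ℓ n : ℝ)) ^ 3 / n < 1/32 := hn₁ n (le_trans (le_max_left _ _) hn)
  set L : ℝ := (ℓ n : ℝ) with hLdef
  set N : ℝ := (n : ℝ) with hNdef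
  have hL1 : (1:ℝ) ≤ L := by
    rw [hLdef]; exact_mod_cast hpos n
  have hN1 : (1:ℝ) ≤ N := by
    rw [hNdef]; exact_mod_cast hn1
  have hL0 : (0:ℝ) < L := lt_of_lt_of_le one_pos hL1
  have hN0 : (0:ℝ) < N := lt_of_lt_of_le one_pos hN1
  have h32N : 32 * L ^ 3 < N := by
    rw [div_lt_iff₀ hN0] at hsm
    linarith only [hsm]
  -- Finset versions of the Sᵢ
  set A₁ := (Set.toFinite S₁).toFinset with hA₁
  set A₂ := (Set.toFinite S₂).toFinset with hA₂
  set A₃ := (Set.toFinite S₃).toFinset with hA₃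
  have mem1 : ∀ x, x ∈ A₁ ↔ x ∈ S₁ := fun x => Set.Finite.mem_toFinset _
  have mem2 : ∀ x, x ∈ A₂ ↔ x ∈ S₂ := fun x => Set.Finite.mem_toFinset _
  have mem3 : ∀ x, x ∈ A₃ ↔ x ∈ S₃ := fun x => Set.Finite.mem_toFinset _
  set m : ℝ := 4 * N / L with hmdef
  have hm0 : (0:ℝ) < m := by positivity
  have hca : m ≤ (A₁.card : ℝ) := by
    rw [hA₁, hmdef]
    rwa [Set.ncard_eq_toFinset_card S₁ (Set.toFinite S₁)] at c1
  have hcb : m ≤ (A₂.card : ℝ) := by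
    rw [hA₂, hmdef]
    rwa [Set.ncard_eq_toFinset_card S₂ (Set.toFinite S₂)] at c2
  have hcc : m ≤ (A₃.card : ℝ) := by
    rw [hA₃, hmdef]
    rwa [Set.ncard_eq_toFinset_card S₃ (Set.toFinite S₃)] at c3
  have hU : IsUniform3 E := hsat.1
  -- degree sum
  have degsum : ∑ w : Fin n, deg E w = 3 * E.card := by
    unfold deg
    simp only [Finset.card_filter]
    rw [Finset.sum_comm]
    have : ∀ e ∈ E, (∑ w : Fin n, if w ∈ e then 1 else 0) = 3 := by
      intro e he
      have hfe : (Finset.univ.filter fun w => w ∈ e) = e := by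
        ext w; simp
      rw [← Finset.card_filter, hfe, hU e he]
    rw [Finset.sum_congr rfl this, Finset.sum_const, smul_eq_mul, mul_comm]
  -- neighborhoods
  set Nb : Fin n → Finset (Fin n) :=
    fun w => Finset.univ.filter (fun u => u ≠ w ∧ ∃ e ∈ E, u ∈ e ∧ w ∈ e) with hNb
  have hNbcard : ∀ w, (Nb w).card ≤ 2 * deg E w := by
    intro w
    have hsub : Nb w ⊆ (E.filter (fun e => w ∈ e)).biUnion (fun e => e.erase w) := by
      intro u hu
      rw [hNb, Finset.mem_filter] at hu
      obtain ⟨-, hune, e, heE, hue, hwe⟩ := hu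
      exact Finset.mem_biUnion.mpr ⟨e, Finset.mem_filter.mpr ⟨heE, hwe⟩,
        Finset.mem_erase.mpr ⟨hune, hue⟩⟩
    refine (Finset.card_le_card hsub).trans (Finset.card_biUnion_le.trans ?_)
    calc ∑ e ∈ E.filter (fun e => w ∈ e), (e.erase w).card
        ≤ ∑ e ∈ E.filter (fun e => w ∈ e), 2 := by
          refine Finset.sum_le_sum fun e he => ?_
          rw [Finset.card_erase_of_mem (Finset.mem_filter.mp he).2,
            hU e (Finset.mem_filter.mp he).1]
      _ = 2 * deg E w := by rw [Finset.sum_const, smul_eq_mul, mul_comm]; rfl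
  -- the set of low-degree vertices
  set W : Finset (Fin n) := Finset.univ.filter (fun w => w ∉ H) with hW
  -- midpoints of cross links avoid H
  have hnotH : ∀ (Si Sj : Set (Fin n)) (Hi Hj : Set (Fin n)),
      (∀ v ∈ Si, ∀ h ∈ H \ Hi, ¬ ∃ e ∈ E, v ∈ e ∧ h ∈ e) →
      (∀ v ∈ Sj, ∀ h ∈ H \ Hj, ¬ ∃ e ∈ E, v ∈ e ∧ h ∈ e) →
      Disjoint Hi Hj →
      ∀ u ∈ Si, ∀ v ∈ Sj, ∀ w : Fin n, (∃ e ∈ E, u ∈ e ∧ w ∈ e) →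
        (∃ e ∈ E, v ∈ e ∧ w ∈ e) → w ∉ H := by
    intro Si Sj Hi Hj hi hj hdij u hu v hv w hew1 hew2 hwH
    have h1 : w ∈ Hi := by
      by_contra h
      exact hi u hu w ⟨hwH, h⟩ hew1
    have h2 : w ∈ Hj := by
      by_contra h
      exact hj v hv w ⟨hwH, h⟩ hew2
    exact Set.disjoint_left.mp hdij h1 h2
  -- extraction of midpoints from good pairs
  have hmid : ∀ u v : Fin n, GoodPair E u v → ∃ w : Fin n,
      u ≠ w ∧ v ≠ w ∧ (∃ e ∈ E, u ∈ e ∧ w ∈ e) ∧ (∃ e ∈ E, v ∈ e ∧ w ∈ e) := by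
    intro u v hg
    obtain ⟨f₁, f₂, hf₁, hf₂, hu1, hv2, hu2, hv1, w, hw, hweq⟩ := hg
    have hwin : w ∈ f₁ ∩ f₂ := by rw [hweq]; exact Finset.mem_singleton_self w
    simp only [Finset.mem_insert, Finset.mem_singleton] at hw
    push_neg at hw
    exact ⟨w, fun h => hw.1 h.symm, fun h => hw.2 h.symm,
      ⟨f₁, hf₁, hu1, (Finset.mem_inter.mp hwin).1⟩,
      ⟨f₂, hf₂, hv2, (Finset.mem_inter.mp hwin).2⟩⟩
  -- good-pair finsets between parts
  set G₁₂ := (A₁ ×ˢ A₂).filter (fun q => GoodPair E q.1 q.2) with hG12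
  set G₁₃ := (A₁ ×ˢ A₃).filter (fun q => GoodPair E q.1 q.2) with hG13
  set G₂₃ := (A₂ ×ˢ A₃).filter (fun q => GoodPair E q.1 q.2) with hG23
  have hGbound : ∀ (G : Finset (Fin n × Fin n)) (Ai Aj : Finset (Fin n))
      (Si Sj : Set (Fin n)) (Hi Hj : Set (Fin n)),
      (∀ x, x ∈ Ai ↔ x ∈ Si) → (∀ x, x ∈ Aj ↔ x ∈ Sj) →
      (∀ v ∈ Si, ∀ h ∈ H \ Hi, ¬ ∃ e ∈ E, v ∈ e ∧ h ∈ e) →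
      (∀ v ∈ Sj, ∀ h ∈ H \ Hj, ¬ ∃ e ∈ E, v ∈ e ∧ h ∈ e) →
      Disjoint Hi Hj →
      G = (Ai ×ˢ Aj).filter (fun q => GoodPair E q.1 q.2) →
      G.card ≤ ∑ w ∈ W, (Nb w ∩ Ai).card * (Nb w ∩ Aj).card := by
    intro G Ai Aj Si Sj Hi Hj memi memj hi hj hdij hGdef
    have hsub : G ⊆ W.biUnion (fun w => (Nb w ∩ Ai) ×ˢ (Nb w ∩ Aj)) := by
      rintro ⟨u, v⟩ hq
      rw [hGdef, Finset.mem_filter, Finset.mem_product] at hq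
      obtain ⟨⟨hui, hvj⟩, hgood⟩ := hq
      obtain ⟨w, huw, hvw, he1, he2⟩ := hmid u v hgood
      have hwH : w ∉ H := hnotH Si Sj Hi Hj hi hj hdij u ((memi u).mp hui) v
        ((memj v).mp hvj) w he1 he2
      refine Finset.mem_biUnion.mpr ⟨w, ?_, ?_⟩
      · rw [hW]; simp [hwH]
      · rw [Finset.mem_product]
        constructor
        · rw [Finset.mem_inter]
          exact ⟨by rw [hNb]; simp only [Finset.mem_filter]; exact ⟨Finset.mem_univ u, huw, he1⟩, hui⟩
        · rw [Finset.mem_inter]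
          exact ⟨by rw [hNb]; simp only [Finset.mem_filter]; exact ⟨Finset.mem_univ v, hvw, he2⟩, hvj⟩
    refine (Finset.card_le_card hsub).trans (Finset.card_biUnion_le.trans ?_)
    exact le_of_eq (Finset.sum_congr rfl fun w _ => Finset.card_product _ _)
  have hg12 := hGbound G₁₂ A₁ A₂ S₁ S₂ H₁ H₂ mem1 mem2 f1 f2 dH12 hG12
  have hg13 := hGbound G₁₃ A₁ A₃ S₁ S₃ H₁ H₃ mem1 mem3 f1 f3 dH13 hG13
  have hg23 := hGbound G₂₃ A₂ A₃ S₂ S₃ H₂ H₃ mem2 mem3 f2 f3 dH23 hG23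
  -- transversal triples
  set T := A₁ ×ˢ (A₂ ×ˢ A₃) with hT
  set TE := T.filter (fun p : Fin n × Fin n × Fin n =>
    ({p.1, p.2.1, p.2.2} : Finset (Fin n)) ∈ E) with hTE
  set T12 := T.filter (fun p : Fin n × Fin n × Fin n => GoodPair E p.1 p.2.1) with hT12
  set T13 := T.filter (fun p : Fin n × Fin n × Fin n => GoodPair E p.1 p.2.2) with hT13
  set T23 := T.filter (fun p : Fin n × Fin n × Fin n => GoodPair E p.2.1 p.2.2) with hT23
  have hneq : ∀ x ∈ A₁, ∀ y ∈ A₂, x ≠ y := by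
    intro x hx y hy h
    exact Set.disjoint_left.mp d12 ((mem1 x).mp hx) (h ▸ (mem2 y).mp hy)
  have hneq13 : ∀ x ∈ A₁, ∀ z ∈ A₃, x ≠ z := by
    intro x hx z hz h
    exact Set.disjoint_left.mp d13 ((mem1 x).mp hx) (h ▸ (mem3 z).mp hz)
  have hneq23 : ∀ y ∈ A₂, ∀ z ∈ A₃, y ≠ z := by
    intro y hy z hz h
    exact Set.disjoint_left.mp d23 ((mem2 y).mp hy) (h ▸ (mem3 z).mp hz)
  have hTsub : T ⊆ TE ∪ T12 ∪ T13 ∪ T23 := by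
    rintro ⟨x, y, z⟩ hp
    have hp' := hp
    rw [hT, Finset.mem_product] at hp'
    obtain ⟨hx, hyz⟩ := hp'
    rw [Finset.mem_product] at hyz
    obtain ⟨hy, hz⟩ := hyz
    by_cases hE : ({x, y, z} : Finset (Fin n)) ∈ E
    · exact Finset.mem_union_left _ (Finset.mem_union_left _ (Finset.mem_union_left _
        (Finset.mem_filter.mpr ⟨hp, hE⟩)))
    · rcases sat_good hsat (hneq x hx y hy) (hneq13 x hx z hz) (hneq23 y hy z hz) hE with
        h | h | h
      · exact Finset.mem_union_left _ (Finset.mem_union_left _ (Finset.mem_union_right _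
          (Finset.mem_filter.mpr ⟨hp, h⟩)))
      · exact Finset.mem_union_left _ (Finset.mem_union_right _
          (Finset.mem_filter.mpr ⟨hp, h⟩))
      · exact Finset.mem_union_right _ (Finset.mem_filter.mpr ⟨hp, h⟩)
  have hTEcard : TE.card ≤ E.card := by
    refine Finset.card_le_card_of_injOn
      (fun p => ({p.1, p.2.1, p.2.2} : Finset (Fin n))) (fun p hp => (Finset.mem_filter.mp hp).2) ?_
    rintro ⟨x, y, z⟩ hp ⟨x', y', z'⟩ hp' heq0
    have heq : ({x, y, z} : Finset (Fin n)) = {x', y', z'} := heq0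
    rw [Finset.mem_coe, hTE, Finset.mem_filter] at hp hp'
    have hpm := hp.1; have hpm' := hp'.1
    rw [hT, Finset.mem_product] at hpm hpm'
    obtain ⟨hx, hyz⟩ := hpm; rw [Finset.mem_product] at hyz; obtain ⟨hy, hz⟩ := hyz
    obtain ⟨hx', hyz'⟩ := hpm'; rw [Finset.mem_product] at hyz'; obtain ⟨hy', hz'⟩ := hyz'
    have hxx : x = x' := by
      have : x' ∈ ({x, y, z} : Finset (Fin n)) := by
        rw [heq]; simp
      simp only [Finset.mem_insert, Finset.mem_singleton] at this
      rcases this with h | h | h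
      · exact h.symm
      · exact absurd h (hneq x' hx' y hy)
      · exact absurd h (hneq13 x' hx' z hz)
    have hyy : y = y' := by
      have : y' ∈ ({x, y, z} : Finset (Fin n)) := by
        rw [heq]; simp
      simp only [Finset.mem_insert, Finset.mem_singleton] at this
      rcases this with h | h | h
      · exact absurd h.symm (hneq x hx y' hy')
      · exact h.symm
      · exact absurd h (hneq23 y' hy' z hz)
    have hzz : z = z' := by
      have : z' ∈ ({x, y, z} : Finset (Fin n)) := by
        rw [heq]; simp
      simp only [Finset.mem_insert, Finset.mem_singleton] at this
      rcases this with h | h | h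
      · exact absurd h.symm (hneq13 x hx z' hz')
      · exact absurd h.symm (hneq23 y hy z' hz')
      · exact h.symm
    rw [hxx, hyy, hzz]
  have hT12card : T12.card ≤ G₁₂.card * A₃.card := by
    rw [← Finset.card_product]
    refine Finset.card_le_card_of_injOn (fun p => ((p.1, p.2.1), p.2.2)) ?_ ?_
    · rintro ⟨x, y, z⟩ hp
      rw [hT12, Finset.mem_coe, Finset.mem_filter] at hp
      obtain ⟨hpm, hgood⟩ := hp
      rw [hT, Finset.mem_product] at hpm
      obtain ⟨hx, hyz⟩ := hpm; rw [Finset.mem_product] at hyz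
      rw [Finset.mem_coe, Finset.mem_product]
      exact ⟨Finset.mem_filter.mpr ⟨Finset.mem_product.mpr ⟨hx, hyz.1⟩, hgood⟩, hyz.2⟩
    · rintro ⟨x, y, z⟩ - ⟨x', y', z'⟩ - h
      simp only [Prod.mk.injEq] at h
      simp [h.1.1, h.1.2, h.2]
  have hT13card : T13.card ≤ G₁₃.card * A₂.card := by
    rw [← Finset.card_product]
    refine Finset.card_le_card_of_injOn (fun p => ((p.1, p.2.2), p.2.1)) ?_ ?_
    · rintro ⟨x, y, z⟩ hp
      rw [hT13, Finset.mem_coe, Finset.mem_filter] at hp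
      obtain ⟨hpm, hgood⟩ := hp
      rw [hT, Finset.mem_product] at hpm
      obtain ⟨hx, hyz⟩ := hpm; rw [Finset.mem_product] at hyz
      rw [Finset.mem_coe, Finset.mem_product]
      exact ⟨Finset.mem_filter.mpr ⟨Finset.mem_product.mpr ⟨hx, hyz.2⟩, hgood⟩, hyz.1⟩
    · rintro ⟨x, y, z⟩ - ⟨x', y', z'⟩ - h
      simp only [Prod.mk.injEq] at h
      simp [h.1.1, h.1.2, h.2]
  have hT23card : T23.card ≤ G₂₃.card * A₁.card := by
    rw [← Finset.card_product]
    refine Finset.card_le_card_of_injOn (fun p => ((p.2.1, p.2.2), p.1)) ?_ ?_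
    · rintro ⟨x, y, z⟩ hp
      rw [hT23, Finset.mem_coe, Finset.mem_filter] at hp
      obtain ⟨hpm, hgood⟩ := hp
      rw [hT, Finset.mem_product] at hpm
      obtain ⟨hx, hyz⟩ := hpm; rw [Finset.mem_product] at hyz
      rw [Finset.mem_coe, Finset.mem_product]
      exact ⟨Finset.mem_filter.mpr ⟨Finset.mem_product.mpr ⟨hyz.1, hyz.2⟩, hgood⟩, hx⟩
    · rintro ⟨x, y, z⟩ - ⟨x', y', z'⟩ - h
      simp only [Prod.mk.injEq] at h
      simp [h.1.1, h.1.2, h.2]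
  have hTcard : T.card = A₁.card * (A₂.card * A₃.card) := by
    rw [hT, Finset.card_product, Finset.card_product]
  have hNat : A₁.card * (A₂.card * A₃.card) ≤
      E.card + G₁₂.card * A₃.card + G₁₃.card * A₂.card + G₂₃.card * A₁.card := by
    rw [← hTcard]
    refine (Finset.card_le_card hTsub).trans ?_
    calc (TE ∪ T12 ∪ T13 ∪ T23).card
        ≤ (TE ∪ T12 ∪ T13).card + T23.card := Finset.card_union_le _ _
      _ ≤ (TE ∪ T12).card + T13.card + T23.card := by
          exact add_le_add_left (Finset.card_union_le _ _) _
      _ ≤ TE.card + T12.card + T13.card + T23.card := by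
          exact add_le_add_left (add_le_add_left (Finset.card_union_le _ _) _) _
      _ ≤ E.card + G₁₂.card * A₃.card + G₁₃.card * A₂.card + G₂₃.card * A₁.card := by
          exact add_le_add (add_le_add (add_le_add hTEcard hT12card) hT13card) hT23card
  -- pass to reals
  set a : ℝ := (A₁.card : ℝ) with hadef
  set b : ℝ := (A₂.card : ℝ) with hbdef
  set c : ℝ := (A₃.card : ℝ) with hcdef
  set M : ℝ := max a (max b c) with hMdef
  have hMa : a ≤ M := le_max_left _ _
  have hMb : b ≤ M := le_trans (le_max_left _ _) (le_max_right _ _)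
  have hMc : c ≤ M := le_trans (le_max_right _ _) (le_max_right _ _)
  have ha0 : (0:ℝ) ≤ a := Nat.cast_nonneg _
  have hb0 : (0:ℝ) ≤ b := Nat.cast_nonneg _
  have hc0 : (0:ℝ) ≤ c := Nat.cast_nonneg _
  have hM0 : (0:ℝ) ≤ M := le_trans ha0 hMa
  have hmM : m ≤ M := le_trans hca hMa
  -- degrees in ℝ
  have hdeg0 : ∀ w : Fin n, (0:ℝ) ≤ (deg E w : ℝ) := fun w => Nat.cast_nonneg _
  have hdegW : ∀ w ∈ W, (deg E w : ℝ) * L ^ 2 < N := by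
    intro w hw
    rw [hW, Finset.mem_filter] at hw
    have := hw.2
    rw [hH] at this
    simp only [Set.mem_setOf_eq, not_le] at this
    have hL2 : (0:ℝ) < L ^ 2 := by positivity
    calc (deg E w : ℝ) * L ^ 2 < (N / L ^ 2) * L ^ 2 := by
          exact mul_lt_mul_of_pos_right this hL2
      _ = N := by field_simp
  have hsumdeg : ∑ w ∈ W, (deg E w : ℝ) ≤ 6 * N := by
    have h1 : ∑ w ∈ W, (deg E w : ℝ) ≤ ∑ w : Fin n, (deg E w : ℝ) :=
      Finset.sum_le_sum_of_subset_of_nonneg (Finset.subset_univ W)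
        (fun i _ _ => hdeg0 i)
    refine h1.trans ?_
    have : (∑ w : Fin n, (deg E w : ℝ)) = ((3 * E.card : ℕ) : ℝ) := by
      rw [← degsum]; push_cast; rfl
    rw [this]
    have : (3 * E.card : ℕ) ≤ 6 * n := by omega
    calc ((3 * E.card : ℕ) : ℝ) ≤ ((6 * n : ℕ) : ℝ) := by exact_mod_cast this
      _ = 6 * N := by push_cast [hNdef]; ring
  -- sum of squared degrees
  set P : ℝ := ∑ w ∈ W, (deg E w : ℝ) ^ 2 with hPdef
  have hP0 : (0:ℝ) ≤ P := Finset.sum_nonneg fun w _ => sq_nonneg _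
  have hP : L ^ 2 * P ≤ 6 * N * N := by
    rw [hPdef, Finset.mul_sum]
    calc ∑ w ∈ W, L ^ 2 * (deg E w : ℝ) ^ 2
        ≤ ∑ w ∈ W, N * (deg E w : ℝ) := by
          refine Finset.sum_le_sum fun w hw => ?_
          exact arith_sq _ _ _ (hdegW w hw) (hdeg0 w)
      _ = N * ∑ w ∈ W, (deg E w : ℝ) := by rw [Finset.mul_sum]
      _ ≤ N * (6 * N) := by
          exact mul_le_mul_of_nonneg_left hsumdeg (le_of_lt hN0)
      _ = 6 * N * N := by ring
  -- per-w bound on neighborhood pieces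
  have hsum3 : ∀ w : Fin n,
      ((Nb w ∩ A₁).card : ℝ) + ((Nb w ∩ A₂).card : ℝ) + ((Nb w ∩ A₃).card : ℝ)
        ≤ 2 * (deg E w : ℝ) := by
    intro w
    have hdA12 : Disjoint A₁ A₂ := by
      rw [Finset.disjoint_left]
      intro x h1 h2
      exact Set.disjoint_left.mp d12 ((mem1 x).mp h1) ((mem2 x).mp h2)
    have hdA13 : Disjoint A₁ A₃ := by
      rw [Finset.disjoint_left]
      intro x h1 h2
      exact Set.disjoint_left.mp d13 ((mem1 x).mp h1) ((mem3 x).mp h2)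
    have hdA23 : Disjoint A₂ A₃ := by
      rw [Finset.disjoint_left]
      intro x h1 h2
      exact Set.disjoint_left.mp d23 ((mem2 x).mp h1) ((mem3 x).mp h2)
    have hd1 : Disjoint (Nb w ∩ A₁) ((Nb w ∩ A₂) ∪ (Nb w ∩ A₃)) := by
      rw [Finset.disjoint_union_right]
      exact ⟨hdA12.mono Finset.inter_subset_right Finset.inter_subset_right,
        hdA13.mono Finset.inter_subset_right Finset.inter_subset_right⟩
    have hd2 : Disjoint (Nb w ∩ A₂) (Nb w ∩ A₃) :=
      hdA23.mono Finset.inter_subset_right Finset.inter_subset_right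
    have hcardu : (Nb w ∩ A₁).card + (Nb w ∩ A₂).card + (Nb w ∩ A₃).card
        = ((Nb w ∩ A₁) ∪ ((Nb w ∩ A₂) ∪ (Nb w ∩ A₃))).card := by
      rw [Finset.card_union_of_disjoint hd1, Finset.card_union_of_disjoint hd2, add_assoc]
    have hsubN : (Nb w ∩ A₁) ∪ ((Nb w ∩ A₂) ∪ (Nb w ∩ A₃)) ⊆ Nb w := by
      intro x hx
      simp only [Finset.mem_union, Finset.mem_inter] at hx
      tauto
    have hNat3 : (Nb w ∩ A₁).card + (Nb w ∩ A₂).card + (Nb w ∩ A₃).card ≤ 2 * deg E w := by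
      rw [hcardu]
      exact (Finset.card_le_card hsubN).trans (hNbcard w)
    calc ((Nb w ∩ A₁).card : ℝ) + ((Nb w ∩ A₂).card : ℝ) + ((Nb w ∩ A₃).card : ℝ)
        = (((Nb w ∩ A₁).card + (Nb w ∩ A₂).card + (Nb w ∩ A₃).card : ℕ) : ℝ) := by push_cast; ring
      _ ≤ ((2 * deg E w : ℕ) : ℝ) := by exact_mod_cast hNat3
      _ = 2 * (deg E w : ℝ) := by push_cast; ring
  -- real versions of the good-pair bounds
  have hg12R : (G₁₂.card : ℝ) ≤ ∑ w ∈ W, ((Nb w ∩ A₁).card : ℝ) * ((Nb w ∩ A₂).card : ℝ) := by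
    calc (G₁₂.card : ℝ) ≤ ((∑ w ∈ W, (Nb w ∩ A₁).card * (Nb w ∩ A₂).card : ℕ) : ℝ) := by
          exact_mod_cast hg12
      _ = _ := by push_cast; rfl
  have hg13R : (G₁₃.card : ℝ) ≤ ∑ w ∈ W, ((Nb w ∩ A₁).card : ℝ) * ((Nb w ∩ A₃).card : ℝ) := by
    calc (G₁₃.card : ℝ) ≤ ((∑ w ∈ W, (Nb w ∩ A₁).card * (Nb w ∩ A₃).card : ℕ) : ℝ) := by
          exact_mod_cast hg13
      _ = _ := by push_cast; rfl
  have hg23R : (G₂₃.card : ℝ) ≤ ∑ w ∈ W, ((Nb w ∩ A₂).card : ℝ) * ((Nb w ∩ A₃).card : ℝ) := by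
    calc (G₂₃.card : ℝ) ≤ ((∑ w ∈ W, (Nb w ∩ A₂).card * (Nb w ∩ A₃).card : ℕ) : ℝ) := by
          exact_mod_cast hg23
      _ = _ := by push_cast; rfl
  -- main real inequality
  have hNatR : a * (b * c) ≤ 2 * N + ((G₁₂.card : ℝ) * c + (G₁₃.card : ℝ) * b
      + (G₂₃.card : ℝ) * a) := by
    have hcast : ((A₁.card * (A₂.card * A₃.card) : ℕ) : ℝ) ≤
        ((E.card + G₁₂.card * A₃.card + G₁₃.card * A₂.card + G₂₃.card * A₁.card : ℕ) : ℝ) := by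
      exact_mod_cast hNat
    push_cast at hcast
    have hEc : (E.card : ℝ) ≤ 2 * N := by
      have : (E.card : ℝ) ≤ ((2 * n : ℕ) : ℝ) := by exact_mod_cast hE2
      calc (E.card : ℝ) ≤ ((2 * n : ℕ) : ℝ) := this
        _ = 2 * N := by push_cast [hNdef]; ring
    rw [hadef, hbdef, hcdef]
    linarith only [hcast, hEc]
  -- bound the good-pair terms
  have hTail : (G₁₂.card : ℝ) * c + (G₁₃.card : ℝ) * b + (G₂₃.card : ℝ) * a
      ≤ 4/3 * M * P := by
    have e1 : ∀ w : Fin n, (0:ℝ) ≤ ((Nb w ∩ A₁).card : ℝ) := fun w => Nat.cast_nonneg _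
    have e2 : ∀ w : Fin n, (0:ℝ) ≤ ((Nb w ∩ A₂).card : ℝ) := fun w => Nat.cast_nonneg _
    have e3 : ∀ w : Fin n, (0:ℝ) ≤ ((Nb w ∩ A₃).card : ℝ) := fun w => Nat.cast_nonneg _
    calc (G₁₂.card : ℝ) * c + (G₁₃.card : ℝ) * b + (G₂₃.card : ℝ) * a
        ≤ (∑ w ∈ W, ((Nb w ∩ A₁).card : ℝ) * ((Nb w ∩ A₂).card : ℝ)) * c
          + (∑ w ∈ W, ((Nb w ∩ A₁).card : ℝ) * ((Nb w ∩ A₃).card : ℝ)) * b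
          + (∑ w ∈ W, ((Nb w ∩ A₂).card : ℝ) * ((Nb w ∩ A₃).card : ℝ)) * a := by
          exact add_le_add (add_le_add (mul_le_mul_of_nonneg_right hg12R hc0)
            (mul_le_mul_of_nonneg_right hg13R hb0)) (mul_le_mul_of_nonneg_right hg23R ha0)
      _ = ∑ w ∈ W, (((Nb w ∩ A₁).card : ℝ) * ((Nb w ∩ A₂).card : ℝ) * c
          + ((Nb w ∩ A₁).card : ℝ) * ((Nb w ∩ A₃).card : ℝ) * b
          + ((Nb w ∩ A₂).card : ℝ) * ((Nb w ∩ A₃).card : ℝ) * a) := by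
          rw [Finset.sum_mul, Finset.sum_mul, Finset.sum_mul, ← Finset.sum_add_distrib,
            ← Finset.sum_add_distrib]
      _ ≤ ∑ w ∈ W, 4/3 * M * (deg E w : ℝ) ^ 2 := by
          refine Finset.sum_le_sum fun w hw => ?_
          exact arith_perw _ _ _ _ _ _ _ _ (e1 w) (e2 w) (e3 w) hMa hMb hMc hM0 (hsum3 w)
      _ = 4/3 * M * P := by rw [hPdef, Finset.mul_sum]
  -- lower bound on the product
  have hlb : m * m * M ≤ a * (b * c) := by
    rw [hMdef]
    exact arith_lb a b c m hm0 hca hcb hcc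
  -- final contradiction
  have hmain : m * m * M ≤ 2 * N + 4/3 * M * P :=
    le_trans hlb (hNatR.trans (by linarith only [hTail]))
  have hmL : m * L = 4 * N := by
    rw [hmdef]; field_simp
  exact arith_final m M N L P hm0 hL1 hN1 h32N hmL hmM hM0 hP0 hP hmain
end

section
/- Let G be a C_3^{(3)}-saturated 3-uniform hypergraph, let ℓ ≥ 9 be an integer, and let h be a vertex of G. Then there are at most 6ℓ^2 vertices z ≠ h such that d(z) ≤ 8, the pair hz is a bad pair, and every vertex of N(z) \ {h} has degree less than ℓ. -/
open Finset

variable {V : Type*}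

/-- Neighborhood of `v` as a finset. -/
def NS2 [DecidableEq V] (E : Finset (Finset V)) (v : V) : Finset V :=
  (E.filter fun e => v ∈ e).biUnion fun e => e.erase v

lemma mem_NS2 [DecidableEq V] {E : Finset (Finset V)} {v u : V} :
    u ∈ NS2 E v ↔ ∃ e ∈ E, v ∈ e ∧ u ∈ e ∧ u ≠ v := by
  simp only [NS2, mem_biUnion, mem_filter, mem_erase]
  tauto

lemma card_NS2_le [DecidableEq V] {E : Finset (Finset V)} (hu : IsUniform3 E) (v : V) :
    (NS2 E v).card ≤ 2 * deg E v := by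
  calc (NS2 E v).card ≤ ∑ e ∈ E.filter (fun e => v ∈ e), (e.erase v).card :=
        Finset.card_biUnion_le
    _ ≤ ∑ _e ∈ E.filter (fun e => v ∈ e), 2 := by
        apply Finset.sum_le_sum
        intro e he
        simp only [mem_filter] at he
        rw [Finset.card_erase_of_mem he.2, hu e he.1]
    _ = 2 * deg E v := by rw [Finset.sum_const, smul_eq_mul, mul_comm, deg]

lemma hasC3_struct [DecidableEq V] {E : Finset (Finset V)} (hfree : ¬ HasC3 E)
    {e : Finset V} (he3 : e.card = 3) (hc : HasC3 (insert e E)) :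
    ∃ f ∈ E, ∃ g ∈ E, ∃ p q r : V, e ∩ f = {p} ∧ e ∩ g = {q} ∧ f ∩ g = {r} ∧
      p ≠ q ∧ r ≠ p ∧ r ≠ q ∧ (∀ x, x ∈ e → x ∈ f → x ∈ g → False) := by
  obtain ⟨e₁, h1, e₂, h2, e₃, h3, a, b, c, i12, i23, i13, hab, hbc, hac, itr⟩ := hc
  have tri : ∀ x, x ∈ e₁ → x ∈ e₂ → x ∈ e₃ → False := by
    intro x hx1 hx2 hx3
    have hx : x ∈ e₁ ∩ e₂ ∩ e₃ := by
      rw [mem_inter, mem_inter]; exact ⟨⟨hx1, hx2⟩, hx3⟩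
    rw [itr] at hx; exact absurd hx (notMem_empty x)
  rcases Finset.mem_insert.mp h1 with rfl | h1E <;>
    rcases Finset.mem_insert.mp h2 with h2e | h2E <;>
      rcases Finset.mem_insert.mp h3 with h3e | h3E
  · rw [h2e, inter_self] at i12; rw [i12] at he3; simp at he3
  · rw [h2e, inter_self] at i12; rw [i12] at he3; simp at he3
  · rw [h3e, inter_self] at i13; rw [i13] at he3; simp at he3
  · exact ⟨e₂, h2E, e₃, h3E, a, c, b, i12, i13, i23, hac, hab.symm, hbc,
      fun x hx1 hx2 hx3 => tri x hx1 hx2 hx3⟩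
  · rw [h2e, h3e, inter_self] at i23; rw [i23] at he3; simp at he3
  · rw [h2e] at i12 i23
    exact ⟨e₁, h1E, e₃, h3E, a, b, c, by rwa [inter_comm], i23, i13, hab, hac.symm, hbc.symm,
      fun x hx1 hx2 hx3 => tri x hx2 (by rw [h2e]; exact hx1) hx3⟩
  · rw [h3e] at i13 i23
    exact ⟨e₁, h1E, e₂, h2E, c, b, a, by rwa [inter_comm], by rwa [inter_comm], i12,
      fun hcb => hbc hcb.symm, hac, hab,
      fun x hx1 hx2 hx3 => tri x hx2 hx3 (by rw [h3e]; exact hx1)⟩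
  · exact absurd ⟨e₁, h1E, e₂, h2E, e₃, h3E, a, b, c, i12, i23, i13, hab, hbc, hac, itr⟩ hfree

lemma mk_good [DecidableEq V] (E : Finset (Finset V)) {u v : V} {f g : Finset V}
    (hf : f ∈ E) (hg : g ∈ E) (huf : u ∈ f) (hvg : v ∈ g) (hug : u ∉ g) (hvf : v ∉ f)
    {r : V} (hr : f ∩ g = {r}) (hru : r ≠ u) (hrv : r ≠ v) : GoodPair E u v :=
  ⟨f, g, hf, hg, huf, hvg, hug, hvf, r, by simp [hru, hrv], hr⟩

theorem few_bad_pair_low_vertices {V : Type*} [Fintype V] [DecidableEq V]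
    (E : Finset (Finset V)) (hsat : IsSat3 E) (ℓ : ℕ) (hl : 9 ≤ ℓ) (h : V) :
    ({z : V | z ≠ h ∧ deg E z ≤ 8 ∧ ¬ GoodPair E h z ∧
        ∀ u : V, Adj E z u → u ≠ h → deg E u < ℓ}).ncard ≤ 6 * ℓ ^ 2 := by
  classical
  obtain ⟨hu, hfree, hadd⟩ := hsat
  set Z : Set V := {z : V | z ≠ h ∧ deg E z ≤ 8 ∧ ¬ GoodPair E h z ∧
        ∀ u : V, Adj E z u → u ≠ h → deg E u < ℓ} with hZdef
  rcases Z.eq_empty_or_nonempty with hemp | ⟨z₀, hz₀⟩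
  · rw [hemp]; simp
  have hz₀' := hz₀
  simp only [hZdef, Set.mem_setOf_eq] at hz₀'
  obtain ⟨hz₀h, hz₀d, hz₀g, hz₀ℓ⟩ := hz₀'
  set S : Finset V := insert z₀ (NS2 E z₀ ∪ ((NS2 E z₀).erase h).biUnion (NS2 E)) with hSdef
  have key : ∀ z' ∈ Z, z' ∈ S := by
    intro z' hz'
    simp only [hZdef, Set.mem_setOf_eq] at hz'
    obtain ⟨hz'h, hz'd, hz'g, hz'ℓ⟩ := hz'
    by_cases hzz : z' = z₀
    · simp [hSdef, hzz]
    rw [hSdef, mem_insert]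
    right
    rw [mem_union]
    by_cases hieE : ({h, z₀, z'} : Finset V) ∈ E
    · exact Or.inl (mem_NS2.mpr ⟨{h, z₀, z'}, hieE, by simp, by simp, hzz⟩)
    have hcard : ({h, z₀, z'} : Finset V).card = 3 := by
      rw [card_insert_of_notMem (by simp [Ne.symm hz₀h, Ne.symm hz'h]),
          card_insert_of_notMem (by simp only [mem_singleton]; exact fun hx => hzz hx.symm), card_singleton]
    obtain ⟨f, hf, g, hg, p, q, r, hef, heg, hfg, hpq, hrp, hrq, htri⟩ :=
      hasC3_struct hfree hcard (hadd _ hcard hieE)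
    have hpe : p ∈ ({h, z₀, z'} : Finset V) ∧ p ∈ f := by
      have : p ∈ ({h, z₀, z'} : Finset V) ∩ f := by rw [hef]; exact mem_singleton_self p
      exact mem_inter.mp this
    have hqe : q ∈ ({h, z₀, z'} : Finset V) ∧ q ∈ g := by
      have : q ∈ ({h, z₀, z'} : Finset V) ∩ g := by rw [heg]; exact mem_singleton_self q
      exact mem_inter.mp this
    have hrfg : r ∈ f ∧ r ∈ g := by
      have : r ∈ f ∩ g := by rw [hfg]; exact mem_singleton_self r
      exact mem_inter.mp this
    obtain ⟨hpe, hpf⟩ := hpe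
    obtain ⟨hqe, hqg⟩ := hqe
    obtain ⟨hrf, hrg⟩ := hrfg
    have hmemf : ∀ x, x ∈ ({h, z₀, z'} : Finset V) → x ∈ f → x = p := by
      intro x hxe hxf
      have : x ∈ ({h, z₀, z'} : Finset V) ∩ f := mem_inter.mpr ⟨hxe, hxf⟩
      rw [hef] at this; exact mem_singleton.mp this
    have hmemg : ∀ x, x ∈ ({h, z₀, z'} : Finset V) → x ∈ g → x = q := by
      intro x hxe hxg
      have : x ∈ ({h, z₀, z'} : Finset V) ∩ g := mem_inter.mpr ⟨hxe, hxg⟩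
      rw [heg] at this; exact mem_singleton.mp this
    have hre : r ∉ ({h, z₀, z'} : Finset V) := fun hre => hrp (hmemf r hre hrf)
    have hrh : r ≠ h := fun hx => hre (by rw [hx]; simp)
    have hrz0 : r ≠ z₀ := fun hx => hre (by rw [hx]; simp)
    have hrz' : r ≠ z' := fun hx => hre (by rw [hx]; simp)
    have hpg : p ∉ g := fun hpg => htri p hpe hpf hpg
    have hqf : q ∉ f := fun hqf => htri q hqe hqf hqg
    have hhe : h ∈ ({h, z₀, z'} : Finset V) := by simp
    have hz0e : z₀ ∈ ({h, z₀, z'} : Finset V) := by simp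
    have hz'e : z' ∈ ({h, z₀, z'} : Finset V) := by simp
    have hgf : g ∩ f = {r} := by rw [inter_comm]; exact hfg
    simp only [mem_insert, mem_singleton] at hpe hqe
    rcases hpe with hp | hp | hp <;> rcases hqe with hq | hq | hq
    · exact absurd (hp.trans hq.symm) hpq
    · -- p = h, q = z₀ : h,z₀ link
      exact absurd (mk_good E hf hg (hp ▸ hpf) (hq ▸ hqg)
        (fun hg' => hz₀h (((hmemg h hhe hg').trans hq).symm))
        (fun hf' => hz₀h ((hmemf z₀ hz0e hf').trans hp))
        hfg hrh hrz0) hz₀g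
    · -- p = h, q = z' : h,z' link
      exact absurd (mk_good E hf hg (hp ▸ hpf) (hq ▸ hqg)
        (fun hg' => hz'h (((hmemg h hhe hg').trans hq).symm))
        (fun hf' => hz'h ((hmemf z' hz'e hf').trans hp))
        hfg hrh hrz') hz'g
    · -- p = z₀, q = h : h,z₀ link (roles swapped)
      exact absurd (mk_good E hg hf (hq ▸ hqg) (hp ▸ hpf)
        (fun hf' => hz₀h (((hmemf h hhe hf').trans hp).symm))
        (fun hg' => hz₀h ((hmemg z₀ hz0e hg').trans hq))
        hgf hrh hrz0) hz₀g
    · exact absurd (hp.trans hq.symm) hpq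
    · -- p = z₀, q = z' : z' is in second neighborhood of z₀
      exact Or.inr (mem_biUnion.mpr ⟨r, mem_erase.mpr ⟨hrh,
        mem_NS2.mpr ⟨f, hf, hp ▸ hpf, hrf, hrz0⟩⟩,
        mem_NS2.mpr ⟨g, hg, hrg, hq ▸ hqg, Ne.symm hrz'⟩⟩)
    · -- p = z', q = h : h,z' link (roles swapped)
      exact absurd (mk_good E hg hf (hq ▸ hqg) (hp ▸ hpf)
        (fun hf' => hz'h (((hmemf h hhe hf').trans hp).symm))
        (fun hg' => hz'h ((hmemg z' hz'e hg').trans hq))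
        hgf hrh hrz') hz'g
    · -- p = z', q = z₀
      exact Or.inr (mem_biUnion.mpr ⟨r, mem_erase.mpr ⟨hrh,
        mem_NS2.mpr ⟨g, hg, hq ▸ hqg, hrg, hrz0⟩⟩,
        mem_NS2.mpr ⟨f, hf, hrf, hp ▸ hpf, Ne.symm hrz'⟩⟩)
    · exact absurd (hp.trans hq.symm) hpq
  have h1 : Z.ncard ≤ S.card := by
    rw [← Set.ncard_coe_finset]
    exact Set.ncard_le_ncard key S.finite_toSet
  have hNz₀ : (NS2 E z₀).card ≤ 16 :=
    le_trans (card_NS2_le hu z₀) (by omega)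
  have hB : (((NS2 E z₀).erase h).biUnion (NS2 E)).card ≤ 16 * (2 * ℓ) := by
    calc (((NS2 E z₀).erase h).biUnion (NS2 E)).card
        ≤ ∑ r ∈ (NS2 E z₀).erase h, (NS2 E r).card := card_biUnion_le
      _ ≤ ∑ _r ∈ (NS2 E z₀).erase h, 2 * ℓ := by
          apply Finset.sum_le_sum
          intro r hr
          obtain ⟨hrh, hrN⟩ := mem_erase.mp hr
          obtain ⟨e', he', hz₀e', hre', hrz⟩ := mem_NS2.mp hrN
          have hdr : deg E r < ℓ := hz₀ℓ r ⟨Ne.symm hrz, e', he', hz₀e', hre'⟩ hrh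
          calc (NS2 E r).card ≤ 2 * deg E r := card_NS2_le hu r
            _ ≤ 2 * ℓ := by omega
      _ = ((NS2 E z₀).erase h).card * (2 * ℓ) := by rw [Finset.sum_const, smul_eq_mul]
      _ ≤ 16 * (2 * ℓ) :=
          Nat.mul_le_mul_right _ (le_trans (card_erase_le) hNz₀)
  have hS : S.card ≤ 1 + (16 + 16 * (2 * ℓ)) := by
    calc S.card ≤ (NS2 E z₀ ∪ ((NS2 E z₀).erase h).biUnion (NS2 E)).card + 1 :=
          card_insert_le _ _
      _ ≤ ((NS2 E z₀).card + (((NS2 E z₀).erase h).biUnion (NS2 E)).card) + 1 :=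
          Nat.add_le_add_right (card_union_le _ _) 1
      _ ≤ 1 + (16 + 16 * (2 * ℓ)) := by omega
  have : Z.ncard ≤ 1 + (16 + 16 * (2 * ℓ)) := le_trans h1 hS
  nlinarith [this, hl]
end

section
/- Let G be a C_3^{(3)}-saturated 3-uniform hypergraph, let ℓ ≥ 9 be an integer, and let h be a vertex of G. Then there are at most 8ℓ^2 edges e ∈ E(G) containing h whose other two vertices can be labeled u, v so that: d(u) ≤ 8, d(v) < ℓ, d(hu) = 1, d(hv) = 1, and every edge of G containing u other than e has all three of its vertices of degree less than ℓ. -/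
open Finset

variable {V : Type*}

section Aux

variable [DecidableEq V]


lemma codeg_unique {E : Finset (Finset V)} {x y : V}
    (hc : codeg E x y = 1)
    {f g : Finset V} (hf : f ∈ E) (hg : g ∈ E) (hxf : x ∈ f) (hyf : y ∈ f)
    (hxg : x ∈ g) (hyg : y ∈ g) : f = g :=
  Finset.card_le_one.1 (le_of_eq hc) f (Finset.mem_filter.2 ⟨hf, hxf, hyf⟩)
    g (Finset.mem_filter.2 ⟨hg, hxg, hyg⟩)

lemma sat_link {E : Finset (Finset V)} (hfree : ¬ HasC3 E)
    (hadd : HasC3 (insert t E))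
    (hc : t.card = 3) :
    ∃ a ∈ t, ∃ c ∈ t, a ≠ c ∧ ∃ f₁ ∈ E, ∃ f₂ ∈ E,
      t ∩ f₁ = {a} ∧ t ∩ f₂ = {c} ∧ ∃ b, b ∉ t ∧ f₁ ∩ f₂ = {b} := by
  obtain ⟨e₁, he₁, e₂, he₂, e₃, he₃, a, b, c, h12, h23, h13, hab, hbc, hac, htr⟩ := hadd
  have hone : e₁ = t ∨ e₂ = t ∨ e₃ = t := by
    by_contra hcon
    push_neg at hcon
    exact hfree ⟨e₁, (Finset.mem_insert.1 he₁).resolve_left hcon.1,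
      e₂, (Finset.mem_insert.1 he₂).resolve_left hcon.2.1,
      e₃, (Finset.mem_insert.1 he₃).resolve_left hcon.2.2,
      a, b, c, h12, h23, h13, hab, hbc, hac, htr⟩
  have hsing : ∀ x : V, t ≠ ({x} : Finset V) := by
    intro x hx
    rw [hx] at hc
    simp at hc
  rcases hone with rfl | rfl | rfl
  · -- e₁ = t
    have h2 : e₂ ∈ E := by
      rcases Finset.mem_insert.1 he₂ with rfl | h
      · exact absurd (by rw [Finset.inter_self] at h12; exact h12) (hsing a)
      · exact h
    have h3 : e₃ ∈ E := by
      rcases Finset.mem_insert.1 he₃ with rfl | h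
      · exact absurd (by rw [Finset.inter_self] at h13; exact h13) (hsing c)
      · exact h
    have hat : a ∈ e₁ := (Finset.mem_inter.1 (h12 ▸ Finset.mem_singleton_self a)).1
    have hct : c ∈ e₁ := (Finset.mem_inter.1 (h13 ▸ Finset.mem_singleton_self c)).1
    refine ⟨a, hat, c, hct, hac, e₂, h2, e₃, h3, h12, h13, b, ?_, h23⟩
    intro hbt
    have hb2 : b ∈ e₂ := (Finset.mem_inter.1 (h23 ▸ Finset.mem_singleton_self b)).1
    have hb3 : b ∈ e₃ := (Finset.mem_inter.1 (h23 ▸ Finset.mem_singleton_self b)).2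
    have : b ∈ e₁ ∩ e₂ ∩ e₃ := Finset.mem_inter.2 ⟨Finset.mem_inter.2 ⟨hbt, hb2⟩, hb3⟩
    rw [htr] at this
    exact absurd this (Finset.notMem_empty b)
  · -- e₂ = t
    have h1 : e₁ ∈ E := by
      rcases Finset.mem_insert.1 he₁ with rfl | h
      · exact absurd (by rw [Finset.inter_self] at h12; exact h12) (hsing a)
      · exact h
    have h3 : e₃ ∈ E := by
      rcases Finset.mem_insert.1 he₃ with rfl | h
      · exact absurd (by rw [Finset.inter_self] at h23; exact h23) (hsing b)
      · exact h
    have hat : a ∈ e₂ := (Finset.mem_inter.1 (h12 ▸ Finset.mem_singleton_self a)).2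
    have hbt : b ∈ e₂ := (Finset.mem_inter.1 (h23 ▸ Finset.mem_singleton_self b)).1
    refine ⟨a, hat, b, hbt, hab, e₁, h1, e₃, h3, by rw [Finset.inter_comm]; exact h12,
      h23, c, ?_, h13⟩
    intro hct
    have hc1 : c ∈ e₁ := (Finset.mem_inter.1 (h13 ▸ Finset.mem_singleton_self c)).1
    have hc3 : c ∈ e₃ := (Finset.mem_inter.1 (h13 ▸ Finset.mem_singleton_self c)).2
    have : c ∈ e₁ ∩ e₂ ∩ e₃ := Finset.mem_inter.2 ⟨Finset.mem_inter.2 ⟨hc1, hct⟩, hc3⟩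
    rw [htr] at this
    exact absurd this (Finset.notMem_empty c)
  · -- e₃ = t
    have h1 : e₁ ∈ E := by
      rcases Finset.mem_insert.1 he₁ with rfl | h
      · exact absurd (by rw [Finset.inter_self] at h13; exact h13) (hsing c)
      · exact h
    have h2 : e₂ ∈ E := by
      rcases Finset.mem_insert.1 he₂ with rfl | h
      · exact absurd (by rw [Finset.inter_self] at h23; exact h23) (hsing b)
      · exact h
    have hct : c ∈ e₃ := (Finset.mem_inter.1 (h13 ▸ Finset.mem_singleton_self c)).2
    have hbt : b ∈ e₃ := (Finset.mem_inter.1 (h23 ▸ Finset.mem_singleton_self b)).2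
    refine ⟨c, hct, b, hbt, Ne.symm hbc, e₁, h1, e₂, h2,
      by rw [Finset.inter_comm]; exact h13,
      by rw [Finset.inter_comm]; exact h23, a, ?_, h12⟩
    intro hat
    have ha1 : a ∈ e₁ := (Finset.mem_inter.1 (h12 ▸ Finset.mem_singleton_self a)).1
    have ha2 : a ∈ e₂ := (Finset.mem_inter.1 (h12 ▸ Finset.mem_singleton_self a)).2
    have : a ∈ e₁ ∩ e₂ ∩ e₃ := Finset.mem_inter.2 ⟨Finset.mem_inter.2 ⟨ha1, ha2⟩, hat⟩
    rw [htr] at this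
    exact absurd this (Finset.notMem_empty a)
end Aux

theorem few_one_one_flat_edges {V : Type*} [Fintype V] [DecidableEq V]
    (E : Finset (Finset V)) (hsat : IsSat3 E) (ℓ : ℕ) (hl : 9 ≤ ℓ) (h : V) :
    ({e : Finset V | e ∈ E ∧ ∃ u v : V, e = {h, u, v} ∧ u ≠ v ∧ u ≠ h ∧ v ≠ h ∧
        deg E u ≤ 8 ∧ deg E v < ℓ ∧ codeg E h u = 1 ∧ codeg E h v = 1 ∧
        ∀ f ∈ E, u ∈ f → f ≠ e → ∀ w ∈ f, deg E w < ℓ}).ncard ≤ 8 * ℓ ^ 2 := by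
  classical
  obtain ⟨hunif, hfree, hadd⟩ := hsat
  set p : Finset V → Prop := fun e => ∃ u v : V, e = {h, u, v} ∧ u ≠ v ∧ u ≠ h ∧ v ≠ h ∧
      deg E u ≤ 8 ∧ deg E v < ℓ ∧ codeg E h u = 1 ∧ codeg E h v = 1 ∧
      ∀ f ∈ E, u ∈ f → f ≠ e → ∀ w ∈ f, deg E w < ℓ with hp
  have hset : ({e : Finset V | e ∈ E ∧ ∃ u v : V, e = {h, u, v} ∧ u ≠ v ∧ u ≠ h ∧ v ≠ h ∧
      deg E u ≤ 8 ∧ deg E v < ℓ ∧ codeg E h u = 1 ∧ codeg E h v = 1 ∧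
      ∀ f ∈ E, u ∈ f → f ≠ e → ∀ w ∈ f, deg E w < ℓ} : Set (Finset V)) =
      ↑(E.filter p) := by
    ext f
    simp only [Set.mem_setOf_eq, Finset.coe_filter, hp]
  rw [hset, Set.ncard_coe_finset]
  set T := E.filter p with hT
  by_cases hdh : deg E h < ℓ
  · -- easy case: few edges at h at all
    have hsub : T ⊆ E.filter (fun g => h ∈ g) := by
      intro f hf
      obtain ⟨hfE, u, v, hfe, _⟩ := Finset.mem_filter.1 hf
      refine Finset.mem_filter.2 ⟨hfE, ?_⟩
      rw [hfe]; simp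
    have h1 : T.card ≤ deg E h := Finset.card_le_card hsub
    have h2 : ℓ ≤ 8 * ℓ ^ 2 := by nlinarith
    omega
  push_neg at hdh
  rcases T.eq_empty_or_nonempty with hTe | ⟨e, he⟩
  · simp [hTe]
  -- selection function
  set uf : Finset V → V := fun f => if hx : p f then hx.choose else h with hufdef
  have hufspec : ∀ f ∈ T, ∃ w, f = {h, uf f, w} ∧ uf f ≠ w ∧ uf f ≠ h ∧ w ≠ h ∧
      deg E (uf f) ≤ 8 ∧ deg E w < ℓ ∧ codeg E h (uf f) = 1 ∧ codeg E h w = 1 ∧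
      ∀ g ∈ E, uf f ∈ g → g ≠ f → ∀ x ∈ g, deg E x < ℓ := by
    intro f hf
    have hx : p f := (Finset.mem_filter.1 hf).2
    simp only [hufdef, dif_pos hx]
    exact hx.choose_spec
  obtain ⟨v, hev, huv, huh, hvh, hdu, hdv, hchu, hchv, hflat⟩ := hufspec e he
  set u := uf e with hu
  have heE : e ∈ E := (Finset.mem_filter.1 he).1
  have hmem_e : ∀ x ∈ e, x = h ∨ x = u ∨ x = v := by
    intro x hx; rw [hev] at hx; simpa using hx
  have hhe : h ∈ e := by rw [hev]; simp
  have hue : u ∈ e := by rw [hev]; simp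
  have hve : v ∈ e := by rw [hev]; simp
  -- the three target sets
  set U₁ : Finset V := (E.filter (fun g => u ∈ g)).biUnion (fun g => g) with hU₁def
  set U₂ : Finset V := (E.filter (fun g => u ∈ g ∧ g ≠ e)).biUnion
      (fun g₁ => (g₁.erase u).biUnion
        (fun b => (E.filter (fun g => b ∈ g)).biUnion (fun g₂ => g₂.erase b))) with hU₂def
  set U₃ : Finset V := (E.filter (fun g => v ∈ g)).biUnion
      (fun g₁ => (g₁.erase v).biUnion
        (fun b => if deg E b < ℓ then
          (E.filter (fun g => b ∈ g)).biUnion (fun g₂ => g₂.erase b) else ∅)) with hU₃def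
  set U : Finset V := U₁ ∪ U₂ ∪ U₃ with hUdef
  -- case lemmas not depending on e'
  have caseUV : ∀ f₁ ∈ E, ∀ f₂ ∈ E, u ∈ f₁ → v ∉ f₁ → v ∈ f₂ → u ∉ f₂ →
      ∀ b, b ≠ u → b ≠ v → f₁ ∩ f₂ = {b} → False := by
    intro f₁ hf₁ f₂ hf₂ huf₁ hvf₁ hvf₂ huf₂ b hbu hbv hbf
    have hf₁e : f₁ ≠ e := fun hq => hvf₁ (hq ▸ hve)
    have hflat₁ : ∀ w ∈ f₁, deg E w < ℓ := hflat f₁ hf₁ huf₁ hf₁e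
    have hhf₁ : h ∉ f₁ := fun hq => absurd (hflat₁ h hq) (not_lt.2 hdh)
    have hhf₂ : h ∉ f₂ := by
      intro hq
      have : f₂ = e := codeg_unique hchv hf₂ heE hq hvf₂ hhe hve
      exact huf₂ (this ▸ hue)
    apply hfree
    have hi1 : f₁ ∩ e = {u} := by
      ext x
      simp only [Finset.mem_inter, Finset.mem_singleton]
      constructor
      · rintro ⟨hx1, hx2⟩
        rcases hmem_e x hx2 with rfl | rfl | rfl
        · exact absurd hx1 hhf₁
        · rfl
        · exact absurd hx1 hvf₁
      · rintro rfl; exact ⟨huf₁, hue⟩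
    have hi2 : e ∩ f₂ = {v} := by
      ext x
      simp only [Finset.mem_inter, Finset.mem_singleton]
      constructor
      · rintro ⟨hx1, hx2⟩
        rcases hmem_e x hx1 with rfl | rfl | rfl
        · exact absurd hx2 hhf₂
        · exact absurd hx2 huf₂
        · rfl
      · rintro rfl; exact ⟨hve, hvf₂⟩
    refine ⟨f₁, hf₁, e, heE, f₂, hf₂, u, v, b, hi1, hi2, hbf, huv, Ne.symm hbv, Ne.symm hbu, ?_⟩
    rw [hi1]
    exact Finset.singleton_inter_of_notMem huf₂
  have caseUU : ∀ f₁ ∈ E, ∀ f₂ ∈ E, u ∈ f₁ → v ∉ f₁ → ∀ b, b ≠ u → f₁ ∩ f₂ = {b} →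
      ∀ x ∈ f₂, x ≠ b → x ∈ U₂ := by
    intro f₁ hf₁ f₂ hf₂ huf₁ hvf₁ b hbu hbf x hxf₂ hxb
    have hf₁e : f₁ ≠ e := fun hq => hvf₁ (hq ▸ hve)
    have hbf₁ : b ∈ f₁ := (Finset.mem_inter.1 (hbf ▸ Finset.mem_singleton_self b)).1
    have hbf₂ : b ∈ f₂ := (Finset.mem_inter.1 (hbf ▸ Finset.mem_singleton_self b)).2
    exact Finset.mem_biUnion.2 ⟨f₁, Finset.mem_filter.2 ⟨hf₁, huf₁, hf₁e⟩,
      Finset.mem_biUnion.2 ⟨b, Finset.mem_erase.2 ⟨hbu, hbf₁⟩,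
        Finset.mem_biUnion.2 ⟨f₂, Finset.mem_filter.2 ⟨hf₂, hbf₂⟩,
          Finset.mem_erase.2 ⟨hxb, hxf₂⟩⟩⟩⟩
  -- main mapping lemma
  have hmaps : ∀ f ∈ T.erase e, uf f ∈ U := by
    intro e' he'
    have hne : e' ≠ e := (Finset.mem_erase.1 he').1
    have heT' : e' ∈ T := (Finset.mem_erase.1 he').2
    obtain ⟨v', hev', huv', huh', hvh', hdu', hdv', hchu', hchv', hflat'⟩ := hufspec e' heT'
    set u' := uf e' with hu'
    have he'E : e' ∈ E := (Finset.mem_filter.1 heT').1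
    have hmem_e' : ∀ x ∈ e', x = h ∨ x = u' ∨ x = v' := by
      intro x hx; rw [hev'] at hx; simpa using hx
    have hhe' : h ∈ e' := by rw [hev']; simp
    have hue' : u' ∈ e' := by rw [hev']; simp
    have hve' : v' ∈ e' := by rw [hev']; simp
    have huu : u' ≠ u := by
      intro hq
      exact hne (codeg_unique hchu he'E heE hhe' (hq ▸ hue') hhe hue)
    have hu'v : u' ≠ v := by
      intro hq
      exact hne (codeg_unique hchv he'E heE hhe' (hq ▸ hue') hhe hve)
    have hv'u : v' ≠ u := by
      intro hq
      exact hne (codeg_unique hchu he'E heE hhe' (hq ▸ hve') hhe hue)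
    have hv'v : v' ≠ v := by
      intro hq
      exact hne (codeg_unique hchv he'E heE hhe' (hq ▸ hve') hhe hve)
    have hune' : u ∉ e' := by
      intro hq
      rcases hmem_e' u hq with hqq | hqq | hqq
      · exact huh hqq
      · exact huu hqq.symm
      · exact hv'u hqq.symm
    have hvne' : v ∉ e' := by
      intro hq
      rcases hmem_e' v hq with hqq | hqq | hqq
      · exact hvh hqq
      · exact hu'v hqq.symm
      · exact hv'v hqq.symm
    have hee' : e ∩ e' = {h} := by
      ext x
      simp only [Finset.mem_inter, Finset.mem_singleton]
      constructor
      · rintro ⟨hx1, hx2⟩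
        rcases hmem_e x hx1 with rfl | rfl | rfl
        · rfl
        · exact absurd hx2 hune'
        · exact absurd hx2 hvne'
      · rintro rfl; exact ⟨hhe, hhe'⟩
    set t : Finset V := {u, v, u'} with htdef
    have htmem : ∀ x, x ∈ t ↔ x = u ∨ x = v ∨ x = u' := by
      intro x; simp [htdef]
    have hut : u ∈ t := (htmem u).2 (Or.inl rfl)
    have hvt : v ∈ t := (htmem v).2 (Or.inr (Or.inl rfl))
    have hu't : u' ∈ t := (htmem u').2 (Or.inr (Or.inr rfl))
    have htc : t.card = 3 := by
      rw [htdef, Finset.card_insert_of_notMem, Finset.card_insert_of_notMem,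
        Finset.card_singleton]
      · simp [Ne.symm hu'v]
      · simp [huv, Ne.symm huu]
    by_cases htE : t ∈ E
    · exact Finset.mem_union_left _ (Finset.mem_union_left _
        (Finset.mem_biUnion.2 ⟨t, Finset.mem_filter.2 ⟨htE, hut⟩, hu't⟩))
    · -- use saturation
      have caseVU : ∀ f₁ ∈ E, ∀ f₂ ∈ E, v ∈ f₁ → u ∉ f₁ → u' ∉ f₁ →
          u' ∈ f₂ → u ∉ f₂ → v ∉ f₂ →
          ∀ b, b ≠ u → b ≠ v → b ≠ u' → f₁ ∩ f₂ = {b} → u' ∈ U₃ := by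
        intro f₁ hf₁ f₂ hf₂ hvf₁ huf₁ hu'f₁ hu'f₂ huf₂ hvf₂ b hbu hbv hbu' hbf
        have hbf₁ : b ∈ f₁ := (Finset.mem_inter.1 (hbf ▸ Finset.mem_singleton_self b)).1
        have hbf₂ : b ∈ f₂ := (Finset.mem_inter.1 (hbf ▸ Finset.mem_singleton_self b)).2
        have hhf₁ : h ∉ f₁ := by
          intro hq
          exact huf₁ ((codeg_unique hchv hf₁ heE hq hvf₁ hhe hve) ▸ hue)
        have hhf₂ : h ∉ f₂ := by
          intro hq
          have hfe' : f₂ = e' := codeg_unique hchu' hf₂ he'E hq hu'f₂ hhe' hue'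
          have hbe' : b ∈ e' := hfe' ▸ hbf₂
          rcases hmem_e' b hbe' with hbq | hbq | hbq
          · exact hhf₁ (hbq ▸ hbf₁)
          · exact hbu' hbq
          · -- b = v' : cycle e, e', f₁
            have hv'f₁ : v' ∈ f₁ := hbq ▸ hbf₁
            apply hfree
            have hi2 : e' ∩ f₁ = {v'} := by
              ext x
              simp only [Finset.mem_inter, Finset.mem_singleton]
              constructor
              · rintro ⟨hx1, hx2⟩
                rcases hmem_e' x hx1 with rfl | rfl | rfl
                · exact absurd hx2 hhf₁
                · exact absurd hx2 hu'f₁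
                · rfl
              · rintro rfl; exact ⟨hve', hv'f₁⟩
            have hi3 : e ∩ f₁ = {v} := by
              ext x
              simp only [Finset.mem_inter, Finset.mem_singleton]
              constructor
              · rintro ⟨hx1, hx2⟩
                rcases hmem_e x hx1 with rfl | rfl | rfl
                · exact absurd hx2 hhf₁
                · exact absurd hx2 huf₁
                · rfl
              · rintro rfl; exact ⟨hve, hvf₁⟩
            refine ⟨e, heE, e', he'E, f₁, hf₁, h, v', v, hee', hi2, hi3,
              Ne.symm hvh', hv'v, Ne.symm hvh, ?_⟩
            rw [hee']
            exact Finset.singleton_inter_of_notMem hhf₁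
        have hf₂e' : f₂ ≠ e' := fun hq => hhf₂ (hq ▸ hhe')
        have hdb : deg E b < ℓ := hflat' f₂ hf₂ hu'f₂ hf₂e' b hbf₂
        refine Finset.mem_biUnion.2 ⟨f₁, Finset.mem_filter.2 ⟨hf₁, hvf₁⟩,
          Finset.mem_biUnion.2 ⟨b, Finset.mem_erase.2 ⟨hbv, hbf₁⟩, ?_⟩⟩
        rw [if_pos hdb]
        exact Finset.mem_biUnion.2 ⟨f₂, Finset.mem_filter.2 ⟨hf₂, hbf₂⟩,
          Finset.mem_erase.2 ⟨Ne.symm hbu', hu'f₂⟩⟩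
      obtain ⟨a, hat, c, hct, hac, f₁, hf₁, f₂, hf₂, htf₁, htf₂, b, hbt, hbf⟩ :=
        sat_link hfree (hadd t htc htE) htc
      have haf₁ : a ∈ f₁ := (Finset.mem_inter.1 (htf₁ ▸ Finset.mem_singleton_self a)).2
      have hcf₂ : c ∈ f₂ := (Finset.mem_inter.1 (htf₂ ▸ Finset.mem_singleton_self c)).2
      have hnot₁ : ∀ x ∈ t, x ≠ a → x ∉ f₁ := by
        intro x hx hxa hxf
        exact hxa (Finset.mem_singleton.1 (htf₁ ▸ Finset.mem_inter.2 ⟨hx, hxf⟩))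
      have hnot₂ : ∀ x ∈ t, x ≠ c → x ∉ f₂ := by
        intro x hx hxc hxf
        exact hxc (Finset.mem_singleton.1 (htf₂ ▸ Finset.mem_inter.2 ⟨hx, hxf⟩))
      have hbu : b ≠ u := fun hq => hbt (hq ▸ hut)
      have hbv : b ≠ v := fun hq => hbt (hq ▸ hvt)
      have hbu' : b ≠ u' := fun hq => hbt (hq ▸ hu't)
      rw [htmem] at hat hct
      rcases hat with hqa | hqa | hqa <;> rcases hct with hqc | hqc | hqc
      · exact absurd (hqa.trans hqc.symm) hac
      · exact absurd (caseUV f₁ hf₁ f₂ hf₂ (hqa ▸ haf₁)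
          (hnot₁ v hvt (fun hh => huv (hh.trans hqa).symm))
          (hqc ▸ hcf₂) (hnot₂ u hut (fun hh => huv (hh.trans hqc)))
          b hbu hbv hbf) id
      · exact Finset.mem_union_left _ (Finset.mem_union_right _
          (caseUU f₁ hf₁ f₂ hf₂ (hqa ▸ haf₁)
            (hnot₁ v hvt (fun hh => huv (hh.trans hqa).symm)) b hbu hbf
            u' (hqc ▸ hcf₂) (Ne.symm hbu')))
      · exact absurd (caseUV f₂ hf₂ f₁ hf₁ (hqc ▸ hcf₂)
          (hnot₂ v hvt (fun hh => huv (hh.trans hqc).symm))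
          (hqa ▸ haf₁) (hnot₁ u hut (fun hh => huv (hh.trans hqa)))
          b hbu hbv (by rw [Finset.inter_comm]; exact hbf)) id
      · exact absurd (hqa.trans hqc.symm) hac
      · exact Finset.mem_union_right _
          (caseVU f₁ hf₁ f₂ hf₂ (hqa ▸ haf₁)
            (hnot₁ u hut (fun hh => huv (hh.trans hqa)))
            (hnot₁ u' hu't (fun hh => hu'v (hh.trans hqa)))
            (hqc ▸ hcf₂) (hnot₂ u hut (fun hh => huu (hh.trans hqc).symm))
            (hnot₂ v hvt (fun hh => hu'v (hh.trans hqc).symm))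
            b hbu hbv hbu' hbf)
      · exact Finset.mem_union_left _ (Finset.mem_union_right _
          (caseUU f₂ hf₂ f₁ hf₁ (hqc ▸ hcf₂)
            (hnot₂ v hvt (fun hh => huv (hh.trans hqc).symm)) b hbu
            (by rw [Finset.inter_comm]; exact hbf) u' (hqa ▸ haf₁) (Ne.symm hbu')))
      · exact Finset.mem_union_right _
          (caseVU f₂ hf₂ f₁ hf₁ (hqc ▸ hcf₂)
            (hnot₂ u hut (fun hh => huv (hh.trans hqc)))
            (hnot₂ u' hu't (fun hh => hu'v (hh.trans hqc)))
            (hqa ▸ haf₁) (hnot₁ u hut (fun hh => huu (hh.trans hqa).symm))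
            (hnot₁ v hvt (fun hh => hu'v (hh.trans hqa).symm))
            b hbu hbv hbu' (by rw [Finset.inter_comm]; exact hbf))
      · exact absurd (hqa.trans hqc.symm) hac
  -- injectivity
  have hinj : Set.InjOn uf ↑(T.erase e) := by
    intro f₁ hf₁ f₂ hf₂ hq
    have hT₁ : f₁ ∈ T := Finset.mem_of_mem_erase (Finset.mem_coe.1 hf₁)
    have hT₂ : f₂ ∈ T := Finset.mem_of_mem_erase (Finset.mem_coe.1 hf₂)
    obtain ⟨w₁, hw₁, _, _, _, _, _, hcu₁, _, _⟩ := hufspec f₁ hT₁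
    obtain ⟨w₂, hw₂, _, _, _, _, _, _, _, _⟩ := hufspec f₂ hT₂
    have hE₁ : f₁ ∈ E := (Finset.mem_filter.1 hT₁).1
    have hE₂ : f₂ ∈ E := (Finset.mem_filter.1 hT₂).1
    set a₁ := uf f₁ with ha₁
    set a₂ := uf f₂ with ha₂
    have hh₁ : h ∈ f₁ := by rw [hw₁]; simp
    have hu₁ : a₁ ∈ f₁ := by rw [hw₁]; simp
    have hh₂ : h ∈ f₂ := by rw [hw₂]; simp
    have hu₂' : a₂ ∈ f₂ := by rw [hw₂]; simp
    have hu₂ : a₁ ∈ f₂ := by rw [hq]; exact hu₂'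
    exact codeg_unique hcu₁ hE₁ hE₂ hh₁ hu₁ hh₂ hu₂
  have hcard1 : (T.erase e).card ≤ U.card := Finset.card_le_card_of_injOn uf hmaps hinj
  -- bounds on U₁, U₂, U₃
  have hU₁ : U₁.card ≤ 24 := by
    calc U₁.card ≤ ∑ g ∈ E.filter (fun g => u ∈ g), g.card := Finset.card_biUnion_le
      _ ≤ (E.filter (fun g => u ∈ g)).card • 3 := Finset.sum_le_card_nsmul _ _ 3
          (fun g hg => le_of_eq (hunif g (Finset.mem_filter.1 hg).1))
      _ ≤ 8 • 3 := by
          have : (E.filter (fun g => u ∈ g)).card ≤ 8 := hdu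
          exact Nat.mul_le_mul_right 3 this
      _ = 24 := rfl
  have hinner : ∀ b : V, deg E b < ℓ →
      ((E.filter (fun g => b ∈ g)).biUnion (fun g₂ => g₂.erase b)).card ≤ 2 * ℓ := by
    intro b hb
    calc ((E.filter (fun g => b ∈ g)).biUnion (fun g₂ => g₂.erase b)).card
        ≤ ∑ g ∈ E.filter (fun g => b ∈ g), (g.erase b).card := Finset.card_biUnion_le
      _ ≤ (E.filter (fun g => b ∈ g)).card • 2 := Finset.sum_le_card_nsmul _ _ 2 (by
          intro g hg
          have hgE := (Finset.mem_filter.1 hg).1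
          have hbg := (Finset.mem_filter.1 hg).2
          rw [Finset.card_erase_of_mem hbg, hunif g hgE])
      _ ≤ ℓ • 2 := Nat.mul_le_mul_right 2 (le_of_lt hb)
      _ = 2 * ℓ := by ring
  have hU₂ : U₂.card ≤ 32 * ℓ := by
    calc U₂.card ≤ ∑ g₁ ∈ E.filter (fun g => u ∈ g ∧ g ≠ e),
        ((g₁.erase u).biUnion
          (fun b => (E.filter (fun g => b ∈ g)).biUnion (fun g₂ => g₂.erase b))).card :=
        Finset.card_biUnion_le
      _ ≤ (E.filter (fun g => u ∈ g ∧ g ≠ e)).card • (4 * ℓ) := by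
          refine Finset.sum_le_card_nsmul _ _ _ ?_
          intro g₁ hg₁
          obtain ⟨hg₁E, hug₁, hg₁e⟩ := Finset.mem_filter.1 hg₁
          calc ((g₁.erase u).biUnion
              (fun b => (E.filter (fun g => b ∈ g)).biUnion (fun g₂ => g₂.erase b))).card
              ≤ ∑ b ∈ g₁.erase u,
                ((E.filter (fun g => b ∈ g)).biUnion (fun g₂ => g₂.erase b)).card :=
              Finset.card_biUnion_le
            _ ≤ (g₁.erase u).card • (2 * ℓ) := Finset.sum_le_card_nsmul _ _ _ (by
                intro b hb
                exact hinner b (hflat g₁ hg₁E hug₁ hg₁e b (Finset.mem_of_mem_erase hb)))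
            _ ≤ 2 • (2 * ℓ) := Nat.mul_le_mul_right _ (by
                rw [Finset.card_erase_of_mem hug₁, hunif g₁ hg₁E])
            _ = 4 * ℓ := by ring
      _ ≤ 8 • (4 * ℓ) := by
          refine Nat.mul_le_mul_right _ (le_trans (Finset.card_le_card ?_) hdu)
          intro g hg
          exact Finset.mem_filter.2 ⟨(Finset.mem_filter.1 hg).1, (Finset.mem_filter.1 hg).2.1⟩
      _ = 32 * ℓ := by ring
  have hU₃ : U₃.card ≤ 4 * ℓ * ℓ := by
    calc U₃.card ≤ ∑ g₁ ∈ E.filter (fun g => v ∈ g),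
        ((g₁.erase v).biUnion
          (fun b => if deg E b < ℓ then
            (E.filter (fun g => b ∈ g)).biUnion (fun g₂ => g₂.erase b) else ∅)).card :=
        Finset.card_biUnion_le
      _ ≤ (E.filter (fun g => v ∈ g)).card • (4 * ℓ) := by
          refine Finset.sum_le_card_nsmul _ _ _ ?_
          intro g₁ hg₁
          obtain ⟨hg₁E, hvg₁⟩ := Finset.mem_filter.1 hg₁
          calc ((g₁.erase v).biUnion
              (fun b => if deg E b < ℓ then
                (E.filter (fun g => b ∈ g)).biUnion (fun g₂ => g₂.erase b) else ∅)).card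
              ≤ ∑ b ∈ g₁.erase v, (if deg E b < ℓ then
                (E.filter (fun g => b ∈ g)).biUnion (fun g₂ => g₂.erase b) else ∅).card :=
              Finset.card_biUnion_le
            _ ≤ (g₁.erase v).card • (2 * ℓ) := Finset.sum_le_card_nsmul _ _ _ (by
                intro b hb
                by_cases hdb : deg E b < ℓ
                · rw [if_pos hdb]; exact hinner b hdb
                · rw [if_neg hdb]; simp)
            _ ≤ 2 • (2 * ℓ) := Nat.mul_le_mul_right _ (by
                rw [Finset.card_erase_of_mem hvg₁, hunif g₁ hg₁E])
            _ = 4 * ℓ := by ring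
      _ ≤ ℓ • (4 * ℓ) := Nat.mul_le_mul_right _ (le_of_lt hdv)
      _ = 4 * ℓ * ℓ := by ring
  -- put it together
  have hUcard : U.card ≤ 24 + 32 * ℓ + 4 * ℓ * ℓ := by
    calc U.card ≤ (U₁ ∪ U₂).card + U₃.card := Finset.card_union_le _ _
      _ ≤ U₁.card + U₂.card + U₃.card := by
          have := Finset.card_union_le U₁ U₂
          omega
      _ ≤ 24 + 32 * ℓ + 4 * ℓ * ℓ := by omega
  have hTcard : T.card = (T.erase e).card + 1 := (Finset.card_erase_add_one he).symm
  have hll : 9 * ℓ ≤ ℓ * ℓ := Nat.mul_le_mul_right ℓ hl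
  have hsq : ℓ ^ 2 = ℓ * ℓ := sq ℓ
  calc T.card = (T.erase e).card + 1 := hTcard
    _ ≤ U.card + 1 := by omega
    _ ≤ 24 + 32 * ℓ + 4 * ℓ * ℓ + 1 := by omega
    _ ≤ 8 * ℓ ^ 2 := by
        rw [hsq]
        nlinarith
end

section
/- Let G be a C_3^{(3)}-saturated 3-uniform hypergraph, let h be a vertex, and let u, u' be distinct vertices different from h with d(u) ≥ 1, d(u') ≥ 1, d(hu) = d(u) and d(hu') = d(u'). Then {h, u, u'} ∈ E(G). -/
open Finset

variable {V : Type*}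

lemma codeg_full {V : Type*} [DecidableEq V] (E : Finset (Finset V)) (h u : V)
    (hc : codeg E h u = deg E u) : ∀ e ∈ E, u ∈ e → h ∈ e := by
  intro e he hue
  have hsub : E.filter (fun e => h ∈ e ∧ u ∈ e) ⊆ E.filter (fun e => u ∈ e) := by
    intro x hx
    simp only [Finset.mem_filter] at hx ⊢
    exact ⟨hx.1, hx.2.2⟩
  have heq := Finset.eq_of_subset_of_card_le hsub hc.ge
  have : e ∈ E.filter (fun e => h ∈ e ∧ u ∈ e) := by
    rw [heq]; simp only [Finset.mem_filter]; exact ⟨he, hue⟩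
  simp only [Finset.mem_filter] at this
  exact this.2.1

theorem full_codeg_pair_edge {V : Type*} [DecidableEq V]
    (E : Finset (Finset V)) (hsat : IsSat3 E) (h u u' : V)
    (hu : u ≠ h) (hu' : u' ≠ h) (huu' : u ≠ u')
    (hdu : 1 ≤ deg E u) (hdu' : 1 ≤ deg E u')
    (hcu : codeg E h u = deg E u) (hcu' : codeg E h u' = deg E u') :
    ({h, u, u'} : Finset V) ∈ E := by
  by_contra hne
  obtain ⟨huni, hfree, hsatur⟩ := hsat
  have hcard : ({h, u, u'} : Finset V).card = 3 :=
    Finset.card_eq_three.mpr ⟨h, u, u', Ne.symm hu, Ne.symm hu', huu', rfl⟩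
  obtain ⟨e₁, he₁, e₂, he₂, e₃, he₃, a, b, c, h12, h23, h13, hab, hbc, hac, htri⟩ :=
    hsatur _ hcard hne
  have hfu := codeg_full E h u hcu
  have hfu' := codeg_full E h u' hcu'
  -- key: any edge of E meeting {h,u,u'} contains h
  have hkey : ∀ f ∈ E, ∀ w, w ∈ f → w ∈ ({h, u, u'} : Finset V) → h ∈ f := by
    intro f hf w hwf hwe
    simp only [Finset.mem_insert, Finset.mem_singleton] at hwe
    rcases hwe with rfl | rfl | rfl
    · exact hwf
    · exact hfu f hf hwf
    · exact hfu' f hf hwf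
  rw [Finset.mem_insert] at he₁ he₂ he₃
  have ha12 : a ∈ e₁ ∧ a ∈ e₂ := Finset.mem_inter.mp (h12 ▸ Finset.mem_singleton_self a)
  have hb23 : b ∈ e₂ ∧ b ∈ e₃ := Finset.mem_inter.mp (h23 ▸ Finset.mem_singleton_self b)
  have hc13 : c ∈ e₁ ∧ c ∈ e₃ := Finset.mem_inter.mp (h13 ▸ Finset.mem_singleton_self c)
  have hh : h ∈ ({h, u, u'} : Finset V) := Finset.mem_insert_self _ _
  have hE1 : h ∈ e₁ := by
    rcases he₁ with rfl | he₁
    · exact hh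
    · rcases he₂ with rfl | he₂
      · exact hkey e₁ he₁ a ha12.1 ha12.2
      · rcases he₃ with rfl | he₃
        · exact hkey e₁ he₁ c hc13.1 hc13.2
        · exact absurd ⟨e₁, he₁, e₂, he₂, e₃, he₃, a, b, c,
            h12, h23, h13, hab, hbc, hac, htri⟩ hfree
  have hE2 : h ∈ e₂ := by
    rcases he₂ with rfl | he₂
    · exact hh
    · rcases he₁ with rfl | he₁
      · exact hkey e₂ he₂ a ha12.2 ha12.1
      · rcases he₃ with rfl | he₃
        · exact hkey e₂ he₂ b hb23.1 hb23.2
        · exact absurd ⟨e₁, he₁, e₂, he₂, e₃, he₃, a, b, c,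
            h12, h23, h13, hab, hbc, hac, htri⟩ hfree
  have hE3 : h ∈ e₃ := by
    rcases he₃ with rfl | he₃
    · exact hh
    · rcases he₁ with rfl | he₁
      · exact hkey e₃ he₃ c hc13.2 hc13.1
      · rcases he₂ with rfl | he₂
        · exact hkey e₃ he₃ b hb23.2 hb23.1
        · exact absurd ⟨e₁, he₁, e₂, he₂, e₃, he₃, a, b, c,
            h12, h23, h13, hab, hbc, hac, htri⟩ hfree
  have hmem : h ∈ e₁ ∩ e₂ ∩ e₃ :=
    Finset.mem_inter.mpr ⟨Finset.mem_inter.mpr ⟨hE1, hE2⟩, hE3⟩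
  rw [htri] at hmem
  exact Finset.notMem_empty h hmem
end

section
/- Let G be a C_3^{(3)}-saturated 3-uniform hypergraph and let h be a vertex of G. Then there are at most 9 vertices u ≠ h with 1 ≤ d(u) ≤ 8 and d(hu) = d(u). -/
open Finset

variable {V : Type*}

lemma full_codeg_mem [DecidableEq V] (E : Finset (Finset V)) (h u : V)
    (hc : codeg E h u = deg E u) : ∀ e ∈ E, u ∈ e → h ∈ e := by
  have hsub : E.filter (fun e => h ∈ e ∧ u ∈ e) ⊆ E.filter (fun e => u ∈ e) := by
    intro e he
    rw [Finset.mem_filter] at he ⊢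
    exact ⟨he.1, he.2.2⟩
  have heq : E.filter (fun e => h ∈ e ∧ u ∈ e) = E.filter (fun e => u ∈ e) :=
    Finset.eq_of_subset_of_card_le hsub (le_of_eq hc.symm)
  intro e he hue
  have : e ∈ E.filter (fun e => u ∈ e) := Finset.mem_filter.2 ⟨he, hue⟩
  rw [← heq] at this
  exact (Finset.mem_filter.1 this).2.1

lemma triple_mem [DecidableEq V] (E : Finset (Finset V)) (hsat : IsSat3 E) (h u v : V)
    (huh : u ≠ h) (hvh : v ≠ h) (huv : u ≠ v)
    (hu : ∀ e ∈ E, u ∈ e → h ∈ e) (hv : ∀ e ∈ E, v ∈ e → h ∈ e) :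
    ({u, v, h} : Finset V) ∈ E := by
  by_contra hne
  have hcard : ({u, v, h} : Finset V).card = 3 := by
    rw [Finset.card_insert_of_notMem (by simp [huv, huh]),
      Finset.card_insert_of_notMem (by simp [hvh]), Finset.card_singleton]
  obtain ⟨_, hfree, hadd⟩ := hsat
  obtain ⟨e₁, he₁, e₂, he₂, e₃, he₃, a, b, c, h12, h23, h13, hab, hbc, hac, htri⟩ :=
    hadd _ hcard hne
  -- any edge of E meeting {u,v,h} in a single vertex meets it in h
  have step : ∀ f ∈ E, ∀ α : V, ({u, v, h} : Finset V) ∩ f = {α} → α = h := by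
    intro f hf α hint
    have hα : α ∈ ({u, v, h} : Finset V) ∩ f := hint ▸ Finset.mem_singleton_self α
    obtain ⟨hαe, hαf⟩ := Finset.mem_inter.1 hα
    simp only [Finset.mem_insert, Finset.mem_singleton] at hαe
    rcases hαe with rfl | rfl | rfl
    · have hhf := hu f hf hαf
      have : h ∈ ({α, v, h} : Finset V) ∩ f := Finset.mem_inter.2 ⟨by simp, hhf⟩
      rw [hint, Finset.mem_singleton] at this
      exact absurd this.symm huh
    · have hhf := hv f hf hαf
      have : h ∈ ({u, α, h} : Finset V) ∩ f := Finset.mem_inter.2 ⟨by simp, hhf⟩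
      rw [hint, Finset.mem_singleton] at this
      exact absurd this.symm hvh
    · rfl
  -- a copy cannot use the new edge twice
  have hself : ∀ β : V, ({u, v, h} : Finset V) ∩ {u, v, h} ≠ {β} := by
    intro β hβ
    rw [Finset.inter_self] at hβ
    rw [hβ, Finset.card_singleton] at hcard
    omega
  rcases Finset.mem_insert.1 he₁ with rfl | he₁E
  · rcases Finset.mem_insert.1 he₂ with rfl | he₂E
    · exact hself a h12
    rcases Finset.mem_insert.1 he₃ with rfl | he₃E
    · exact hself c h13
    have ha := step e₂ he₂E a h12
    have hc := step e₃ he₃E c h13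
    exact hac (ha.trans hc.symm)
  · rcases Finset.mem_insert.1 he₂ with rfl | he₂E
    · rcases Finset.mem_insert.1 he₃ with rfl | he₃E
      · exact hself b h23
      have ha := step e₁ he₁E a (by rw [Finset.inter_comm]; exact h12)
      have hb := step e₃ he₃E b h23
      exact hab (ha.trans hb.symm)
    · rcases Finset.mem_insert.1 he₃ with rfl | he₃E
      · have hb := step e₂ he₂E b (by rw [Finset.inter_comm]; exact h23)
        have hc := step e₁ he₁E c (by rw [Finset.inter_comm]; exact h13)
        exact hbc (hb.trans hc.symm)
      · exact hfree ⟨e₁, he₁E, e₂, he₂E, e₃, he₃E, a, b, c,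
          h12, h23, h13, hab, hbc, hac, htri⟩

theorem at_most_nine_full_codeg_neighbors {V : Type*} [Fintype V] [DecidableEq V]
    (E : Finset (Finset V)) (hsat : IsSat3 E) (h : V) :
    ({u : V | u ≠ h ∧ 1 ≤ deg E u ∧ deg E u ≤ 8 ∧ codeg E h u = deg E u}).ncard ≤ 9 := by
  classical
  set F : Finset V :=
    Finset.univ.filter (fun u => u ≠ h ∧ 1 ≤ deg E u ∧ deg E u ≤ 8 ∧ codeg E h u = deg E u)
    with hF
  have hset : {u : V | u ≠ h ∧ 1 ≤ deg E u ∧ deg E u ≤ 8 ∧ codeg E h u = deg E u} = ↑F := by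
    ext x; simp [hF]
  rw [hset, Set.ncard_coe_finset]
  by_contra hlt
  push_neg at hlt
  have hFne : F.Nonempty := Finset.card_pos.1 (by omega)
  obtain ⟨u, huF⟩ := hFne
  obtain ⟨-, huh, -, hu8, huc⟩ := Finset.mem_filter.1 huF
  have hukey := full_codeg_mem E h u huc
  have hmaps : ∀ v ∈ F.erase u, ({u, v, h} : Finset V) ∈ E.filter (fun e => u ∈ e) := by
    intro v hv
    obtain ⟨hvu, hvF⟩ := Finset.mem_erase.1 hv
    obtain ⟨-, hvh, -, -, hvc⟩ := Finset.mem_filter.1 hvF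
    exact Finset.mem_filter.2 ⟨triple_mem E hsat h u v huh hvh (Ne.symm hvu) hukey
      (full_codeg_mem E h v hvc), by simp⟩
  have hinj : Set.InjOn (fun v => ({u, v, h} : Finset V)) ↑(F.erase u) := by
    intro v hv w hw heq
    obtain ⟨hvu, hvF⟩ := Finset.mem_erase.1 hv
    obtain ⟨-, hvh, -⟩ := Finset.mem_filter.1 hvF
    have heq' : ({u, v, h} : Finset V) = {u, w, h} := heq
    have : v ∈ ({u, w, h} : Finset V) := by rw [← heq']; simp
    simp only [Finset.mem_insert, Finset.mem_singleton] at this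
    rcases this with rfl | rfl | rfl
    · exact absurd rfl hvu
    · rfl
    · exact absurd rfl hvh
  have hle : (F.erase u).card ≤ (E.filter (fun e => u ∈ e)).card :=
    Finset.card_le_card_of_injOn _ hmaps hinj
  rw [Finset.card_erase_of_mem huF] at hle
  have : deg E u = (E.filter (fun e => u ∈ e)).card := rfl
  omega
end

section
/- Let G be a C_3^{(3)}-saturated 3-uniform hypergraph on n vertices with |E(G)| ≤ 2n, and let ℓ ≥ 1 be a real number. Then the number of vertices u with 1 ≤ d(u) ≤ 8 for which there exists a vertex h with d(h) ≥ ℓ and d(hu) = d(u) is at most 54n/ℓ. -/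
open Finset

variable {V : Type*}

private lemma tt_singleton_false [DecidableEq V] {u v a : V} (huv : u ≠ v) {t : Finset V}
    (hu : u ∈ t) (hv : v ∈ t) (h : t ∩ t = {a}) : False := by
  rw [Finset.inter_self] at h
  subst h
  rw [Finset.mem_singleton] at hu hv
  exact huv (hu.trans hv.symm)

/-- Key saturation lemma: if all edges at `u` and at `v` pass through `h`, then
`u` and `v` share an edge. -/
private lemma shared_edge [DecidableEq V] {E : Finset (Finset V)} (hsat : IsSat3 E)
    {h u v : V} (hu : u ≠ h) (hv : v ≠ h) (huv : u ≠ v)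
    (hua : ∀ e ∈ E, u ∈ e → h ∈ e) (hva : ∀ e ∈ E, v ∈ e → h ∈ e) :
    ∃ e ∈ E, u ∈ e ∧ v ∈ e := by
  by_contra hno
  push_neg at hno
  set t : Finset V := {u, v, h} with ht
  have hut : u ∈ t := by simp [ht]
  have hvt : v ∈ t := by simp [ht]
  have hht : h ∈ t := by simp [ht]
  have htcard : t.card = 3 := by
    rw [ht, card_insert_of_notMem (by simp [huv, hu]),
      card_insert_of_notMem (by simp [hv]), card_singleton]
  have htE : t ∉ E := fun hmem => hno t hmem hut hvt
  obtain ⟨e₁, he₁, e₂, he₂, e₃, he₃, a, b, c, h12, h23, h13, hab, hbc, hac, htriple⟩ :=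
    hsat.2.2 t htcard htE
  have claim : ∀ f ∈ E, ∀ x : V, t ∩ f = {x} → x = h := by
    intro f hf x hx
    have hxt : x ∈ t ∩ f := by rw [hx]; exact mem_singleton_self x
    have hxf : x ∈ f := (mem_inter.1 hxt).2
    have hxt' : x ∈ t := (mem_inter.1 hxt).1
    rw [ht] at hxt'
    simp only [mem_insert, mem_singleton] at hxt'
    rcases hxt' with rfl | rfl | rfl
    · exfalso
      have hhf : h ∈ t ∩ f := mem_inter.2 ⟨hht, hua f hf hxf⟩
      rw [hx, mem_singleton] at hhf
      exact hu hhf.symm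
    · exfalso
      have hhf : h ∈ t ∩ f := mem_inter.2 ⟨hht, hva f hf hxf⟩
      rw [hx, mem_singleton] at hhf
      exact hv hhf.symm
    · rfl
  rw [mem_insert] at he₁ he₂ he₃
  rcases he₁ with rfl | h1 <;> rcases he₂ with rfl | h2 <;> rcases he₃ with rfl | h3
  · exact tt_singleton_false huv hut hvt h12
  · exact tt_singleton_false huv hut hvt h12
  · exact tt_singleton_false huv hut hvt h13
  · exact hac ((claim e₂ h2 a h12).trans (claim e₃ h3 c h13).symm)
  · exact tt_singleton_false huv hut hvt h23
  · rw [inter_comm] at h12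
    exact hab ((claim e₁ h1 a h12).trans (claim e₃ h3 b h23).symm)
  · rw [inter_comm] at h23 h13
    exact hbc ((claim e₂ h2 b h23).trans (claim e₁ h1 c h13).symm)
  · exact hsat.2.1 ⟨e₁, h1, e₂, h2, e₃, h3, a, b, c, h12, h23, h13, hab, hbc, hac, htriple⟩

private lemma full_codeg_all_edges [DecidableEq V] {E : Finset (Finset V)} {h u : V}
    (hc : codeg E h u = deg E u) : ∀ e ∈ E, u ∈ e → h ∈ e := by
  intro e he hue
  unfold codeg deg at hc
  have hsub : E.filter (fun e => h ∈ e ∧ u ∈ e) ⊆ E.filter (fun e => u ∈ e) := by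
    intro f hf
    simp only [mem_filter] at hf ⊢
    exact ⟨hf.1, hf.2.2⟩
  have heq : E.filter (fun e => h ∈ e ∧ u ∈ e) = E.filter (fun e => u ∈ e) :=
    eq_of_subset_of_card_le hsub hc.ge
  have hmem : e ∈ E.filter (fun e => h ∈ e ∧ u ∈ e) := by
    rw [heq]; exact mem_filter.2 ⟨he, hue⟩
  exact (mem_filter.1 hmem).2.1

/-- At most `9` low-degree vertices can have full codegree with a fixed vertex `h`. -/
private lemma U_card_le_nine [Fintype V] [DecidableEq V] {E : Finset (Finset V)}
    (hsat : IsSat3 E) (h : V) :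
    (univ.filter (fun u : V =>
      u ≠ h ∧ 1 ≤ deg E u ∧ deg E u ≤ 8 ∧ codeg E h u = deg E u)).card ≤ 9 := by
  classical
  set U := univ.filter (fun u : V =>
      u ≠ h ∧ 1 ≤ deg E u ∧ deg E u ≤ 8 ∧ codeg E h u = deg E u) with hU
  rcases U.eq_empty_or_nonempty with hUe | ⟨u, hu⟩
  · simp [hUe]
  have hu' := mem_filter.1 hu
  obtain ⟨huh, hd1, hd8, hcu⟩ := hu'.2
  have hallu : ∀ e ∈ E, u ∈ e → h ∈ e := full_codeg_all_edges hcu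
  -- map each other element of U to an edge containing both u and it
  set f : V → Finset V := fun v =>
    if hv : ∃ e ∈ E, u ∈ e ∧ v ∈ e then hv.choose else ∅ with hf
  have key : ∀ v ∈ U.erase u, f v = {u, h, v} := by
    intro v hv
    obtain ⟨hvu, hvU⟩ := mem_erase.1 hv
    obtain ⟨hvh, _, _, hcv⟩ := (mem_filter.1 hvU).2
    have hallv : ∀ e ∈ E, v ∈ e → h ∈ e := full_codeg_all_edges hcv
    have hex : ∃ e ∈ E, u ∈ e ∧ v ∈ e :=
      shared_edge hsat huh hvh (Ne.symm hvu) hallu hallv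
    have hfv : f v = hex.choose := dif_pos hex
    obtain ⟨heE, hue, hve⟩ := hex.choose_spec
    have hhe : h ∈ hex.choose := hallu _ heE hue
    have hsub : ({u, h, v} : Finset V) ⊆ hex.choose := by
      intro x hx
      simp only [mem_insert, mem_singleton] at hx
      rcases hx with rfl | rfl | rfl
      · exact hue
      · exact hhe
      · exact hve
    have hc3 : ({u, h, v} : Finset V).card = 3 := by
      rw [card_insert_of_notMem (by simp [huh, Ne.symm hvu]),
        card_insert_of_notMem (by simp [Ne.symm hvh]), card_singleton]
    have : hex.choose = ({u, h, v} : Finset V) :=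
      (eq_of_subset_of_card_le hsub (by rw [hsat.1 _ heE, hc3])).symm
    rw [hfv, this]
  have hinj : (U.erase u).card ≤ (E.filter (fun e => u ∈ e)).card := by
    apply card_le_card_of_injOn f
    · intro v hv
      obtain ⟨hvu, hvU⟩ := mem_erase.1 hv
      obtain ⟨hvh, _, _, hcv⟩ := (mem_filter.1 hvU).2
      have hallv : ∀ e ∈ E, v ∈ e → h ∈ e := full_codeg_all_edges hcv
      have hex : ∃ e ∈ E, u ∈ e ∧ v ∈ e :=
        shared_edge hsat huh hvh (Ne.symm hvu) hallu hallv
      have hfv : f v = hex.choose := dif_pos hex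
      obtain ⟨heE, hue, _⟩ := hex.choose_spec
      rw [hfv]
      exact mem_filter.2 ⟨heE, hue⟩
    · intro v hv w hw hvw
      rw [key v hv, key w hw] at hvw
      have : v ∈ ({u, h, w} : Finset V) := by
        rw [← hvw]; simp
      simp only [mem_insert, mem_singleton] at this
      obtain ⟨hvu, hvU⟩ := mem_erase.1 hv
      obtain ⟨hvh, _, _, _⟩ := (mem_filter.1 hvU).2
      rcases this with rfl | rfl | rfl
      · exact absurd rfl hvu
      · exact absurd rfl hvh
      · rfl
  have hdegu : (E.filter (fun e => u ∈ e)).card = deg E u := rfl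
  have := card_erase_add_one hu
  omega

private lemma sum_deg_eq [Fintype V] [DecidableEq V] {E : Finset (Finset V)}
    (hE3 : IsUniform3 E) : ∑ v : V, deg E v = 3 * E.card := by
  calc ∑ v : V, deg E v = ∑ v : V, ∑ e ∈ E, if v ∈ e then 1 else 0 :=
        Finset.sum_congr rfl fun v _ => Finset.card_filter _ _
    _ = ∑ e ∈ E, ∑ v : V, if v ∈ e then 1 else 0 := Finset.sum_comm
    _ = ∑ e ∈ E, e.card := by
        refine Finset.sum_congr rfl fun e _ => ?_
        simp [Finset.sum_ite_mem]
    _ = ∑ _e ∈ E, 3 := Finset.sum_congr rfl fun e he => by rw [hE3 e he]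
    _ = 3 * E.card := by rw [Finset.sum_const, smul_eq_mul, mul_comm]

theorem few_full_codeg_low_vertices {V : Type*} [Fintype V] [DecidableEq V]
    (n : ℕ) (hcard : Fintype.card V = n)
    (E : Finset (Finset V)) (hsat : IsSat3 E) (hE : E.card ≤ 2 * n)
    (ℓ : ℝ) (hl : 1 ≤ ℓ) :
    (({u : V | 1 ≤ deg E u ∧ deg E u ≤ 8 ∧
        ∃ h : V, h ≠ u ∧ ℓ ≤ (deg E h : ℝ) ∧ codeg E h u = deg E u}).ncard : ℝ)
      ≤ 54 * n / ℓ := by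
  classical
  have hl0 : (0:ℝ) < ℓ := lt_of_lt_of_le one_pos hl
  set P : V → Prop := fun u => 1 ≤ deg E u ∧ deg E u ≤ 8 ∧
      ∃ h : V, h ≠ u ∧ ℓ ≤ (deg E h : ℝ) ∧ codeg E h u = deg E u with hPdef
  have hset : ({u : V | 1 ≤ deg E u ∧ deg E u ≤ 8 ∧
      ∃ h : V, h ≠ u ∧ ℓ ≤ (deg E h : ℝ) ∧ codeg E h u = deg E u}).ncard
      = (univ.filter P).card := by
    rw [Set.ncard_eq_toFinset_card', Set.toFinset_setOf]
  rw [hset]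
  set H := univ.filter (fun h : V => ℓ ≤ (deg E h : ℝ)) with hHdef
  have hsub : univ.filter P ⊆ H.biUnion (fun h => univ.filter (fun u : V =>
      u ≠ h ∧ 1 ≤ deg E u ∧ deg E u ≤ 8 ∧ codeg E h u = deg E u)) := by
    intro u hu
    obtain ⟨h1, h8, h, hne, hℓ, hc⟩ := (mem_filter.1 hu).2
    exact mem_biUnion.2 ⟨h, mem_filter.2 ⟨mem_univ _, hℓ⟩,
      mem_filter.2 ⟨mem_univ _, hne.symm, h1, h8, hc⟩⟩
  have hScard : (univ.filter P).card ≤ 9 * H.card := by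
    calc (univ.filter P).card ≤ (H.biUnion _).card := card_le_card hsub
      _ ≤ ∑ h ∈ H, (univ.filter (fun u : V =>
          u ≠ h ∧ 1 ≤ deg E u ∧ deg E u ≤ 8 ∧ codeg E h u = deg E u)).card :=
          card_biUnion_le
      _ ≤ ∑ _h ∈ H, 9 := Finset.sum_le_sum fun h _ => U_card_le_nine hsat h
      _ = 9 * H.card := by rw [Finset.sum_const, smul_eq_mul, mul_comm]
  have hH6 : ℓ * (H.card : ℝ) ≤ 6 * n := by
    have h1 : (H.card : ℝ) * ℓ ≤ ∑ h ∈ H, (deg E h : ℝ) := by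
      have := Finset.card_nsmul_le_sum H (fun h => (deg E h : ℝ)) ℓ
        (fun h hh => (mem_filter.1 hh).2)
      rwa [nsmul_eq_mul] at this
    have h2 : ∑ h ∈ H, (deg E h : ℝ) ≤ ∑ h : V, (deg E h : ℝ) :=
      Finset.sum_le_sum_of_subset_of_nonneg (subset_univ H)
        (fun i _ _ => by positivity)
    have h3 : ∑ h : V, (deg E h : ℝ) = 3 * E.card := by
      rw [← Nat.cast_sum, sum_deg_eq hsat.1]
      push_cast
      ring
    have h4 : (E.card : ℝ) ≤ 2 * n := by exact_mod_cast hE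
    calc ℓ * (H.card : ℝ) = (H.card : ℝ) * ℓ := mul_comm _ _
      _ ≤ ∑ h ∈ H, (deg E h : ℝ) := h1
      _ ≤ 3 * E.card := h3 ▸ h2
      _ ≤ 6 * n := by linarith
  rw [le_div_iff₀ hl0]
  have hS9 : ((univ.filter P).card : ℝ) ≤ 9 * H.card := by exact_mod_cast hScard
  have hHnn : (0:ℝ) ≤ (H.card : ℝ) := Nat.cast_nonneg _
  nlinarith [mul_le_mul_of_nonneg_right hS9 hl0.le]
end

section
/- Let G be a C_3^{(3)}-saturated 3-uniform hypergraph on n ≥ 6 vertices and let {h, v_1, v_2} ∈ E(G) be an edge with d(v_1) = 2, d(v_2) ∈ {2, 3}, d(hv_1) = 1, and d(hv_2) < d(v_2). Then both hv_1 and hv_2 are bad pairs. -/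
open Finset

variable {V : Type*}

section Helpers

variable {α : Type*} [DecidableEq α]

lemma card3_of_distinct {a b c : α} (hab : a ≠ b) (hac : a ≠ c) (hbc : b ≠ c) :
    ({a, b, c} : Finset α).card = 3 := by
  rw [card_insert_of_notMem (by simp [hab, hac]), card_insert_of_notMem (by simp [hbc]),
    card_singleton]

lemma distinct_of_card3 {a b c : α} (h : ({a, b, c} : Finset α).card = 3) :
    a ≠ b ∧ a ≠ c ∧ b ≠ c := by
  refine ⟨?_, ?_, ?_⟩ <;> rintro rfl
  · have hsub : ({a, a, c} : Finset α) ⊆ {a, c} := by intro x hx; simp at hx ⊢; tauto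
    have h2 : ({a, a, c} : Finset α).card ≤ 2 :=
      (card_le_card hsub).trans ((card_insert_le _ _).trans (by simp))
    omega
  · have hsub : ({a, b, a} : Finset α) ⊆ {a, b} := by intro x hx; simp at hx ⊢; tauto
    have h2 : ({a, b, a} : Finset α).card ≤ 2 :=
      (card_le_card hsub).trans ((card_insert_le _ _).trans (by simp))
    omega
  · have hsub : ({a, b, b} : Finset α) ⊆ {a, b} := by intro x hx; simp at hx ⊢; tauto
    have h2 : ({a, b, b} : Finset α).card ≤ 2 :=
      (card_le_card hsub).trans ((card_insert_le _ _).trans (by simp))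
    omega

lemma inter_eq_single {s t : Finset α} {a : α} (has : a ∈ s) (hat : a ∈ t)
    (h : ∀ x ∈ s, x ∈ t → x = a) : s ∩ t = {a} := by
  ext x
  simp only [mem_inter, mem_singleton]
  exact ⟨fun hx => h x hx.1 hx.2, fun hx => hx ▸ ⟨has, hat⟩⟩

lemma mem_left_of_inter_single {s t : Finset α} {a : α} (h : s ∩ t = {a}) :
    a ∈ s ∧ a ∈ t := by
  have : a ∈ s ∩ t := by rw [h]; exact mem_singleton_self a
  exact mem_inter.mp this

lemma eq_of_inter_single {s t : Finset α} {a x : α} (h : s ∩ t = {a})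
    (hx : x ∈ s) (hx' : x ∈ t) : x = a := by
  have : x ∈ s ∩ t := mem_inter.mpr ⟨hx, hx'⟩
  rw [h] at this
  exact mem_singleton.mp this

lemma eq_three_of {s : Finset α} {a b c : α} (ha : a ∈ s) (hb : b ∈ s) (hc : c ∈ s)
    (hab : a ≠ b) (hac : a ≠ c) (hbc : b ≠ c) (hcard : s.card = 3) : s = {a, b, c} := by
  have hsub : ({a, b, c} : Finset α) ⊆ s := by
    intro x hx; simp at hx; rcases hx with rfl | rfl | rfl <;> assumption
  have h3 : ({a, b, c} : Finset α).card = 3 := card3_of_distinct hab hac hbc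
  exact (eq_of_subset_of_card_le hsub (by omega)).symm

lemma eq_pair_of {s : Finset α} {a b : α} (ha : a ∈ s) (hb : b ∈ s)
    (hab : a ≠ b) (hcard : s.card ≤ 2) : s = {a, b} := by
  have hsub : ({a, b} : Finset α) ⊆ s := by
    intro x hx; simp at hx; rcases hx with rfl | rfl <;> assumption
  have h2 : ({a, b} : Finset α).card = 2 := card_pair hab
  exact (eq_of_subset_of_card_le hsub (by omega)).symm

lemma second_elem {s : Finset α} {a : α} (h2 : s.card = 2) (ha : a ∈ s) :
    ∃ b, b ∈ s ∧ b ≠ a ∧ s = {a, b} := by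
  have h1 : (s.erase a).card = 1 := by rw [card_erase_of_mem ha, h2]
  obtain ⟨b, hb⟩ := card_eq_one.mp h1
  have hbs : b ∈ s.erase a := by rw [hb]; exact mem_singleton_self b
  refine ⟨b, mem_of_mem_erase hbs, ne_of_mem_erase hbs, ?_⟩
  have hins : s = insert a (s.erase a) := (insert_erase ha).symm
  rw [hins, hb]

end Helpers

lemma buildC3 [DecidableEq V] {E : Finset (Finset V)} {f₁ f₂ f₃ : Finset V}
    (h1 : f₁ ∈ E) (h2 : f₂ ∈ E) (h3 : f₃ ∈ E) {a b c : V}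
    (H12 : f₁ ∩ f₂ = {a}) (H23 : f₂ ∩ f₃ = {b}) (H13 : f₁ ∩ f₃ = {c})
    (hab : a ≠ b) (hbc : b ≠ c) (hac : a ≠ c) (haf3 : a ∉ f₃) : HasC3 E :=
  ⟨f₁, h1, f₂, h2, f₃, h3, a, b, c, H12, H23, H13, hab, hbc, hac, by
    rw [H12]; exact singleton_inter_of_notMem haf3⟩

lemma sat_use [DecidableEq V] {E : Finset (Finset V)} (hsat : IsSat3 E)
    (t : Finset V) (hc3 : t.card = 3) (ht : t ∉ E) :
    ∃ f ∈ E, ∃ f' ∈ E, ∃ α γ β : V, α ∈ t ∧ γ ∈ t ∧ α ≠ γ ∧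
      t ∩ f = {α} ∧ t ∩ f' = {γ} ∧ f ∩ f' = {β} ∧ β ∉ t := by
  obtain ⟨hu, hfree, hmax⟩ := hsat
  obtain ⟨e₁, h1, e₂, h2, e₃, h3, a, b, c, H12, H23, H13, hab, hbc, hac, H0⟩ := hmax t hc3 ht
  have hcards : ∀ f ∈ insert t E, f.card = 3 := by
    intro f hf
    rcases mem_insert.mp hf with rfl | hf'
    · exact hc3
    · exact hu _ hf'
  have hne12 : e₁ ≠ e₂ := by
    rintro rfl
    have := hcards _ h1
    rw [inter_self] at H12
    rw [H12] at this
    simp at this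
  have hne23 : e₂ ≠ e₃ := by
    rintro rfl
    have := hcards _ h2
    rw [inter_self] at H23
    rw [H23] at this
    simp at this
  have hne13 : e₁ ≠ e₃ := by
    rintro rfl
    have := hcards _ h1
    rw [inter_self] at H13
    rw [H13] at this
    simp at this
  rcases mem_insert.mp h1 with q1 | h1E
  · -- e₁ = t
    have h2E : e₂ ∈ E := by
      rcases mem_insert.mp h2 with q2 | h2E
      · exact absurd (q1.trans q2.symm) hne12
      · exact h2E
    have h3E : e₃ ∈ E := by
      rcases mem_insert.mp h3 with q3 | h3E
      · exact absurd (q1.trans q3.symm) hne13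
      · exact h3E
    rw [q1] at H12 H13
    refine ⟨e₂, h2E, e₃, h3E, a, c, b, ?_, ?_, hac, H12, H13, H23, ?_⟩
    · exact (mem_left_of_inter_single H12).1
    · exact (mem_left_of_inter_single H13).1
    · intro hbt
      have hb2 : b ∈ e₂ := (mem_left_of_inter_single H23).1
      exact hab (eq_of_inter_single H12 hbt hb2).symm
  · rcases mem_insert.mp h2 with q2 | h2E
    · -- e₂ = t
      have h3E : e₃ ∈ E := by
        rcases mem_insert.mp h3 with q3 | h3E
        · exact absurd (q2.trans q3.symm) hne23
        · exact h3E
      rw [q2] at H12 H23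
      rw [inter_comm] at H12
      refine ⟨e₁, h1E, e₃, h3E, a, b, c, ?_, ?_, hab, H12, H23, H13, ?_⟩
      · exact (mem_left_of_inter_single H12).1
      · exact (mem_left_of_inter_single H23).1
      · intro hct
        have hc1 : c ∈ e₁ := (mem_left_of_inter_single H13).1
        exact hac (eq_of_inter_single H12 hct hc1).symm
    · rcases mem_insert.mp h3 with q3 | h3E
      · -- e₃ = t
        rw [q3] at H13 H23
        rw [inter_comm] at H13 H23
        refine ⟨e₁, h1E, e₂, h2E, c, b, a, ?_, ?_, Ne.symm hbc, H13, H23, H12, ?_⟩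
        · exact (mem_left_of_inter_single H13).1
        · exact (mem_left_of_inter_single H23).1
        · intro hat
          have ha1 : a ∈ e₁ := (mem_left_of_inter_single H12).1
          exact hac (eq_of_inter_single H13 hat ha1)
      · exact absurd ⟨e₁, h1E, e₂, h2E, e₃, h3E, a, b, c,
          H12, H23, H13, hab, hbc, hac, H0⟩ hfree

theorem h22_h23_bad_pairs {V : Type*} [Fintype V] [DecidableEq V]
    (E : Finset (Finset V)) (hsat : IsSat3 E) (hcard : 6 ≤ Fintype.card V)
    (h v₁ v₂ : V) (he : ({h, v₁, v₂} : Finset V) ∈ E)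
    (hd1 : deg E v₁ = 2) (hd2 : deg E v₂ = 2 ∨ deg E v₂ = 3)
    (hc1 : codeg E h v₁ = 1) (hc2 : codeg E h v₂ < deg E v₂) :
    ¬ GoodPair E h v₁ ∧ ¬ GoodPair E h v₂ := by
  have hu : IsUniform3 E := hsat.1
  have hfree : ¬ HasC3 E := hsat.2.1
  have he3 : ({h, v₁, v₂} : Finset V).card = 3 := hu _ he
  obtain ⟨hhv1, hhv2, h12⟩ := distinct_of_card3 he3
  -- the two edges at v₁
  have hd1' : (E.filter fun f => v₁ ∈ f).card = 2 := hd1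
  have heF : ({h, v₁, v₂} : Finset V) ∈ E.filter (fun f => v₁ ∈ f) :=
    mem_filter.mpr ⟨he, by simp⟩
  obtain ⟨e', he'F, he'ne, hFeq⟩ := second_elem hd1' heF
  have he'E : e' ∈ E := (mem_filter.mp he'F).1
  have hv1e' : v₁ ∈ e' := (mem_filter.mp he'F).2
  have hEdge1 : ∀ f ∈ E, v₁ ∈ f → f = {h, v₁, v₂} ∨ f = e' := by
    intro f hf hv
    have hm : f ∈ E.filter (fun f => v₁ ∈ f) := mem_filter.mpr ⟨hf, hv⟩
    rw [hFeq] at hm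
    simpa using hm
  have hc1' : (E.filter fun f => h ∈ f ∧ v₁ ∈ f).card = 1 := hc1
  have hhe' : h ∉ e' := by
    intro hh
    have hm1 : ({h, v₁, v₂} : Finset V) ∈ E.filter (fun f => h ∈ f ∧ v₁ ∈ f) :=
      mem_filter.mpr ⟨he, by simp, by simp⟩
    have hm2 : e' ∈ E.filter (fun f => h ∈ f ∧ v₁ ∈ f) :=
      mem_filter.mpr ⟨he'E, hh, hv1e'⟩
    have hsub : ({({h, v₁, v₂} : Finset V), e'} : Finset (Finset V)) ⊆
        E.filter (fun f => h ∈ f ∧ v₁ ∈ f) := by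
      intro x hx; simp only [mem_insert, mem_singleton] at hx
      rcases hx with rfl | rfl <;> assumption
    have hle := card_le_card hsub
    rw [card_pair (Ne.symm he'ne)] at hle
    omega
  ---------------------------------------------------------------------------
  -- LEMMA X : v₂ ∉ e'
  ---------------------------------------------------------------------------
  have hX : v₂ ∉ e' := by
    intro hv2e'
    have he'3 : e'.card = 3 := hu _ he'E
    have hsub12 : ({v₁, v₂} : Finset V) ⊆ e' := by
      intro x hx; simp at hx; rcases hx with rfl | rfl <;> assumption
    have hsd : (e' \ {v₁, v₂}).card = 1 := by
      rw [card_sdiff_of_subset hsub12, card_pair h12, he'3]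
    obtain ⟨c, hc⟩ := card_eq_one.mp hsd
    have hcmem : c ∈ e' \ {v₁, v₂} := by rw [hc]; exact mem_singleton_self c
    have hce' : c ∈ e' := (mem_sdiff.mp hcmem).1
    have hcv : c ∉ ({v₁, v₂} : Finset V) := (mem_sdiff.mp hcmem).2
    simp only [mem_insert, mem_singleton] at hcv
    push_neg at hcv
    obtain ⟨hcv1, hcv2⟩ := hcv
    have hch : c ≠ h := fun hq => hhe' (hq ▸ hce')
    have he'eq : e' = {v₁, v₂, c} :=
      eq_three_of hv1e' hv2e' hce' h12 (Ne.symm hcv1) (Ne.symm hcv2) he'3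
    -- pick a fifth vertex z
    have hzex : ∃ z, z ∉ ({h, v₁, v₂, c} : Finset V) := by
      by_contra hcon
      push_neg at hcon
      have huniv : (Finset.univ : Finset V) ⊆ {h, v₁, v₂, c} := fun z _ => hcon z
      have i1 := card_insert_le h ({v₁, v₂, c} : Finset V)
      have i2 := card_insert_le v₁ ({v₂, c} : Finset V)
      have i3 := card_insert_le v₂ ({c} : Finset V)
      have i4 : ({c} : Finset V).card = 1 := card_singleton c
      have hcard' := card_le_card huniv
      rw [card_univ] at hcard'
      omega
    obtain ⟨z, hz⟩ := hzex
    simp only [mem_insert, mem_singleton] at hz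
    push_neg at hz
    obtain ⟨hzh, hzv1, hzv2, hzc⟩ := hz
    -- Step 1: saturation on {v₁, v₂, z} gives a third edge at v₂
    have ht3 : ({v₁, v₂, z} : Finset V).card = 3 :=
      card3_of_distinct h12 (Ne.symm hzv1) (Ne.symm hzv2)
    have htE : ({v₁, v₂, z} : Finset V) ∉ E := by
      intro hmem
      rcases hEdge1 _ hmem (by simp) with hq | hq
      · have hzz : z ∈ ({h, v₁, v₂} : Finset V) := by rw [← hq]; simp
        simp at hzz
        rcases hzz with q | q | q
        exacts [hzh q, hzv1 q, hzv2 q]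
      · have hzz : z ∈ e' := by rw [← hq]; simp
        rw [he'eq] at hzz
        simp at hzz
        rcases hzz with q | q | q
        exacts [hzv1 q, hzv2 q, hzc q]
    obtain ⟨f, hfE, f', hf'E, α, γ, β, hαt, hγt, hαγ, hαf, hγf', hββ, hβt⟩ :=
      sat_use hsat _ ht3 htE
    have hnv1 : ∀ g' : Finset V, g' ∈ E → ({v₁, v₂, z} : Finset V) ∩ g' = {v₁} → False := by
      intro g' hg'E hq
      have hv1g' : v₁ ∈ g' := (mem_left_of_inter_single hq).2
      rcases hEdge1 g' hg'E hv1g' with rfl | rfl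
      · exact h12 (eq_of_inter_single hq (by simp) (by simp)).symm
      · exact h12 (eq_of_inter_single hq (by simp) hv2e').symm
    have hget : ∃ g ∈ E, ({v₁, v₂, z} : Finset V) ∩ g = {v₂} := by
      simp only [mem_insert, mem_singleton] at hαt hγt
      rcases hαt with rfl | rfl | rfl
      · exact (hnv1 f hfE hαf).elim
      · exact ⟨f, hfE, hαf⟩
      · rcases hγt with rfl | rfl | rfl
        · exact (hnv1 f' hf'E hγf').elim
        · exact ⟨f', hf'E, hγf'⟩
        · exact (hαγ rfl).elim
    obtain ⟨g, hgE, hgt⟩ := hget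
    have hv2g : v₂ ∈ g := (mem_left_of_inter_single hgt).2
    have hv1g : v₁ ∉ g := fun hh => h12 (eq_of_inter_single hgt (by simp) hh)
    have hge : g ≠ ({h, v₁, v₂} : Finset V) := fun hq => hv1g (by rw [hq]; simp)
    have hge' : g ≠ e' := fun hq => hv1g (by rw [hq]; exact hv1e')
    -- deg v₂ = 3 and the list of edges at v₂
    have hv2filter : ({({h, v₁, v₂} : Finset V), e', g} : Finset (Finset V)) ⊆
        E.filter (fun f => v₂ ∈ f) := by
      intro x hx; simp only [mem_insert, mem_singleton] at hx
      rcases hx with rfl | rfl | rfl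
      · exact mem_filter.mpr ⟨he, by simp⟩
      · exact mem_filter.mpr ⟨he'E, hv2e'⟩
      · exact mem_filter.mpr ⟨hgE, hv2g⟩
    have hcard3' : ({({h, v₁, v₂} : Finset V), e', g} : Finset (Finset V)).card = 3 :=
      card3_of_distinct (Ne.symm he'ne) (Ne.symm hge) (Ne.symm hge')
    have hge3 : 3 ≤ (E.filter fun f => v₂ ∈ f).card := by
      have := card_le_card hv2filter
      omega
    have hge3' : 3 ≤ deg E v₂ := hge3
    have hdegnat : deg E v₂ = 3 := by rcases hd2 with hq | hq <;> omega
    have hdeg3 : (E.filter fun f => v₂ ∈ f).card = 3 := hdegnat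
    have hfiltereq : ({({h, v₁, v₂} : Finset V), e', g} : Finset (Finset V)) =
        E.filter (fun f => v₂ ∈ f) :=
      eq_of_subset_of_card_le hv2filter (by omega)
    have hEdge2 : ∀ f₀ ∈ E, v₂ ∈ f₀ → f₀ = {h, v₁, v₂} ∨ f₀ = e' ∨ f₀ = g := by
      intro f₀ hf₀ hv
      have hm : f₀ ∈ E.filter (fun f => v₂ ∈ f) := mem_filter.mpr ⟨hf₀, hv⟩
      rw [← hfiltereq] at hm
      simpa using hm
    -- Step 3: g = {h, v₂, c}
    have hgsub : g ⊆ {h, v₂, c} := by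
      intro p hp
      by_contra hp'
      simp only [mem_insert, mem_singleton] at hp'
      push_neg at hp'
      obtain ⟨hph, hpv2, hpc⟩ := hp'
      have hpv1 : p ≠ v₁ := fun hq => hv1g (hq ▸ hp)
      have ht3' : ({v₁, v₂, p} : Finset V).card = 3 :=
        card3_of_distinct h12 (Ne.symm hpv1) (Ne.symm hpv2)
      have htE' : ({v₁, v₂, p} : Finset V) ∉ E := by
        intro hmem
        rcases hEdge1 _ hmem (by simp) with hq | hq
        · have hpp : p ∈ ({h, v₁, v₂} : Finset V) := by rw [← hq]; simp
          simp at hpp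
          rcases hpp with q | q | q
          exacts [hph q, hpv1 q, hpv2 q]
        · have hpp : p ∈ e' := by rw [← hq]; simp
          rw [he'eq] at hpp
          simp at hpp
          rcases hpp with q | q | q
          exacts [hpv1 q, hpv2 q, hpc q]
      obtain ⟨q₁, hq1E, q₂, hq2E, α', γ', β', hα't, hγ't, hα'γ', hα'f, hγ'f, hβ'', hβ't⟩ :=
        sat_use hsat _ ht3' htE'
      have hno : ∀ g' : Finset V, g' ∈ E →
          ({v₁, v₂, p} : Finset V) ∩ g' ≠ {v₁} ∧ ({v₁, v₂, p} : Finset V) ∩ g' ≠ {v₂} := by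
        intro g' hg'E
        constructor
        · intro hq
          have hv1g' : v₁ ∈ g' := (mem_left_of_inter_single hq).2
          rcases hEdge1 g' hg'E hv1g' with rfl | rfl
          · exact h12 (eq_of_inter_single hq (by simp) (by simp)).symm
          · exact h12 (eq_of_inter_single hq (by simp) hv2e').symm
        · intro hq
          have hv2g' : v₂ ∈ g' := (mem_left_of_inter_single hq).2
          rcases hEdge2 g' hg'E hv2g' with rfl | rfl | rfl
          · exact h12 (eq_of_inter_single hq (by simp) (by simp))
          · exact h12 (eq_of_inter_single hq (by simp) hv1e')
          · exact hpv2 (eq_of_inter_single hq (by simp) hp)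
      simp only [mem_insert, mem_singleton] at hα't hγ't
      rcases hα't with rfl | rfl | rfl
      · exact (hno q₁ hq1E).1 hα'f
      · exact (hno q₁ hq1E).2 hα'f
      · rcases hγ't with rfl | rfl | rfl
        · exact (hno q₂ hq2E).1 hγ'f
        · exact (hno q₂ hq2E).2 hγ'f
        · exact hα'γ' rfl
    have hg3 : g.card = 3 := hu _ hgE
    have hhc3 : ({h, v₂, c} : Finset V).card = 3 :=
      card3_of_distinct hhv2 (Ne.symm hch) (Ne.symm hcv2)
    have hgeq : g = {h, v₂, c} := eq_of_subset_of_card_le hgsub (by omega)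
    -- Step 4: saturation on {v₁, h, c}
    have ht''3 : ({v₁, h, c} : Finset V).card = 3 :=
      card3_of_distinct (Ne.symm hhv1) (Ne.symm hcv1) (Ne.symm hch)
    have ht''E : ({v₁, h, c} : Finset V) ∉ E := by
      intro hmem
      rcases hEdge1 _ hmem (by simp) with hq | hq
      · have hcc : c ∈ ({h, v₁, v₂} : Finset V) := by rw [← hq]; simp
        simp at hcc
        rcases hcc with q | q | q
        exacts [hch q, hcv1 q, hcv2 q]
      · have hhh : h ∈ e' := by rw [← hq]; simp
        exact hhe' hhh
    obtain ⟨r₁, hr1E, r₂, hr2E, α₂, γ₂, β₂, hα2t, hγ2t, hα2γ2, hα2f, hγ2f, hβ2, hβ2t⟩ :=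
      sat_use hsat _ ht''3 ht''E
    have hnv1'' : ∀ g' : Finset V, g' ∈ E → ({v₁, h, c} : Finset V) ∩ g' = {v₁} → False := by
      intro g' hg'E hq
      have hv1g' : v₁ ∈ g' := (mem_left_of_inter_single hq).2
      rcases hEdge1 g' hg'E hv1g' with rfl | rfl
      · exact hhv1 (eq_of_inter_single hq (by simp) (by simp))
      · exact hcv1 (eq_of_inter_single hq (by simp) hce')
    have hpair : ∃ p₂ ∈ E, ∃ p₃ ∈ E, ∃ δ : V,
        ({v₁, h, c} : Finset V) ∩ p₂ = {h} ∧ ({v₁, h, c} : Finset V) ∩ p₃ = {c} ∧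
        p₂ ∩ p₃ = {δ} ∧ δ ∉ ({v₁, h, c} : Finset V) := by
      simp only [mem_insert, mem_singleton] at hα2t hγ2t
      rcases hα2t with rfl | rfl | rfl
      · exact (hnv1'' _ hr1E hα2f).elim
      · rcases hγ2t with rfl | rfl | rfl
        · exact (hnv1'' _ hr2E hγ2f).elim
        · exact (hα2γ2 rfl).elim
        · exact ⟨r₁, hr1E, r₂, hr2E, β₂, hα2f, hγ2f, hβ2, hβ2t⟩
      · rcases hγ2t with rfl | rfl | rfl
        · exact (hnv1'' _ hr2E hγ2f).elim
        · exact ⟨r₂, hr2E, r₁, hr1E, β₂, hγ2f, hα2f, by rw [inter_comm]; exact hβ2, hβ2t⟩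
        · exact (hα2γ2 rfl).elim
    obtain ⟨p₂, hp2E, p₃, hp3E, δ, hp2t, hp3t, hp23, hδt⟩ := hpair
    have hhp2 : h ∈ p₂ := (mem_left_of_inter_single hp2t).2
    have hcp3 : c ∈ p₃ := (mem_left_of_inter_single hp3t).2
    have hv1p2 : v₁ ∉ p₂ := fun hq => hhv1 (eq_of_inter_single hp2t (by simp) hq).symm
    have hcp2 : c ∉ p₂ := fun hq => hch (eq_of_inter_single hp2t (by simp) hq)
    have hv1p3 : v₁ ∉ p₃ := fun hq => hcv1 (eq_of_inter_single hp3t (by simp) hq).symm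
    have hhp3 : h ∉ p₃ := fun hq => hch (eq_of_inter_single hp3t (by simp) hq).symm
    have hv2p2 : v₂ ∉ p₂ := by
      intro hq
      rcases hEdge2 p₂ hp2E hq with rfl | rfl | rfl
      · exact hv1p2 (by simp)
      · exact hv1p2 hv1e'
      · exact hcp2 (by rw [hgeq]; simp)
    have hv2p3 : v₂ ∉ p₃ := by
      intro hq
      rcases hEdge2 p₃ hp3E hq with rfl | rfl | rfl
      · exact hhp3 (by simp)
      · exact hv1p3 hv1e'
      · exact hhp3 (by rw [hgeq]; simp)
    have hδp2 : δ ∈ p₂ := (mem_left_of_inter_single hp23).1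
    have hδp3 : δ ∈ p₃ := (mem_left_of_inter_single hp23).2
    have hG2 : g ∩ p₂ = {h} := by
      refine inter_eq_single (by rw [hgeq]; simp) hhp2 ?_
      intro x hx hx2
      rw [hgeq] at hx
      simp at hx
      rcases hx with rfl | rfl | rfl
      · rfl
      · exact absurd hx2 hv2p2
      · exact absurd hx2 hcp2
    have hG3 : g ∩ p₃ = {c} := by
      refine inter_eq_single (by rw [hgeq]; simp) hcp3 ?_
      intro x hx hx2
      rw [hgeq] at hx
      simp at hx
      rcases hx with rfl | rfl | rfl
      · exact absurd hx2 hhp3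
      · exact absurd hx2 hv2p3
      · rfl
    exact hfree (buildC3 hgE hp2E hp3E hG2 hp23 hG3
      (fun hq => hhp3 (hq ▸ hδp3)) (fun hq => hcp2 (hq ▸ hδp2)) (Ne.symm hch) hhp3)
  ---------------------------------------------------------------------------
  -- Part 1 : ¬ GoodPair E h v₁
  ---------------------------------------------------------------------------
  constructor
  · rintro ⟨E₁, E₂, hE1E, hE2E, hhE1, hv1E2, hhE2, hv1E1, w, hw, hi⟩
    simp only [mem_insert, mem_singleton] at hw
    push_neg at hw
    obtain ⟨hwh, hwv1⟩ := hw
    have hE2 : E₂ = e' := by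
      rcases hEdge1 _ hE2E hv1E2 with hq | hq
      · exact absurd (by rw [hq]; simp : h ∈ E₂) hhE2
      · exact hq
    rw [hE2] at hi hhE2
    have hwE1 : w ∈ E₁ := (mem_left_of_inter_single hi).1
    have hwe' : w ∈ e' := (mem_left_of_inter_single hi).2
    have hwv2 : w ≠ v₂ := fun hq => hX (hq ▸ hwe')
    by_cases hv2E1 : v₂ ∈ E₁
    · -- E₁ = {h, v₂, w}
      have hE1eq : E₁ = {h, v₂, w} :=
        eq_three_of hhE1 hv2E1 hwE1 hhv2 (Ne.symm hwh) (Ne.symm hwv2) (hu _ hE1E)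
      have hene1 : ({h, v₁, v₂} : Finset V) ≠ E₁ := fun hq => hv1E1 (by rw [← hq]; simp)
      have hcodle : codeg E h v₂ ≤ 2 := by rcases hd2 with hq | hq <;> omega
      have hcodle' : (E.filter fun f => h ∈ f ∧ v₂ ∈ f).card ≤ 2 := hcodle
      have hSeq : E.filter (fun f => h ∈ f ∧ v₂ ∈ f) = {({h, v₁, v₂} : Finset V), E₁} :=
        eq_pair_of (mem_filter.mpr ⟨he, by simp, by simp⟩)
          (mem_filter.mpr ⟨hE1E, hhE1, hv2E1⟩) hene1 hcodle'
      -- saturation on {v₁, v₂, w}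
      have hwe : w ∉ ({h, v₁, v₂} : Finset V) := by
        simp only [mem_insert, mem_singleton]
        push_neg
        exact ⟨hwh, hwv1, hwv2⟩
      have ht3 : ({v₁, v₂, w} : Finset V).card = 3 :=
        card3_of_distinct h12 (Ne.symm hwv1) (Ne.symm hwv2)
      have htE : ({v₁, v₂, w} : Finset V) ∉ E := by
        intro hmem
        rcases hEdge1 _ hmem (by simp) with hq | hq
        · exact hwe (by rw [← hq]; simp)
        · exact hX (by rw [← hq]; simp : v₂ ∈ e')
      obtain ⟨q₁, hq1E, q₂, hq2E, α, γ, β, hαt, hγt, hαγ, hαf, hγf, hβ, hβt⟩ :=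
        sat_use hsat _ ht3 htE
      have hnv1 : ∀ g' : Finset V, g' ∈ E → ({v₁, v₂, w} : Finset V) ∩ g' = {v₁} → False := by
        intro g' hg'E hq
        have hv1g' : v₁ ∈ g' := (mem_left_of_inter_single hq).2
        rcases hEdge1 g' hg'E hv1g' with rfl | rfl
        · exact h12 (eq_of_inter_single hq (by simp) (by simp)).symm
        · exact hwv1 (eq_of_inter_single hq (by simp) hwe')
      have hpair : ∃ f₂ ∈ E, ∃ f₃ ∈ E, ∃ δ : V,
          ({v₁, v₂, w} : Finset V) ∩ f₂ = {v₂} ∧ ({v₁, v₂, w} : Finset V) ∩ f₃ = {w} ∧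
          f₂ ∩ f₃ = {δ} ∧ δ ∉ ({v₁, v₂, w} : Finset V) := by
        simp only [mem_insert, mem_singleton] at hαt hγt
        rcases hαt with rfl | rfl | rfl
        · exact (hnv1 _ hq1E hαf).elim
        · rcases hγt with rfl | rfl | rfl
          · exact (hnv1 _ hq2E hγf).elim
          · exact (hαγ rfl).elim
          · exact ⟨q₁, hq1E, q₂, hq2E, β, hαf, hγf, hβ, hβt⟩
        · rcases hγt with rfl | rfl | rfl
          · exact (hnv1 _ hq2E hγf).elim
          · exact ⟨q₂, hq2E, q₁, hq1E, β, hγf, hαf, by rw [inter_comm]; exact hβ, hβt⟩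
          · exact (hαγ rfl).elim
      obtain ⟨f₂, hf2E, f₃, hf3E, δ, hf2t, hf3t, hf23, hδt⟩ := hpair
      have hv2f2 : v₂ ∈ f₂ := (mem_left_of_inter_single hf2t).2
      have hwf3 : w ∈ f₃ := (mem_left_of_inter_single hf3t).2
      have hv1f2 : v₁ ∉ f₂ := fun hq => h12 (eq_of_inter_single hf2t (by simp) hq)
      have hwf2 : w ∉ f₂ := fun hq => hwv2 (eq_of_inter_single hf2t (by simp) hq)
      have hv1f3 : v₁ ∉ f₃ := fun hq => hwv1 (eq_of_inter_single hf3t (by simp) hq).symm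
      have hv2f3 : v₂ ∉ f₃ := fun hq => hwv2 (eq_of_inter_single hf3t (by simp) hq).symm
      have hδf2 : δ ∈ f₂ := (mem_left_of_inter_single hf23).1
      have hδf3 : δ ∈ f₃ := (mem_left_of_inter_single hf23).2
      have hδv2 : δ ≠ v₂ := fun hq => hδt (by rw [hq]; simp)
      have hδw : δ ≠ w := fun hq => hδt (by rw [hq]; simp)
      have hhf2 : h ∉ f₂ := by
        intro hq
        have hm : f₂ ∈ E.filter (fun f => h ∈ f ∧ v₂ ∈ f) :=
          mem_filter.mpr ⟨hf2E, hq, hv2f2⟩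
        rw [hSeq] at hm
        simp only [mem_insert, mem_singleton] at hm
        rcases hm with rfl | rfl
        · exact hv1f2 (by simp)
        · exact hwf2 (by rw [hE1eq]; simp)
      by_cases hhf3 : h ∈ f₃
      · -- C3 ({h,v₁,v₂}, f₂, f₃)
        have hI12 : ({h, v₁, v₂} : Finset V) ∩ f₂ = {v₂} := by
          refine inter_eq_single (by simp) hv2f2 ?_
          intro x hx hx2
          simp at hx
          rcases hx with rfl | rfl | rfl
          · exact absurd hx2 hhf2
          · exact absurd hx2 hv1f2
          · rfl
        have hI13 : ({h, v₁, v₂} : Finset V) ∩ f₃ = {h} := by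
          refine inter_eq_single (by simp) hhf3 ?_
          intro x hx hx2
          simp at hx
          rcases hx with rfl | rfl | rfl
          · rfl
          · exact absurd hx2 hv1f3
          · exact absurd hx2 hv2f3
        exact hfree (buildC3 he hf2E hf3E hI12 hf23 hI13
          (Ne.symm hδv2) (fun hq => hhf2 (hq ▸ hδf2)) hhv2.symm hv2f3)
      · -- C3 (E₁, f₂, f₃)
        have hI12 : E₁ ∩ f₂ = {v₂} := by
          refine inter_eq_single hv2E1 hv2f2 ?_
          intro x hx hx2
          rw [hE1eq] at hx
          simp at hx
          rcases hx with rfl | rfl | rfl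
          · exact absurd hx2 hhf2
          · rfl
          · exact absurd hx2 hwf2
        have hI13 : E₁ ∩ f₃ = {w} := by
          refine inter_eq_single hwE1 hwf3 ?_
          intro x hx hx2
          rw [hE1eq] at hx
          simp at hx
          rcases hx with rfl | rfl | rfl
          · exact absurd hx2 hhf3
          · exact absurd hx2 hv2f3
          · rfl
        exact hfree (buildC3 hE1E hf2E hf3E hI12 hf23 hI13
          (Ne.symm hδv2) hδw (Ne.symm hwv2) hv2f3)
    · -- v₂ ∉ E₁ : direct C3 ({h,v₁,v₂}, E₁, e')
      have hI12 : ({h, v₁, v₂} : Finset V) ∩ E₁ = {h} := by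
        refine inter_eq_single (by simp) hhE1 ?_
        intro x hx hx2
        simp at hx
        rcases hx with rfl | rfl | rfl
        · rfl
        · exact absurd hx2 hv1E1
        · exact absurd hx2 hv2E1
      have hI13 : ({h, v₁, v₂} : Finset V) ∩ e' = {v₁} := by
        refine inter_eq_single (by simp) hv1e' ?_
        intro x hx hx2
        simp at hx
        rcases hx with rfl | rfl | rfl
        · exact absurd hx2 hhe'
        · rfl
        · exact absurd hx2 hX
      exact hfree (buildC3 he hE1E he'E hI12 hi hI13
        (Ne.symm hwh) hwv1 hhv1 hhe')
  ---------------------------------------------------------------------------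
  -- Part 2 : ¬ GoodPair E h v₂
  ---------------------------------------------------------------------------
  · rintro ⟨F₁, F₂, hF1E, hF2E, hhF1, hv2F2, hhF2, hv2F1, w, hw, hi⟩
    simp only [mem_insert, mem_singleton] at hw
    push_neg at hw
    obtain ⟨hwh, hwv2⟩ := hw
    have hwF1 : w ∈ F₁ := (mem_left_of_inter_single hi).1
    have hwF2 : w ∈ F₂ := (mem_left_of_inter_single hi).2
    have hv1F1 : v₁ ∉ F₁ := by
      intro hq
      have hle : (E.filter fun f => h ∈ f ∧ v₁ ∈ f).card ≤ 1 := le_of_eq hc1'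
      have heq := card_le_one.mp hle _ (mem_filter.mpr ⟨hF1E, hhF1, hq⟩)
        _ (mem_filter.mpr ⟨he, by simp, by simp⟩)
      exact hv2F1 (by rw [heq]; simp)
    have hv1F2 : v₁ ∉ F₂ := by
      intro hq
      rcases hEdge1 _ hF2E hq with hq' | hq'
      · exact hhF2 (by rw [hq']; simp)
      · exact hX (by rw [← hq']; exact hv2F2)
    have hI12 : ({h, v₁, v₂} : Finset V) ∩ F₁ = {h} := by
      refine inter_eq_single (by simp) hhF1 ?_
      intro x hx hx2
      simp at hx
      rcases hx with rfl | rfl | rfl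
      · rfl
      · exact absurd hx2 hv1F1
      · exact absurd hx2 hv2F1
    have hI13 : ({h, v₁, v₂} : Finset V) ∩ F₂ = {v₂} := by
      refine inter_eq_single (by simp) hv2F2 ?_
      intro x hx hx2
      simp at hx
      rcases hx with rfl | rfl | rfl
      · exact absurd hx2 hhF2
      · exact absurd hx2 hv1F2
      · rfl
    exact hfree (buildC3 he hF1E hF2E hI12 hi hI13
      (Ne.symm hwh) hwv2 hhv2 hhF2)
end

section
/- Let G be a C_3^{(3)}-saturated 3-uniform hypergraph on n ≥ 6 vertices and let {h, v_1, v_2} ∈ E(G) be an edge with d(v_1) = 2, d(v_2) ∈ {2, 3}, d(hv_1) = 1, and d(hv_2) < d(v_2). Then there do not exist vertices a, b ∈ V(G) \ {h, v_1, v_2} such that both {v_1, a, b} ∈ E(G) and {v_2, a, b} ∈ E(G). -/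
open Finset

variable {V : Type*}

namespace NoHouseAux

variable {V : Type*} [DecidableEq V]

lemma sing_left {s t : Finset V} {x : V} (h : s ∩ t = {x}) : x ∈ s :=
  (Finset.mem_inter.mp (h ▸ Finset.mem_singleton_self x)).1

lemma sing_right {s t : Finset V} {x : V} (h : s ∩ t = {x}) : x ∈ t :=
  (Finset.mem_inter.mp (h ▸ Finset.mem_singleton_self x)).2

lemma sing_eq {s t : Finset V} {x : V} (h : s ∩ t = {x}) {y : V} (hy : y ∈ s) (hy' : y ∈ t) :
    y = x :=
  Finset.mem_singleton.mp (h ▸ Finset.mem_inter.mpr ⟨hy, hy'⟩)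

lemma inter_eq_singleton {s t : Finset V} {x : V} (hx : x ∈ s) (hx' : x ∈ t)
    (h : ∀ y, y ∈ s → y ∈ t → y = x) : s ∩ t = {x} := by
  ext y
  simp only [Finset.mem_inter, Finset.mem_singleton]
  exact ⟨fun ⟨a, b⟩ => h y a b, fun h' => h' ▸ ⟨hx, hx'⟩⟩

lemma pair_card_le (p q : V) : ({p, q} : Finset V).card ≤ 2 := by
  have := Finset.card_insert_le p ({q} : Finset V); simpa using this

lemma distinct3 {x y z : V} (h : ({x, y, z} : Finset V).card = 3) :
    x ≠ y ∧ x ≠ z ∧ y ≠ z := by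
  refine ⟨?_, ?_, ?_⟩ <;> rintro rfl
  · have hs : ({x, x, z} : Finset V) = {x, z} := by ext u; simp
    rw [hs] at h; have := pair_card_le x z; omega
  · have hs : ({x, y, x} : Finset V) = {x, y} := by ext u; simp; tauto
    rw [hs] at h; have := pair_card_le x y; omega
  · have hs : ({x, y, y} : Finset V) = {x, y} := by ext u; simp
    rw [hs] at h; have := pair_card_le x y; omega

lemma triple_empty {g₁ g₂ g₃ : Finset V} {x y : V} (hxy : g₁ ∩ g₂ = {x})
    (hyz : g₂ ∩ g₃ = {y}) (hne : x ≠ y) : g₁ ∩ g₂ ∩ g₃ = ∅ := by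
  ext w
  simp only [Finset.mem_inter, Finset.notMem_empty, iff_false, not_and]
  rintro ⟨hw1, hw2⟩ hw3
  exact hne ((sing_eq hxy hw1 hw2).symm.trans (sing_eq hyz hw2 hw3))

lemma make_cycle {E : Finset (Finset V)} (hfree : ¬ HasC3 E) {g₁ g₂ g₃ : Finset V}
    (h₁ : g₁ ∈ E) (h₂ : g₂ ∈ E) (h₃ : g₃ ∈ E) {x y z : V}
    (hxy : g₁ ∩ g₂ = {x}) (hyz : g₂ ∩ g₃ = {y}) (hxz : g₁ ∩ g₃ = {z})
    (d₁ : x ≠ y) (d₂ : y ≠ z) (d₃ : x ≠ z) : False :=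
  hfree ⟨g₁, h₁, g₂, h₂, g₃, h₃, x, y, z, hxy, hyz, hxz, d₁, d₂, d₃,
    triple_empty hxy hyz d₁⟩

lemma probe {E : Finset (Finset V)} (hsat : IsSat3 E) {t : Finset V}
    (ht3 : t.card = 3) (htE : t ∉ E) :
    ∃ g₁ ∈ E, ∃ g₂ ∈ E, ∃ α β γ : V,
      t ∩ g₁ = {α} ∧ t ∩ g₂ = {β} ∧ g₁ ∩ g₂ = {γ} ∧ α ≠ β := by
  obtain ⟨hu, hfree, hins⟩ := hsat
  obtain ⟨e₁, h₁, e₂, h₂, e₃, h₃, x, y, z, hxy, hyz, hxz, dxy, dyz, dxz, htr⟩ :=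
    hins t ht3 htE
  have card_mem : ∀ s ∈ insert t E, s.card = 3 := by
    intro s hs
    rcases Finset.mem_insert.mp hs with rfl | hs
    · exact ht3
    · exact hu s hs
  have ne12 : e₁ ≠ e₂ := by
    rintro rfl
    rw [Finset.inter_self] at hxy
    have := card_mem e₁ h₁; rw [hxy] at this; simp at this
  have ne23 : e₂ ≠ e₃ := by
    rintro rfl
    rw [Finset.inter_self] at hyz
    have := card_mem e₂ h₂; rw [hyz] at this; simp at this
  have ne13 : e₁ ≠ e₃ := by
    rintro rfl
    rw [Finset.inter_self] at hxz
    have := card_mem e₁ h₁; rw [hxz] at this; simp at this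
  rcases Finset.mem_insert.mp h₁ with rfl | he₁
  · rcases Finset.mem_insert.mp h₂ with rfl | he₂
    · exact absurd rfl ne12
    rcases Finset.mem_insert.mp h₃ with rfl | he₃
    · exact absurd rfl ne13
    exact ⟨e₂, he₂, e₃, he₃, x, z, y, hxy, hxz, hyz, dxz⟩
  rcases Finset.mem_insert.mp h₂ with rfl | he₂
  · rcases Finset.mem_insert.mp h₃ with rfl | he₃
    · exact absurd rfl ne23
    exact ⟨e₁, he₁, e₃, he₃, x, y, z, by rw [Finset.inter_comm]; exact hxy, hyz, hxz, dxy⟩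
  rcases Finset.mem_insert.mp h₃ with rfl | he₃
  · exact ⟨e₂, he₂, e₁, he₁, y, z, x, by rw [Finset.inter_comm]; exact hyz,
      by rw [Finset.inter_comm]; exact hxz, by rw [Finset.inter_comm]; exact hxy, dyz⟩
  · exact absurd ⟨e₁, he₁, e₂, he₂, e₃, he₃, x, y, z, hxy, hyz, hxz, dxy, dyz, dxz, htr⟩ hfree

lemma edges_eq_pair {E : Finset (Finset V)} {v : V} {g₁ g₂ : Finset V}
    (h₁ : g₁ ∈ E) (h₂ : g₂ ∈ E) (hv₁ : v ∈ g₁) (hv₂ : v ∈ g₂) (hne : g₁ ≠ g₂)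
    (hd : deg E v = 2) : ∀ g ∈ E, v ∈ g → g = g₁ ∨ g = g₂ := by
  have hsub : ({g₁, g₂} : Finset (Finset V)) ⊆ E.filter fun e => v ∈ e := by
    intro s hs
    rcases Finset.mem_insert.mp hs with rfl | hs
    · exact Finset.mem_filter.mpr ⟨h₁, hv₁⟩
    · rw [Finset.mem_singleton.mp hs]; exact Finset.mem_filter.mpr ⟨h₂, hv₂⟩
  have hcard : (E.filter fun e => v ∈ e).card ≤ ({g₁, g₂} : Finset (Finset V)).card := by
    rw [Finset.card_pair hne]; exact le_of_eq hd
  have heq := Finset.eq_of_subset_of_card_le hsub hcard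
  intro g hg hvg
  have : g ∈ ({g₁, g₂} : Finset (Finset V)) := heq ▸ Finset.mem_filter.mpr ⟨hg, hvg⟩
  simpa using this

lemma edges_eq_triple {E : Finset (Finset V)} {v : V} {g₁ g₂ : Finset V}
    (h₁ : g₁ ∈ E) (h₂ : g₂ ∈ E) (hv₁ : v ∈ g₁) (hv₂ : v ∈ g₂) (hne : g₁ ≠ g₂)
    (hd : deg E v = 3) :
    ∃ g₃ ∈ E, v ∈ g₃ ∧ g₃ ≠ g₁ ∧ g₃ ≠ g₂ ∧ ∀ g ∈ E, v ∈ g → g = g₁ ∨ g = g₂ ∨ g = g₃ := by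
  have hsub : ({g₁, g₂} : Finset (Finset V)) ⊆ E.filter fun e => v ∈ e := by
    intro s hs
    rcases Finset.mem_insert.mp hs with rfl | hs
    · exact Finset.mem_filter.mpr ⟨h₁, hv₁⟩
    · rw [Finset.mem_singleton.mp hs]; exact Finset.mem_filter.mpr ⟨h₂, hv₂⟩
  have hlt : ({g₁, g₂} : Finset (Finset V)).card < (E.filter fun e => v ∈ e).card := by
    rw [Finset.card_pair hne, show (E.filter fun e => v ∈ e).card = 3 from hd]; omega
  obtain ⟨g₃, hg₃f, hg₃p⟩ := Finset.exists_of_ssubset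
    (hsub.ssubset_of_ne (by intro hEq; rw [hEq] at hlt; exact lt_irrefl _ hlt))
  have hg₃E : g₃ ∈ E := (Finset.mem_filter.mp hg₃f).1
  have hvg₃ : v ∈ g₃ := (Finset.mem_filter.mp hg₃f).2
  have hne1 : g₃ ≠ g₁ := by rintro rfl; exact hg₃p (by simp)
  have hne2 : g₃ ≠ g₂ := by rintro rfl; exact hg₃p (by simp)
  refine ⟨g₃, hg₃E, hvg₃, hne1, hne2, ?_⟩
  have hsub3 : ({g₁, g₂, g₃} : Finset (Finset V)) ⊆ E.filter fun e => v ∈ e := by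
    intro s hs
    rcases Finset.mem_insert.mp hs with rfl | hs
    · exact Finset.mem_filter.mpr ⟨h₁, hv₁⟩
    rcases Finset.mem_insert.mp hs with rfl | hs
    · exact Finset.mem_filter.mpr ⟨h₂, hv₂⟩
    · rw [Finset.mem_singleton.mp hs]; exact hg₃f
  have hc3 : ({g₁, g₂, g₃} : Finset (Finset V)).card = 3 := by
    rw [Finset.card_insert_of_notMem (by simp [hne, Ne.symm hne1]),
      Finset.card_pair (Ne.symm hne2)]
  have heq := Finset.eq_of_subset_of_card_le hsub3 (by rw [hc3]; exact le_of_eq hd)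
  intro g hg hvg
  have : g ∈ ({g₁, g₂, g₃} : Finset (Finset V)) := heq ▸ Finset.mem_filter.mpr ⟨hg, hvg⟩
  simpa using this

lemma card3 {x y z : V} (h1 : x ≠ y) (h2 : x ≠ z) (h3 : y ≠ z) :
    ({x, y, z} : Finset V).card = 3 := by
  rw [Finset.card_insert_of_notMem (by simp [h1, h2]), Finset.card_pair h3]

/-- Probe `{v₁, v₂, a}`: forces `a ∉ f₃`. -/
lemma probeA {E : Finset (Finset V)} (hsat : IsSat3 E) {h v₁ v₂ a b : V} {f₃ : Finset V}
    (hhv1 : h ≠ v₁) (hhv2 : h ≠ v₂) (hv12 : v₁ ≠ v₂) (hab : a ≠ b)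
    (hah : a ≠ h) (hav1 : a ≠ v₁) (hav2 : a ≠ v₂)
    (hbh : b ≠ h) (hbv1 : b ≠ v₁) (hbv2 : b ≠ v₂)
    (class1 : ∀ g ∈ E, v₁ ∈ g → g = {h, v₁, v₂} ∨ g = {v₁, a, b})
    (class2 : ∀ g ∈ E, v₂ ∈ g → g = {h, v₁, v₂} ∨ g = {v₂, a, b} ∨ g = f₃) :
    a ∉ f₃ := by
  intro haf₃
  have ht3 : ({v₁, v₂, a} : Finset V).card = 3 := card3 hv12 (Ne.symm hav1) (Ne.symm hav2)
  have htE : ({v₁, v₂, a} : Finset V) ∉ E := by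
    intro htE
    rcases class1 _ htE (by simp) with h' | h'
    · have : a ∈ ({h, v₁, v₂} : Finset V) := h' ▸ (by simp : a ∈ ({v₁, v₂, a} : Finset V))
      simp at this; tauto
    · have : v₂ ∈ ({v₁, a, b} : Finset V) := h' ▸ (by simp : v₂ ∈ ({v₁, v₂, a} : Finset V))
      simp at this; tauto
  obtain ⟨g₁, hg₁, g₂, hg₂, α, β, γ, hα, hβ, hγ, hαβ⟩ := probe hsat ht3 htE
  have key : ∀ g ∈ E, ∀ δ, ({v₁, v₂, a} : Finset V) ∩ g = {δ} → δ = a := by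
    intro g hg δ hδ
    have hδt : δ ∈ ({v₁, v₂, a} : Finset V) := sing_left hδ
    simp only [Finset.mem_insert, Finset.mem_singleton] at hδt
    rcases hδt with h' | h' | h'
    · exfalso
      rw [h'] at hδ
      have hv₁g : v₁ ∈ g := sing_right hδ
      rcases class1 g hg hv₁g with rfl | rfl
      · exact hv12 (sing_eq hδ (show v₂ ∈ ({v₁, v₂, a} : Finset V) by simp)
          (show v₂ ∈ ({h, v₁, v₂} : Finset V) by simp)).symm
      · exact hav1 (sing_eq hδ (show a ∈ ({v₁, v₂, a} : Finset V) by simp)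
          (show a ∈ ({v₁, a, b} : Finset V) by simp))
    · exfalso
      rw [h'] at hδ
      have hv₂g : v₂ ∈ g := sing_right hδ
      rcases class2 g hg hv₂g with rfl | rfl | rfl
      · exact hv12 (sing_eq hδ (show v₁ ∈ ({v₁, v₂, a} : Finset V) by simp)
          (show v₁ ∈ ({h, v₁, v₂} : Finset V) by simp))
      · exact hav2 (sing_eq hδ (show a ∈ ({v₁, v₂, a} : Finset V) by simp)
          (show a ∈ ({v₂, a, b} : Finset V) by simp))
      · exact hav2 (sing_eq hδ (show a ∈ ({v₁, v₂, a} : Finset V) by simp) haf₃)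
    · exact h'
  exact hαβ ((key g₁ hg₁ α hα).trans (key g₂ hg₂ β hβ).symm)

/-- If `h ∈ f₃`, probe `{v₁, v₂, w}` (w the third vertex of f₃) always yields a cycle in `E`. -/
lemma probeC {E : Finset (Finset V)} (hsat : IsSat3 E) {h v₁ v₂ a b : V} {f₃ : Finset V}
    (hhv1 : h ≠ v₁) (hhv2 : h ≠ v₂) (hv12 : v₁ ≠ v₂) (hab : a ≠ b)
    (hah : a ≠ h) (hav1 : a ≠ v₁) (hav2 : a ≠ v₂)
    (hbh : b ≠ h) (hbv1 : b ≠ v₁) (hbv2 : b ≠ v₂)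
    (he : ({h, v₁, v₂} : Finset V) ∈ E) (hf1 : ({v₁, a, b} : Finset V) ∈ E)
    (hf2 : ({v₂, a, b} : Finset V) ∈ E) (hf₃E : f₃ ∈ E)
    (class1 : ∀ g ∈ E, v₁ ∈ g → g = {h, v₁, v₂} ∨ g = {v₁, a, b})
    (class2 : ∀ g ∈ E, v₂ ∈ g → g = {h, v₁, v₂} ∨ g = {v₂, a, b} ∨ g = f₃)
    (hv₂f₃ : v₂ ∈ f₃) (hcard₃ : f₃.card = 3)
    (hv₁f₃ : v₁ ∉ f₃) (haf₃ : a ∉ f₃) (hbf₃ : b ∉ f₃) :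
    h ∉ f₃ := by
  intro hhf₃
  have hfree : ¬ HasC3 E := hsat.2.1
  -- extract the third vertex w of f₃ = {v₂, h, w}
  have hsub : ({v₂, h} : Finset V) ⊆ f₃ := by
    intro x hx; simp at hx; rcases hx with rfl | rfl; exact hv₂f₃; exact hhf₃
  have hsd : (f₃ \ ({v₂, h} : Finset V)).card = 1 := by
    rw [Finset.card_sdiff_of_subset hsub, Finset.card_pair (Ne.symm hhv2), hcard₃]
  obtain ⟨w, hw⟩ := Finset.card_eq_one.mp hsd
  have hwmem : w ∈ f₃ \ ({v₂, h} : Finset V) := hw ▸ Finset.mem_singleton_self w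
  rw [Finset.mem_sdiff] at hwmem
  have hwf₃ : w ∈ f₃ := hwmem.1
  have hwv₂ : w ≠ v₂ := by intro hh; exact hwmem.2 (by simp [hh])
  have hwh : w ≠ h := by intro hh; exact hwmem.2 (by simp [hh])
  have hwv₁ : w ≠ v₁ := by rintro rfl; exact hv₁f₃ hwf₃
  have hwa : w ≠ a := by rintro rfl; exact haf₃ hwf₃
  have hwb : w ≠ b := by rintro rfl; exact hbf₃ hwf₃
  have hf₃char : ∀ x ∈ f₃, x = v₂ ∨ x = h ∨ x = w := by
    intro x hx
    by_cases hx2 : x ∈ ({v₂, h} : Finset V)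
    · simp at hx2; tauto
    · have : x ∈ f₃ \ ({v₂, h} : Finset V) := Finset.mem_sdiff.mpr ⟨hx, hx2⟩
      rw [hw] at this; simp at this; tauto
  -- basic singleton intersections
  have hef₁ : ({h, v₁, v₂} : Finset V) ∩ ({v₁, a, b} : Finset V) = {v₁} := by
    refine inter_eq_singleton (by simp) (by simp) ?_
    intro y hy hy'
    simp only [Finset.mem_insert, Finset.mem_singleton] at hy hy'
    rcases hy with rfl | rfl | rfl
    · rcases hy' with h2 | h2 | h2
      · exact h2
      · exact absurd h2.symm hah
      · exact absurd h2.symm hbh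
    · rfl
    · rcases hy' with h2 | h2 | h2
      · exact h2
      · exact absurd h2.symm hav2
      · exact absurd h2.symm hbv2
  have hef₂ : ({h, v₁, v₂} : Finset V) ∩ ({v₂, a, b} : Finset V) = {v₂} := by
    refine inter_eq_singleton (by simp) (by simp) ?_
    intro y hy hy'
    simp only [Finset.mem_insert, Finset.mem_singleton] at hy hy'
    rcases hy with rfl | rfl | rfl
    · rcases hy' with h2 | h2 | h2
      · exact h2
      · exact absurd h2.symm hah
      · exact absurd h2.symm hbh
    · rcases hy' with h2 | h2 | h2
      · exact h2
      · exact absurd h2.symm hav1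
      · exact absurd h2.symm hbv1
    · rfl
  have hf₂f₃ : ({v₂, a, b} : Finset V) ∩ f₃ = {v₂} := by
    refine inter_eq_singleton (by simp) hv₂f₃ ?_
    intro y hy hy'
    simp only [Finset.mem_insert, Finset.mem_singleton] at hy
    rcases hy with h2 | h2 | h2
    · exact h2
    · exact absurd (h2 ▸ hy') haf₃
    · exact absurd (h2 ▸ hy') hbf₃
  -- the two cycle-building cases
  have caseVW : ∀ m ∈ E, ∀ γ : V, w ∈ m → v₁ ∉ m → v₂ ∉ m →
      ({v₁, a, b} : Finset V) ∩ m = {γ} → False := by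
    intro m hm γ hwm hv₁m hv₂m hγm
    have hγm' : γ ∈ m := sing_right hγm
    have hγf₁ : γ ∈ ({v₁, a, b} : Finset V) := sing_left hγm
    simp only [Finset.mem_insert, Finset.mem_singleton] at hγf₁
    have hγab : γ = a ∨ γ = b := by
      rcases hγf₁ with rfl | h' | h'
      · exact absurd hγm' hv₁m
      · exact Or.inl h'
      · exact Or.inr h'
    by_cases hhm : h ∈ m
    · have hem : ({h, v₁, v₂} : Finset V) ∩ m = {h} := by
        refine inter_eq_singleton (by simp) hhm ?_
        intro y hy hym
        simp only [Finset.mem_insert, Finset.mem_singleton] at hy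
        rcases hy with rfl | rfl | rfl
        · rfl
        · exact absurd hym hv₁m
        · exact absurd hym hv₂m
      exact make_cycle hfree he hf1 hm hef₁ hγm hem
        (by rcases hγab with rfl | rfl
            · exact fun hh => hav1 hh.symm
            · exact fun hh => hbv1 hh.symm)
        (by rcases hγab with rfl | rfl; exact hah; exact hbh)
        (Ne.symm hhv1)
    · have hf₃m : f₃ ∩ m = {w} := by
        refine inter_eq_singleton hwf₃ hwm ?_
        intro y hy hym
        rcases hf₃char y hy with rfl | rfl | rfl
        · exact absurd hym hv₂m
        · exact absurd hym hhm
        · rfl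
      have hf₂m : ({v₂, a, b} : Finset V) ∩ m = {γ} := by
        refine inter_eq_singleton (by rcases hγab with rfl | rfl <;> simp) hγm' ?_
        intro y hy hym
        simp only [Finset.mem_insert, Finset.mem_singleton] at hy
        rcases hy with rfl | rfl | rfl
        · exact absurd hym hv₂m
        · exact sing_eq hγm (by simp) hym
        · exact sing_eq hγm (by simp) hym
      exact make_cycle hfree hf2 hf₃E hm hf₂f₃ hf₃m hf₂m
        (Ne.symm hwv₂)
        (by rcases hγab with rfl | rfl; exact hwa; exact hwb)
        (by rcases hγab with rfl | rfl
            · exact fun hh => hav2 hh.symm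
            · exact fun hh => hbv2 hh.symm)
  have caseV2W : ∀ m ∈ E, ∀ γ : V, w ∈ m → v₁ ∉ m → v₂ ∉ m →
      ({v₂, a, b} : Finset V) ∩ m = {γ} → False := by
    intro m hm γ hwm hv₁m hv₂m hγm
    have hγm' : γ ∈ m := sing_right hγm
    have hγf₂ : γ ∈ ({v₂, a, b} : Finset V) := sing_left hγm
    simp only [Finset.mem_insert, Finset.mem_singleton] at hγf₂
    have hγab : γ = a ∨ γ = b := by
      rcases hγf₂ with rfl | h' | h'
      · exact absurd hγm' hv₂m
      · exact Or.inl h'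
      · exact Or.inr h'
    by_cases hhm : h ∈ m
    · have hem : ({h, v₁, v₂} : Finset V) ∩ m = {h} := by
        refine inter_eq_singleton (by simp) hhm ?_
        intro y hy hym
        simp only [Finset.mem_insert, Finset.mem_singleton] at hy
        rcases hy with rfl | rfl | rfl
        · rfl
        · exact absurd hym hv₁m
        · exact absurd hym hv₂m
      exact make_cycle hfree he hf2 hm hef₂ hγm hem
        (by rcases hγab with rfl | rfl
            · exact fun hh => hav2 hh.symm
            · exact fun hh => hbv2 hh.symm)
        (by rcases hγab with rfl | rfl; exact hah; exact hbh)
        (Ne.symm hhv2)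
    · have hf₃m : f₃ ∩ m = {w} := by
        refine inter_eq_singleton hwf₃ hwm ?_
        intro y hy hym
        rcases hf₃char y hy with rfl | rfl | rfl
        · exact absurd hym hv₂m
        · exact absurd hym hhm
        · rfl
      exact make_cycle hfree hf2 hf₃E hm hf₂f₃ hf₃m hγm
        (Ne.symm hwv₂)
        (by rcases hγab with rfl | rfl; exact hwa; exact hwb)
        (by rcases hγab with rfl | rfl
            · exact fun hh => hav2 hh.symm
            · exact fun hh => hbv2 hh.symm)
  -- the probe
  have ht3 : ({v₁, v₂, w} : Finset V).card = 3 :=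
    card3 hv12 (Ne.symm hwv₁) (Ne.symm hwv₂)
  have htE : ({v₁, v₂, w} : Finset V) ∉ E := by
    intro htE
    rcases class1 _ htE (by simp) with h' | h'
    · have : w ∈ ({h, v₁, v₂} : Finset V) := h' ▸ (by simp : w ∈ ({v₁, v₂, w} : Finset V))
      simp at this; tauto
    · have : v₂ ∈ ({v₁, a, b} : Finset V) := h' ▸ (by simp : v₂ ∈ ({v₁, v₂, w} : Finset V))
      simp at this; tauto
  obtain ⟨g₁, hg₁, g₂, hg₂, α, β, γ, hα, hβ, hγ, hαβ⟩ := probe hsat ht3 htE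
  have classify : ∀ g ∈ E, ∀ δ, ({v₁, v₂, w} : Finset V) ∩ g = {δ} →
      (δ = v₁ ∧ g = {v₁, a, b}) ∨ (δ = v₂ ∧ g = {v₂, a, b}) ∨
      (δ = w ∧ w ∈ g ∧ v₁ ∉ g ∧ v₂ ∉ g) := by
    intro g hg δ hδ
    have hδt : δ ∈ ({v₁, v₂, w} : Finset V) := sing_left hδ
    simp only [Finset.mem_insert, Finset.mem_singleton] at hδt
    rcases hδt with h' | h' | h'
    · rw [h'] at hδ
      have hv₁g : v₁ ∈ g := sing_right hδ
      rcases class1 g hg hv₁g with rfl | rfl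
      · exact absurd (sing_eq hδ (show v₂ ∈ ({v₁, v₂, w} : Finset V) by simp)
          (by simp)).symm hv12
      · exact Or.inl ⟨h', rfl⟩
    · rw [h'] at hδ
      have hv₂g : v₂ ∈ g := sing_right hδ
      rcases class2 g hg hv₂g with rfl | rfl | rfl
      · exact absurd (sing_eq hδ (show v₁ ∈ ({v₁, v₂, w} : Finset V) by simp)
          (by simp)) hv12
      · exact Or.inr (Or.inl ⟨h', rfl⟩)
      · exact absurd (sing_eq hδ (show w ∈ ({v₁, v₂, w} : Finset V) by simp) hwf₃) hwv₂
    · rw [h'] at hδ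
      refine Or.inr (Or.inr ⟨h', sing_right hδ, ?_, ?_⟩)
      · intro hv₁g
        exact hwv₁.symm (sing_eq hδ (show v₁ ∈ ({v₁, v₂, w} : Finset V) by simp) hv₁g)
      · intro hv₂g
        exact hwv₂.symm (sing_eq hδ (show v₂ ∈ ({v₁, v₂, w} : Finset V) by simp) hv₂g)
  rcases classify g₁ hg₁ α hα with ⟨hα', rfl⟩ | ⟨hα', rfl⟩ | ⟨hα', hwg₁, hv₁g₁, hv₂g₁⟩ <;>
    rcases classify g₂ hg₂ β hβ with ⟨hβ', rfl⟩ | ⟨hβ', rfl⟩ | ⟨hβ', hwg₂, hv₁g₂, hv₂g₂⟩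
  · exact hαβ (hα'.trans hβ'.symm)
  · exact hab ((sing_eq hγ (by simp) (by simp) : a = γ).trans
      (sing_eq hγ (by simp) (by simp) : b = γ).symm)
  · exact caseVW g₂ hg₂ γ hwg₂ hv₁g₂ hv₂g₂ hγ
  · exact hab ((sing_eq hγ (by simp) (by simp) : a = γ).trans
      (sing_eq hγ (by simp) (by simp) : b = γ).symm)
  · exact hαβ (hα'.trans hβ'.symm)
  · exact caseV2W g₂ hg₂ γ hwg₂ hv₁g₂ hv₂g₂ hγ
  · rw [Finset.inter_comm] at hγ
    exact caseVW g₁ hg₁ γ hwg₁ hv₁g₁ hv₂g₁ hγ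
  · rw [Finset.inter_comm] at hγ
    exact caseV2W g₁ hg₁ γ hwg₁ hv₁g₁ hv₂g₁ hγ
  · exact hαβ (hα'.trans hβ'.symm)

/-- Final probe `{v₁, p, q}` where `f₃ = {v₂, p, q}`: always yields a cycle in `E`. -/
lemma probeD {E : Finset (Finset V)} (hsat : IsSat3 E) {h v₁ v₂ a b : V} {f₃ : Finset V}
    (hhv1 : h ≠ v₁) (hhv2 : h ≠ v₂) (hv12 : v₁ ≠ v₂) (hab : a ≠ b)
    (hah : a ≠ h) (hav1 : a ≠ v₁) (hav2 : a ≠ v₂)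
    (hbh : b ≠ h) (hbv1 : b ≠ v₁) (hbv2 : b ≠ v₂)
    (he : ({h, v₁, v₂} : Finset V) ∈ E) (hf1 : ({v₁, a, b} : Finset V) ∈ E)
    (hf2 : ({v₂, a, b} : Finset V) ∈ E) (hf₃E : f₃ ∈ E)
    (class1 : ∀ g ∈ E, v₁ ∈ g → g = {h, v₁, v₂} ∨ g = {v₁, a, b})
    (class2 : ∀ g ∈ E, v₂ ∈ g → g = {h, v₁, v₂} ∨ g = {v₂, a, b} ∨ g = f₃)
    (hv₂f₃ : v₂ ∈ f₃) (hcard₃ : f₃.card = 3)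
    (hv₁f₃ : v₁ ∉ f₃) (haf₃ : a ∉ f₃) (hbf₃ : b ∉ f₃) (hhf₃ : h ∉ f₃) :
    False := by
  have hfree : ¬ HasC3 E := hsat.2.1
  -- extract p, q with f₃ = {v₂, p, q}
  have hsd : (f₃.erase v₂).card = 2 := by
    rw [Finset.card_erase_of_mem hv₂f₃, hcard₃]
  obtain ⟨p, q, hpq, hpqe⟩ := Finset.card_eq_two.mp hsd
  have hpmem : p ∈ f₃.erase v₂ := by rw [hpqe]; simp
  have hqmem : q ∈ f₃.erase v₂ := by rw [hpqe]; simp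
  have hpf₃ : p ∈ f₃ := Finset.mem_of_mem_erase hpmem
  have hqf₃ : q ∈ f₃ := Finset.mem_of_mem_erase hqmem
  have hpv₂ : p ≠ v₂ := Finset.ne_of_mem_erase hpmem
  have hqv₂ : q ≠ v₂ := Finset.ne_of_mem_erase hqmem
  have hpv₁ : p ≠ v₁ := by rintro rfl; exact hv₁f₃ hpf₃
  have hqv₁ : q ≠ v₁ := by rintro rfl; exact hv₁f₃ hqf₃
  have hph : p ≠ h := by rintro rfl; exact hhf₃ hpf₃
  have hqh : q ≠ h := by rintro rfl; exact hhf₃ hqf₃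
  have hpa : p ≠ a := by rintro rfl; exact haf₃ hpf₃
  have hqa : q ≠ a := by rintro rfl; exact haf₃ hqf₃
  have hpb : p ≠ b := by rintro rfl; exact hbf₃ hpf₃
  have hqb : q ≠ b := by rintro rfl; exact hbf₃ hqf₃
  have hchar : ∀ x ∈ f₃, x = v₂ ∨ x = p ∨ x = q := by
    intro x hx
    by_cases hx2 : x = v₂
    · exact Or.inl hx2
    · have : x ∈ f₃.erase v₂ := Finset.mem_erase.mpr ⟨hx2, hx⟩
      rw [hpqe] at this; simp at this; tauto
  have hchar' : ∀ x ∈ f₃, x = v₂ ∨ x = q ∨ x = p := by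
    intro x hx; rcases hchar x hx with h' | h' | h' <;> tauto
  -- basic singleton intersections
  have hef₁ : ({h, v₁, v₂} : Finset V) ∩ ({v₁, a, b} : Finset V) = {v₁} := by
    refine inter_eq_singleton (by simp) (by simp) ?_
    intro y hy hy'
    simp only [Finset.mem_insert, Finset.mem_singleton] at hy hy'
    rcases hy with rfl | rfl | rfl
    · rcases hy' with h2 | h2 | h2
      · exact h2
      · exact absurd h2.symm hah
      · exact absurd h2.symm hbh
    · rfl
    · rcases hy' with h2 | h2 | h2
      · exact h2
      · exact absurd h2.symm hav2
      · exact absurd h2.symm hbv2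
  have hef₃ : ({h, v₁, v₂} : Finset V) ∩ f₃ = {v₂} := by
    refine inter_eq_singleton (by simp) hv₂f₃ ?_
    intro y hy hy'
    simp only [Finset.mem_insert, Finset.mem_singleton] at hy
    rcases hy with h2 | h2 | h2
    · exact absurd (h2 ▸ hy') hhf₃
    · exact absurd (h2 ▸ hy') hv₁f₃
    · exact h2
  have hf₂f₃ : ({v₂, a, b} : Finset V) ∩ f₃ = {v₂} := by
    refine inter_eq_singleton (by simp) hv₂f₃ ?_
    intro y hy hy'
    simp only [Finset.mem_insert, Finset.mem_singleton] at hy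
    rcases hy with h2 | h2 | h2
    · exact h2
    · exact absurd (h2 ▸ hy') haf₃
    · exact absurd (h2 ▸ hy') hbf₃
  -- the (v₁, p')-pair case
  have pairV : ∀ p' q' : V, (∀ x ∈ f₃, x = v₂ ∨ x = p' ∨ x = q') → p' ∈ f₃ →
      p' ≠ v₂ → p' ≠ h → p' ≠ a → p' ≠ b →
      ∀ m ∈ E, ∀ γ : V, p' ∈ m → v₁ ∉ m → v₂ ∉ m → q' ∉ m →
      (({h, v₁, v₂} : Finset V) ∩ m = {γ} ∨ ({v₁, a, b} : Finset V) ∩ m = {γ}) → False := by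
    intro p' q' char hp'f₃ hp'v₂ hp'h hp'a hp'b m hm γ hp'm hv₁m hv₂m hq'm hdisj
    have hf₃m : f₃ ∩ m = {p'} := by
      refine inter_eq_singleton hp'f₃ hp'm ?_
      intro y hy hym
      rcases char y hy with h2 | h2 | h2
      · exact absurd (h2 ▸ hym) hv₂m
      · exact h2
      · exact absurd (h2 ▸ hym) hq'm
    rcases hdisj with hγm | hγm
    · -- link edge through e : forces γ = h ∈ m
      have hγm' : γ ∈ m := sing_right hγm
      have hγe : γ ∈ ({h, v₁, v₂} : Finset V) := sing_left hγm
      simp only [Finset.mem_insert, Finset.mem_singleton] at hγe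
      have hγh : γ = h := by
        rcases hγe with h2 | h2 | h2
        · exact h2
        · exact absurd (h2 ▸ hγm') hv₁m
        · exact absurd (h2 ▸ hγm') hv₂m
      rw [hγh] at hγm
      exact make_cycle hfree he hf₃E hm hef₃ hf₃m hγm
        (fun hh => hp'v₂ hh.symm) hp'h (Ne.symm hhv2)
    · -- link edge through f₁
      have hγm' : γ ∈ m := sing_right hγm
      have hγf₁ : γ ∈ ({v₁, a, b} : Finset V) := sing_left hγm
      simp only [Finset.mem_insert, Finset.mem_singleton] at hγf₁
      have hγab : γ = a ∨ γ = b := by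
        rcases hγf₁ with h2 | h2 | h2
        · exact absurd (h2 ▸ hγm') hv₁m
        · exact Or.inl h2
        · exact Or.inr h2
      by_cases hhm : h ∈ m
      · have hem : ({h, v₁, v₂} : Finset V) ∩ m = {h} := by
          refine inter_eq_singleton (by simp) hhm ?_
          intro y hy hym
          simp only [Finset.mem_insert, Finset.mem_singleton] at hy
          rcases hy with h2 | h2 | h2
          · exact h2
          · exact absurd (h2 ▸ hym) hv₁m
          · exact absurd (h2 ▸ hym) hv₂m
        exact make_cycle hfree he hf1 hm hef₁ hγm hem
          (by rcases hγab with rfl | rfl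
              · exact fun hh => hav1 hh.symm
              · exact fun hh => hbv1 hh.symm)
          (by rcases hγab with rfl | rfl; exact hah; exact hbh)
          (Ne.symm hhv1)
      · have hf₂m : ({v₂, a, b} : Finset V) ∩ m = {γ} := by
          refine inter_eq_singleton (by rcases hγab with rfl | rfl <;> simp) hγm' ?_
          intro y hy hym
          simp only [Finset.mem_insert, Finset.mem_singleton] at hy
          rcases hy with h2 | h2 | h2
          · exact absurd (h2 ▸ hym) hv₂m
          · exact sing_eq hγm (by simp [h2]) hym
          · exact sing_eq hγm (by simp [h2]) hym
        exact make_cycle hfree hf2 hf₃E hm hf₂f₃ hf₃m hf₂m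
          (fun hh => hp'v₂ hh.symm)
          (by rcases hγab with rfl | rfl; exact hp'a; exact hp'b)
          (by rcases hγab with rfl | rfl
              · exact fun hh => hav2 hh.symm
              · exact fun hh => hbv2 hh.symm)
  -- the (p, q)-pair case
  have pairPQ : ∀ p' q' : V, (∀ x ∈ f₃, x = v₂ ∨ x = p' ∨ x = q') → p' ∈ f₃ → q' ∈ f₃ →
      p' ≠ q' → ∀ n₁ ∈ E, ∀ n₂ ∈ E, ∀ γ : V,
      p' ∈ n₁ → v₂ ∉ n₁ → q' ∉ n₁ → q' ∈ n₂ → v₂ ∉ n₂ → p' ∉ n₂ →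
      n₁ ∩ n₂ = {γ} → False := by
    intro p' q' char hp'f₃ hq'f₃ hp'q' n₁ hn₁ n₂ hn₂ γ hp'n₁ hv₂n₁ hq'n₁ hq'n₂ hv₂n₂ hp'n₂ hγ
    have hf₃n₁ : f₃ ∩ n₁ = {p'} := by
      refine inter_eq_singleton hp'f₃ hp'n₁ ?_
      intro y hy hym
      rcases char y hy with h2 | h2 | h2
      · exact absurd (h2 ▸ hym) hv₂n₁
      · exact h2
      · exact absurd (h2 ▸ hym) hq'n₁
    have hf₃n₂ : f₃ ∩ n₂ = {q'} := by
      refine inter_eq_singleton hq'f₃ hq'n₂ ?_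
      intro y hy hym
      rcases char y hy with h2 | h2 | h2
      · exact absurd (h2 ▸ hym) hv₂n₂
      · exact absurd (h2 ▸ hym) hp'n₂
      · exact h2
    exact make_cycle hfree hf₃E hn₁ hn₂ hf₃n₁ hγ hf₃n₂
      (fun hh => hp'n₂ (hh ▸ sing_right hγ))
      (fun hh => hq'n₁ (hh.symm ▸ sing_left hγ))
      hp'q'
  -- the probe
  have ht3 : ({v₁, p, q} : Finset V).card = 3 :=
    card3 (Ne.symm hpv₁) (Ne.symm hqv₁) hpq
  have htE : ({v₁, p, q} : Finset V) ∉ E := by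
    intro htE
    rcases class1 _ htE (by simp) with h' | h'
    · have : p ∈ ({h, v₁, v₂} : Finset V) := h' ▸ (by simp : p ∈ ({v₁, p, q} : Finset V))
      simp at this; tauto
    · have : p ∈ ({v₁, a, b} : Finset V) := h' ▸ (by simp : p ∈ ({v₁, p, q} : Finset V))
      simp at this; tauto
  obtain ⟨g₁, hg₁, g₂, hg₂, α, β, γ, hα, hβ, hγ, hαβ⟩ := probe hsat ht3 htE
  have classify : ∀ g ∈ E, ∀ δ, ({v₁, p, q} : Finset V) ∩ g = {δ} →
      (δ = v₁ ∧ v₁ ∈ g) ∨ (δ = p ∧ p ∈ g ∧ v₁ ∉ g ∧ v₂ ∉ g ∧ q ∉ g) ∨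
      (δ = q ∧ q ∈ g ∧ v₁ ∉ g ∧ v₂ ∉ g ∧ p ∉ g) := by
    intro g hg δ hδ
    have hδt : δ ∈ ({v₁, p, q} : Finset V) := sing_left hδ
    simp only [Finset.mem_insert, Finset.mem_singleton] at hδt
    rcases hδt with h' | h' | h'
    · exact Or.inl ⟨h', h' ▸ sing_right hδ⟩
    · rw [h'] at hδ
      have hpg : p ∈ g := sing_right hδ
      have hv₁g : v₁ ∉ g := fun hh =>
        hpv₁.symm (sing_eq hδ (show v₁ ∈ ({v₁, p, q} : Finset V) by simp) hh)
      have hqg : q ∉ g := fun hh =>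
        hpq.symm (sing_eq hδ (show q ∈ ({v₁, p, q} : Finset V) by simp) hh)
      have hv₂g : v₂ ∉ g := by
        intro hv₂g
        rcases class2 g hg hv₂g with rfl | rfl | rfl
        · simp only [Finset.mem_insert, Finset.mem_singleton] at hpg
          rcases hpg with h2 | h2 | h2
          · exact hph h2
          · exact hpv₁ h2
          · exact hpv₂ h2
        · simp only [Finset.mem_insert, Finset.mem_singleton] at hpg
          rcases hpg with h2 | h2 | h2
          · exact hpv₂ h2
          · exact hpa h2
          · exact hpb h2
        · exact hqg hqf₃
      exact Or.inr (Or.inl ⟨h', hpg, hv₁g, hv₂g, hqg⟩)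
    · rw [h'] at hδ
      have hqg : q ∈ g := sing_right hδ
      have hv₁g : v₁ ∉ g := fun hh =>
        hqv₁.symm (sing_eq hδ (show v₁ ∈ ({v₁, p, q} : Finset V) by simp) hh)
      have hpg : p ∉ g := fun hh =>
        hpq (sing_eq hδ (show p ∈ ({v₁, p, q} : Finset V) by simp) hh)
      have hv₂g : v₂ ∉ g := by
        intro hv₂g
        rcases class2 g hg hv₂g with rfl | rfl | rfl
        · simp only [Finset.mem_insert, Finset.mem_singleton] at hqg
          rcases hqg with h2 | h2 | h2
          · exact hqh h2
          · exact hqv₁ h2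
          · exact hqv₂ h2
        · simp only [Finset.mem_insert, Finset.mem_singleton] at hqg
          rcases hqg with h2 | h2 | h2
          · exact hqv₂ h2
          · exact hqa h2
          · exact hqb h2
        · exact hpg hpf₃
      exact Or.inr (Or.inr ⟨h', hqg, hv₁g, hv₂g, hpg⟩)
  rcases classify g₁ hg₁ α hα with ⟨hα', hv₁g₁⟩ | ⟨hα', hpg₁, hv₁g₁, hv₂g₁, hqg₁⟩ |
      ⟨hα', hqg₁, hv₁g₁, hv₂g₁, hpg₁⟩ <;>
    rcases classify g₂ hg₂ β hβ with ⟨hβ', hv₁g₂⟩ | ⟨hβ', hpg₂, hv₁g₂, hv₂g₂, hqg₂⟩ |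
      ⟨hβ', hqg₂, hv₁g₂, hv₂g₂, hpg₂⟩
  · exact hαβ (hα'.trans hβ'.symm)
  · rcases class1 g₁ hg₁ hv₁g₁ with rfl | rfl
    · exact pairV p q hchar hpf₃ hpv₂ hph hpa hpb g₂ hg₂ γ hpg₂ hv₁g₂ hv₂g₂ hqg₂ (Or.inl hγ)
    · exact pairV p q hchar hpf₃ hpv₂ hph hpa hpb g₂ hg₂ γ hpg₂ hv₁g₂ hv₂g₂ hqg₂ (Or.inr hγ)
  · rcases class1 g₁ hg₁ hv₁g₁ with rfl | rfl
    · exact pairV q p hchar' hqf₃ hqv₂ hqh hqa hqb g₂ hg₂ γ hqg₂ hv₁g₂ hv₂g₂ hpg₂ (Or.inl hγ)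
    · exact pairV q p hchar' hqf₃ hqv₂ hqh hqa hqb g₂ hg₂ γ hqg₂ hv₁g₂ hv₂g₂ hpg₂ (Or.inr hγ)
  · rw [Finset.inter_comm] at hγ
    rcases class1 g₂ hg₂ hv₁g₂ with rfl | rfl
    · exact pairV p q hchar hpf₃ hpv₂ hph hpa hpb g₁ hg₁ γ hpg₁ hv₁g₁ hv₂g₁ hqg₁ (Or.inl hγ)
    · exact pairV p q hchar hpf₃ hpv₂ hph hpa hpb g₁ hg₁ γ hpg₁ hv₁g₁ hv₂g₁ hqg₁ (Or.inr hγ)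
  · exact hαβ (hα'.trans hβ'.symm)
  · exact pairPQ p q hchar hpf₃ hqf₃ hpq g₁ hg₁ g₂ hg₂ γ hpg₁ hv₂g₁ hqg₁ hqg₂ hv₂g₂ hpg₂ hγ
  · rw [Finset.inter_comm] at hγ
    rcases class1 g₂ hg₂ hv₁g₂ with rfl | rfl
    · exact pairV q p hchar' hqf₃ hqv₂ hqh hqa hqb g₁ hg₁ γ hqg₁ hv₁g₁ hv₂g₁ hpg₁ (Or.inl hγ)
    · exact pairV q p hchar' hqf₃ hqv₂ hqh hqa hqb g₁ hg₁ γ hqg₁ hv₁g₁ hv₂g₁ hpg₁ (Or.inr hγ)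
  · exact pairPQ q p hchar' hqf₃ hpf₃ (Ne.symm hpq) g₁ hg₁ g₂ hg₂ γ hqg₁ hv₂g₁ hpg₁ hpg₂
      hv₂g₂ hqg₂ hγ
  · exact hαβ (hα'.trans hβ'.symm)

end NoHouseAux

open NoHouseAux in
theorem h22_h23_no_house {V : Type*} [Fintype V] [DecidableEq V]
    (E : Finset (Finset V)) (hsat : IsSat3 E) (hcard : 6 ≤ Fintype.card V)
    (h v₁ v₂ : V) (he : ({h, v₁, v₂} : Finset V) ∈ E)
    (hd1 : deg E v₁ = 2) (hd2 : deg E v₂ = 2 ∨ deg E v₂ = 3)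
    (hc1 : codeg E h v₁ = 1) (hc2 : codeg E h v₂ < deg E v₂) :
    ¬ ∃ a b : V, a ∉ ({h, v₁, v₂} : Finset V) ∧ b ∉ ({h, v₁, v₂} : Finset V) ∧
      ({v₁, a, b} : Finset V) ∈ E ∧ ({v₂, a, b} : Finset V) ∈ E := by
  rintro ⟨a, b, ha, hb, hf1, hf2⟩
  obtain ⟨hhv1, hhv2, hv12⟩ := distinct3 (hsat.1 _ he)
  obtain ⟨-, -, hab⟩ := distinct3 (hsat.1 _ hf1)
  simp only [Finset.mem_insert, Finset.mem_singleton] at ha hb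
  push_neg at ha hb
  obtain ⟨hah, hav1, hav2⟩ := ha
  obtain ⟨hbh, hbv1, hbv2⟩ := hb
  have hef1 : ({h, v₁, v₂} : Finset V) ≠ {v₁, a, b} := by
    intro hh
    have : h ∈ ({v₁, a, b} : Finset V) := hh ▸ (by simp : h ∈ ({h, v₁, v₂} : Finset V))
    simp at this; tauto
  have hef2 : ({h, v₁, v₂} : Finset V) ≠ {v₂, a, b} := by
    intro hh
    have : h ∈ ({v₂, a, b} : Finset V) := hh ▸ (by simp : h ∈ ({h, v₁, v₂} : Finset V))
    simp at this; tauto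
  have class1 : ∀ g ∈ E, v₁ ∈ g → g = {h, v₁, v₂} ∨ g = {v₁, a, b} :=
    edges_eq_pair he hf1 (by simp) (by simp) hef1 hd1
  rcases hd2 with hd2 | hd2
  · -- deg v₂ = 2 : probe {v₁, v₂, a} has no possible cycle
    have class2 : ∀ g ∈ E, v₂ ∈ g →
        g = {h, v₁, v₂} ∨ g = {v₂, a, b} ∨ g = ({v₂, a, b} : Finset V) := by
      intro g hg hvg
      rcases edges_eq_pair he hf2 (by simp) (by simp) hef2 hd2 g hg hvg with h' | h' <;> tauto
    exact probeA hsat hhv1 hhv2 hv12 hab hah hav1 hav2 hbh hbv1 hbv2 class1 class2 (by simp)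
  · -- deg v₂ = 3 : get the third edge f₃ at v₂
    obtain ⟨f₃, hf₃E, hv₂f₃, hf₃e, hf₃f2, class2⟩ :=
      edges_eq_triple he hf2 (by simp) (by simp) hef2 hd2
    have hcard₃ : f₃.card = 3 := hsat.1 _ hf₃E
    have hv₁f₃ : v₁ ∉ f₃ := by
      intro hv
      rcases class1 f₃ hf₃E hv with h' | h'
      · exact hf₃e h'
      · rw [h'] at hv₂f₃; simp at hv₂f₃; tauto
    have haf₃ : a ∉ f₃ :=
      probeA hsat hhv1 hhv2 hv12 hab hah hav1 hav2 hbh hbv1 hbv2 class1 class2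
    have hbf₃ : b ∉ f₃ := by
      have hf1' : ({v₁, b, a} : Finset V) ∈ E := by rwa [Finset.pair_comm b a]
      have class1' : ∀ g ∈ E, v₁ ∈ g → g = {h, v₁, v₂} ∨ g = {v₁, b, a} := by
        intro g hg hvg
        rcases class1 g hg hvg with h' | h'
        · exact Or.inl h'
        · right; rw [h', Finset.pair_comm a b]
      have class2' : ∀ g ∈ E, v₂ ∈ g → g = {h, v₁, v₂} ∨ g = {v₂, b, a} ∨ g = f₃ := by
        intro g hg hvg
        rcases class2 g hg hvg with h' | h' | h'
        · exact Or.inl h'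
        · right; left; rw [h', Finset.pair_comm a b]
        · exact Or.inr (Or.inr h')
      exact probeA hsat hhv1 hhv2 hv12 (Ne.symm hab) hbh hbv1 hbv2 hah hav1 hav2
        class1' class2'
    have hhf₃ : h ∉ f₃ :=
      probeC hsat hhv1 hhv2 hv12 hab hah hav1 hav2 hbh hbv1 hbv2 he hf1 hf2 hf₃E
        class1 class2 hv₂f₃ hcard₃ hv₁f₃ haf₃ hbf₃
    exact probeD hsat hhv1 hhv2 hv12 hab hah hav1 hav2 hbh hbv1 hbv2 he hf1 hf2 hf₃E
      class1 class2 hv₂f₃ hcard₃ hv₁f₃ haf₃ hbf₃ hhf₃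
end
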